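/- arXiv:2304.12054 — 5 statements merged into one kernel-verified Lean document; each statement's English description precedes it below -/
import Mathlib

section
/- Let 𝓛 be a finite-dimensional ℂ-vector space, X ⊆ 𝓛 an affine variety, and F a polynomial on 𝓛. (a) If 𝓛 = Sym₂(ℂ^m) and F = det, then MLD_det(X) equals the usual Gaussian ML degree of X, i.e. the number of complex critical points of K ↦ log det(K) − tr(KS) on X^sm ∖ V(det) for a general symmetric matrix S ∈ Sym₂(ℂ^m). (b) In general, there exist an integer m and an affine-linear embedding 𝒜 : 𝓛 → Sym₂(ℂ^m) such that MLD_F(X) = MLD_det(𝒜(X)). -/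
open MvPolynomial

noncomputable section

/-- Points of the affine space `ℂ^ι`. -/
abbrev Pt (ι : Type) := ι → ℂ

variable {ι κ : Type} [Fintype ι] [DecidableEq ι] [Fintype κ] [DecidableEq κ]

/-- The standard bilinear pairing identifying `ℂ^ι` with its dual. -/
def dotP (u v : Pt ι) : ℂ := ∑ i, u i * v i

/-- The gradient of a polynomial at a point. -/
def gradP (F : MvPolynomial ι ℂ) (p : Pt ι) : Pt ι := fun i => eval p (pderiv i F)

/-- The linear functional `v ↦ dotP u v`. -/
def dotL (u : Pt ι) : (Pt ι) →ₗ[ℂ] ℂ :=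
  ∑ i, u i • (LinearMap.proj i : (ι → ℂ) →ₗ[ℂ] ℂ)

/-- The vanishing ideal of a subset of `ℂ^ι`. -/
def vanIdeal (X : Set (Pt ι)) : Set (MvPolynomial ι ℂ) :=
  {f | ∀ x ∈ X, eval x f = 0}

/-- The common zero locus of a set of polynomials. -/
def zeroSet (I : Set (MvPolynomial ι ℂ)) : Set (Pt ι) := {x | ∀ f ∈ I, eval x f = 0}

/-- The Zariski closure of a subset of `ℂ^ι`. -/
def zarClosure (X : Set (Pt ι)) : Set (Pt ι) := zeroSet (vanIdeal X)

/-- An (embedded) affine variety: a Zariski closed subset of `ℂ^ι`. -/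
def IsAffineVariety (X : Set (Pt ι)) : Prop := X = zarClosure X

/-- The Zariski tangent space of `X` at `p`. -/
def tangentSpace (X : Set (Pt ι)) (p : Pt ι) : Submodule ℂ (Pt ι) :=
  ⨅ f ∈ vanIdeal X, LinearMap.ker (dotL (gradP f p))

/-- The smooth locus of an (irreducible) variety: the points where the Zariski
tangent space has minimal dimension. -/
def smoothLocus (X : Set (Pt ι)) : Set (Pt ι) :=
  {p | p ∈ X ∧ ∀ q ∈ X, Module.finrank ℂ (tangentSpace X p) ≤ Module.finrank ℂ (tangentSpace X q)}

/-- `p` is a critical point of the Gaussian log-likelihood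
`ℓ_{F,u} = log F - u` along `X`: it lies in the smooth locus, off `V(F)`, and the
differential of `ℓ_{F,u}` annihilates the tangent space of `X` at `p`. -/
def IsCriticalPoint (X : Set (Pt ι)) (F : MvPolynomial ι ℂ) (u : Pt ι) (p : Pt ι) : Prop :=
  p ∈ smoothLocus X ∧ eval p F ≠ 0 ∧
    ∀ v ∈ tangentSpace X p, dotP (gradP F p) v = eval p F * dotP u v

/-- A property holds generically (for general `u`) if it holds on the complement
of some hypersurface. -/
def Generically (P : Pt ι → Prop) : Prop :=
  ∃ h : MvPolynomial ι ℂ, h ≠ 0 ∧ ∀ u : Pt ι, eval u h ≠ 0 → P u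

/-- The (Gaussian) maximum likelihood degree of `X` with respect to `F` is `d`:
for general `u` the log-likelihood `ℓ_{F,u}` has exactly `d` critical points
on `X^sm ∖ V(F)`. -/
def MLDegreeIs (X : Set (Pt ι)) (F : MvPolynomial ι ℂ) (d : ℕ) : Prop :=
  Generically (fun u : Pt ι => {p | IsCriticalPoint X F u p}.ncard = d)

/-- A cone in `ℂ^ι` (the affine cone of a projective variety is such). -/
def IsCone (X : Set (Pt ι)) : Prop := ∀ t : ℂ, ∀ x ∈ X, t • x ∈ X

/-- An irreducible affine variety: nonempty, closed, with prime vanishing ideal. -/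
def IsIrreducibleVariety (X : Set (Pt ι)) : Prop :=
  IsAffineVariety X ∧ X.Nonempty ∧
    ∀ f g : MvPolynomial ι ℂ, (∀ x ∈ X, eval x f * eval x g = 0) →
      (∀ x ∈ X, eval x f = 0) ∨ ∀ x ∈ X, eval x g = 0

/-- A rational map `ℂ^ι ⇢ ℂ^κ`, given by numerator polynomials over a common
nonzero denominator. -/
structure RatMap (ι κ : Type) [Fintype ι] where
  num : κ → MvPolynomial ι ℂ
  den : MvPolynomial ι ℂ
  den_ne : den ≠ 0

/-- The locus where the rational map is defined. -/
def RatMap.isDefinedAt (Ψ : RatMap ι κ) (u : Pt ι) : Prop := eval u Ψ.den ≠ 0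

/-- Evaluation of a rational map. -/
def RatMap.eval (Ψ : RatMap ι κ) (u : Pt ι) : Pt κ :=
  fun i => MvPolynomial.eval u (Ψ.num i) / MvPolynomial.eval u Ψ.den

/-- The rational map `Ψ` maps into `C` with Zariski-dense image; i.e. it is a
dominant rational map onto `C`. -/
def RatMap.DominatesOnto (Ψ : RatMap ι κ) (C : Set (Pt κ)) : Prop :=
  (∀ u, Ψ.isDefinedAt u → Ψ.eval u ∈ C) ∧
    ∀ g : MvPolynomial κ ℂ, (∀ u, Ψ.isDefinedAt u → MvPolynomial.eval (Ψ.eval u) g = 0) →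
      ∀ x ∈ C, MvPolynomial.eval x g = 0

/-- `Ψ` is (a rational representation of) the maximum likelihood estimator of `X`
with respect to `F`: for general `u` its value is the unique critical point of the
log-likelihood `ℓ_{F,u}` along `X`. -/
def IsMLEof (X : Set (Pt ι)) (F : MvPolynomial ι ℂ) (Ψ : RatMap ι ι) : Prop :=
  Generically (fun u : Pt ι => Ψ.isDefinedAt u ∧ {p | IsCriticalPoint X F u p} = {Ψ.eval u})

end

noncomputable section

/-- The symmetric `m × m` matrix with entries given by coordinates indexed by
`Sym2 (Fin m)`; this identifies `ℂ^{Sym2(Fin m)}` with `Sym₂(ℂ^m)`. -/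
def matOf {m : ℕ} (x : Pt (Sym2 (Fin m))) : Matrix (Fin m) (Fin m) ℂ :=
  Matrix.of fun i j => x (Sym2.mk i j)

/-- The determinant as a polynomial function on `Sym₂(ℂ^m) = ℂ^{Sym2(Fin m)}`. -/
def detPolySym (m : ℕ) : MvPolynomial (Sym2 (Fin m)) ℂ :=
  Matrix.det
    (Matrix.of fun i j : Fin m =>
      (MvPolynomial.X (Sym2.mk i j) : MvPolynomial (Sym2 (Fin m)) ℂ))

end


open MvPolynomial

namespace MLDA
set_option linter.unusedSectionVars false
variable {ι κ : Type} [Fintype ι] [DecidableEq ι] [Fintype κ] [DecidableEq κ]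

lemma aeval_pt (x : ι → ℂ) (p : MvPolynomial ι ℂ) : aeval x p = eval x p := by
  rw [aeval_def, Algebra.algebraMap_self]; rfl

lemma eval_aeval (x : ι → ℂ) (φ : κ → MvPolynomial ι ℂ) (g : MvPolynomial κ ℂ) :
    eval x (aeval φ g) = eval (fun e => eval x (φ e)) g := by
  have h := congrArg (fun (ψ : MvPolynomial κ ℂ →ₐ[ℂ] ℂ) => ψ g)
    (comp_aeval φ (aeval x : MvPolynomial ι ℂ →ₐ[ℂ] ℂ))
  simp only [AlgHom.comp_apply] at h
  rw [aeval_pt] at h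
  rw [h]
  rw [show (fun e => (aeval x : MvPolynomial ι ℂ →ₐ[ℂ] ℂ) (φ e)) = fun e => eval x (φ e) from
    funext fun e => aeval_pt x (φ e)]
  exact aeval_pt _ g

lemma aeval_aeval (φ : κ → MvPolynomial ι ℂ) {τ : Type} (β : τ → MvPolynomial κ ℂ)
    (f : MvPolynomial τ ℂ) :
    aeval φ (aeval β f) = aeval (fun i => aeval φ (β i)) f := by
  have h := congrArg (fun (ψ : MvPolynomial τ ℂ →ₐ[ℂ] MvPolynomial ι ℂ) => ψ f)
    (comp_aeval β (aeval φ : MvPolynomial κ ℂ →ₐ[ℂ] MvPolynomial ι ℂ))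
  simpa using h

lemma exists_eval_ne {h : MvPolynomial ι ℂ} (hh : h ≠ 0) : ∃ x : ι → ℂ, eval x h ≠ 0 := by
  by_contra hc
  push_neg at hc
  exact hh (MvPolynomial.funext (q := 0) (fun x => by simpa using hc x))

/-- Pull back a generic property along a polynomial map with surjective evaluation. -/
lemma gen_pullback (φ : κ → MvPolynomial ι ℂ) (P : (κ → ℂ) → Prop)
    (hsurj : Function.Surjective (fun x : ι → ℂ => (fun e => eval x (φ e)) : (ι → ℂ) → (κ → ℂ)))
    (hP : ∃ h : MvPolynomial κ ℂ, h ≠ 0 ∧ ∀ u, eval u h ≠ 0 → P u) :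
    ∃ h' : MvPolynomial ι ℂ, h' ≠ 0 ∧ ∀ x, eval x h' ≠ 0 → P (fun e => eval x (φ e)) := by
  obtain ⟨h, h0, hgen⟩ := hP
  refine ⟨aeval φ h, ?_, fun x hx => ?_⟩
  · obtain ⟨u, hu⟩ := exists_eval_ne h0
    obtain ⟨x, hx⟩ := hsurj u
    intro hz
    apply hu
    rw [← hx]
    have := eval_aeval x φ h
    rw [hz] at this
    simpa using this.symm
  · exact hgen _ (by rwa [eval_aeval] at hx)

end MLDA

namespace MLDA
set_option linter.unusedSectionVars false
variable {ι κ : Type} [Fintype ι] [DecidableEq ι] [Fintype κ] [DecidableEq κ]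

lemma eval_sum_split (z : κ → ℂ) (u : ι → ℂ) (G : MvPolynomial (κ ⊕ ι) ℂ) :
    eval z (MvPolynomial.map (eval u) (sumToIter ℂ κ ι G)) = eval (Sum.elim z u) G := by
  have h : ((eval z).comp ((MvPolynomial.map (eval u : MvPolynomial ι ℂ →+* ℂ)).comp
      (sumToIter ℂ κ ι : MvPolynomial (κ ⊕ ι) ℂ →+* MvPolynomial κ (MvPolynomial ι ℂ))))
      = (eval (Sum.elim z u) : MvPolynomial (κ ⊕ ι) ℂ →+* ℂ) := by
    apply MvPolynomial.ringHom_ext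
    · intro c; simp [sumToIter_C]
    · rintro (e | i) <;> simp [sumToIter_Xl, sumToIter_Xr]
  exact congrArg (fun (ψ : MvPolynomial (κ ⊕ ι) ℂ →+* ℂ) => ψ G) h

/-- Push a generic property forward along a map that admits a polynomial
family of sections. -/
lemma gen_pushforward (T : (κ → ℂ) → (ι → ℂ)) (P : (ι → ℂ) → Prop)
    (Ψpoly : κ → MvPolynomial (κ ⊕ ι) ℂ)
    (hsec : ∀ (z : κ → ℂ) (u : ι → ℂ), T (fun e => eval (Sum.elim z u) (Ψpoly e)) = u)
    (hsurj : ∀ S : κ → ℂ, ∃ (z : κ → ℂ) (u : ι → ℂ), (fun e => eval (Sum.elim z u) (Ψpoly e)) = S)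
    (hP : ∃ h' : MvPolynomial κ ℂ, h' ≠ 0 ∧ ∀ S, eval S h' ≠ 0 → P (T S)) :
    ∃ h : MvPolynomial ι ℂ, h ≠ 0 ∧ ∀ u, eval u h ≠ 0 → P u := by
  obtain ⟨h', h'0, hgen⟩ := hP
  set G : MvPolynomial (κ ⊕ ι) ℂ := aeval Ψpoly h' with hG
  have hGeval : ∀ (z : κ → ℂ) (u : ι → ℂ),
      eval (Sum.elim z u) G = eval (fun e => eval (Sum.elim z u) (Ψpoly e)) h' := by
    intro z u; rw [hG]; exact eval_aeval _ _ _
  have hGne : G ≠ 0 := by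
    obtain ⟨S₀, hS₀⟩ := exists_eval_ne h'0
    obtain ⟨z, u, hzu⟩ := hsurj S₀
    intro h0
    apply hS₀
    rw [← hzu, ← hGeval, h0, map_zero]
  set G' : MvPolynomial κ (MvPolynomial ι ℂ) := sumToIter ℂ κ ι G with hG'
  have hG'ne : G' ≠ 0 := by
    intro h0
    apply hGne
    have h1 : (sumAlgEquiv ℂ κ ι) G = (sumAlgEquiv ℂ κ ι) 0 := by
      rw [map_zero]
      have hfe : ((sumAlgEquiv ℂ κ ι : MvPolynomial (κ ⊕ ι) ℂ →ₐ[ℂ] MvPolynomial κ (MvPolynomial ι ℂ)) :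
          MvPolynomial (κ ⊕ ι) ℂ →+* MvPolynomial κ (MvPolynomial ι ℂ)) = sumToIter ℂ κ ι := by
        apply MvPolynomial.ringHom_ext
        · intro c; simp [sumToIter_C]
        · rintro (e | i) <;> simp [sumToIter_Xl, sumToIter_Xr]
      exact (congrArg (fun ψ : MvPolynomial (κ ⊕ ι) ℂ →+* MvPolynomial κ (MvPolynomial ι ℂ) => ψ G) hfe).trans h0
    exact (sumAlgEquiv ℂ κ ι).injective h1
  obtain ⟨d, hd⟩ := Finset.nonempty_of_ne_empty
    (fun hs => hG'ne (MvPolynomial.support_eq_empty.mp hs))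
  have hcoeff : coeff d G' ≠ 0 := MvPolynomial.mem_support_iff.mp hd
  refine ⟨coeff d G', hcoeff, fun u hu => ?_⟩
  have hGu : MvPolynomial.map (eval u) G' ≠ 0 := by
    intro h0
    apply hu
    have := MvPolynomial.coeff_map (eval u : MvPolynomial ι ℂ →+* ℂ) G' d
    rw [h0] at this
    simpa using this.symm
  obtain ⟨z, hz⟩ := exists_eval_ne hGu
  rw [hG', eval_sum_split] at hz
  rw [hGeval] at hz
  have := hgen _ hz
  rwa [hsec] at this

end MLDA

namespace MLDA
set_option linter.unusedSectionVars false
variable {ι κ : Type} [Fintype ι] [DecidableEq ι] [Fintype κ] [DecidableEq κ]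

/-- Directional derivative of a polynomial. -/
noncomputable def Dv (f : MvPolynomial ι ℂ) (p v : Pt ι) : ℂ := ∑ j, eval p (pderiv j f) * v j

lemma dotP_gradP (f : MvPolynomial ι ℂ) (p v : Pt ι) : dotP (gradP f p) v = Dv f p v := rfl

lemma dotL_eq_dotP (u v : Pt ι) : dotL u v = dotP u v := by
  simp [dotL, dotP, LinearMap.sum_apply]

lemma Dv_C (c : ℂ) (p v : Pt ι) : Dv (C c) p v = 0 := by simp [Dv]

lemma Dv_add (f g : MvPolynomial ι ℂ) (p v : Pt ι) :
    Dv (f + g) p v = Dv f p v + Dv g p v := by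
  simp [Dv, map_add, add_mul, Finset.sum_add_distrib]

lemma Dv_mul (f g : MvPolynomial ι ℂ) (p v : Pt ι) :
    Dv (f * g) p v = Dv f p v * eval p g + eval p f * Dv g p v := by
  simp only [Dv, pderiv_mul, map_add, map_mul, add_mul]
  rw [Finset.sum_add_distrib, Finset.sum_mul, Finset.mul_sum]
  congr 1
  · exact Finset.sum_congr rfl (fun j _ => by ring)
  · exact Finset.sum_congr rfl (fun j _ => by ring)

lemma Dv_X (i : ι) (p v : Pt ι) : Dv (X i) p v = v i := by
  simp only [Dv, pderiv_X]
  rw [Finset.sum_eq_single i] <;> simp +contextual [Pi.single_apply]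

/-- Chain rule for substitution. -/
lemma Dv_aeval (φ : κ → MvPolynomial ι ℂ) (g : MvPolynomial κ ℂ) (p v : Pt ι) :
    Dv (aeval φ g) p v
      = ∑ e, eval (fun e' => eval p (φ e')) (pderiv e g) * Dv (φ e) p v := by
  induction g using MvPolynomial.induction_on with
  | C c => simp [Dv_C]
  | add f g hf hg =>
      simp only [map_add, Dv_add, hf, hg, ← Finset.sum_add_distrib]
      exact Finset.sum_congr rfl (fun e _ => by ring)
  | mul_X g e₀ hg =>
      simp only [map_mul, aeval_X, Dv_mul, hg, pderiv_mul, pderiv_X, map_add, map_mul,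
        add_mul, Finset.sum_add_distrib, eval_X]
      congr 1
      · rw [Finset.sum_mul]
        exact Finset.sum_congr rfl (fun e _ => by ring)
      · rw [Finset.sum_eq_single e₀]
        · rw [eval_aeval]; simp
        · intro b _ hb
          simp [Pi.single_apply, Ne.symm hb]
        · simp
end MLDA

namespace MLDA
open Matrix
set_option linter.unusedSectionVars false
variable {ι : Type} [Fintype ι] [DecidableEq ι]

/-- An affine polynomial with explicit data. -/
noncomputable def affPoly (c : ℂ) (w : Pt ι) : MvPolynomial ι ℂ :=
  C c + ∑ i, C (w i) * X i

/-- Affine polynomials. -/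
def Aff (p : MvPolynomial ι ℂ) : Prop := ∃ c w, p = affPoly c w

lemma eval_affPoly (c : ℂ) (w : Pt ι) (x : Pt ι) :
    eval x (affPoly c w) = c + ∑ i, w i * x i := by
  simp [affPoly]

lemma pderiv_affPoly (c : ℂ) (w : Pt ι) (j : ι) :
    pderiv j (affPoly c w) = C (w j) := by
  simp only [affPoly, map_add, pderiv_C, map_sum, pderiv_mul, pderiv_X, zero_add]
  rw [Finset.sum_eq_single j]
  · simp
  · intro b _ hb; simp [Pi.single_apply, Ne.symm hb]
  · simp

lemma Dv_affPoly (c : ℂ) (w : Pt ι) (p v : Pt ι) :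
    Dv (affPoly c w) p v = dotP w v := by
  simp [Dv, pderiv_affPoly, dotP]

lemma Aff.dv_const {f : MvPolynomial ι ℂ} (hf : Aff f) (p q v : Pt ι) :
    Dv f p v = Dv f q v := by
  obtain ⟨c, w, rfl⟩ := hf
  rw [Dv_affPoly, Dv_affPoly]

lemma Aff.eval_add {f : MvPolynomial ι ℂ} (hf : Aff f) (x v : Pt ι) :
    eval (v + x) f = Dv f x v + eval x f := by
  obtain ⟨c, w, rfl⟩ := hf
  rw [Dv_affPoly, eval_affPoly, eval_affPoly, dotP]
  rw [show (∑ i, w i * (v + x) i) = ∑ i, (w i * v i + w i * x i) from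
    Finset.sum_congr rfl fun i _ => by simp [mul_add]]
  rw [Finset.sum_add_distrib]; ring

lemma Aff_zero : Aff (0 : MvPolynomial ι ℂ) :=
  ⟨0, 0, by simp [affPoly]⟩

lemma Aff_C (c : ℂ) : Aff (C c : MvPolynomial ι ℂ) :=
  ⟨c, 0, by simp [affPoly]⟩

lemma Aff_one : Aff (1 : MvPolynomial ι ℂ) := by
  simpa using Aff_C 1

lemma Aff_X (i : ι) : Aff (X i : MvPolynomial ι ℂ) := by
  refine ⟨0, Pi.single i 1, ?_⟩
  simp only [affPoly, map_zero, zero_add]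
  rw [Finset.sum_eq_single i]
  · simp
  · intro b _ hb; simp [Pi.single_apply, hb]
  · simp

lemma Aff.neg {f : MvPolynomial ι ℂ} (hf : Aff f) : Aff (-f) := by
  obtain ⟨c, w, rfl⟩ := hf
  refine ⟨-c, -w, ?_⟩
  simp only [affPoly, neg_add, map_neg, neg_mul, ← Finset.sum_neg_distrib]
  congr 1
  exact Finset.sum_congr rfl fun i _ => by simp

/-- A certified bordered determinantal representation of a polynomial. -/
structure GoodRep (f : MvPolynomial ι ℂ) where
  N : Type
  [fN : Fintype N]
  [dN : DecidableEq N]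
  A : Matrix N N (MvPolynomial ι ℂ)
  B : Matrix N N (MvPolynomial ι ℂ)
  u : N → MvPolynomial ι ℂ
  v : N → MvPolynomial ι ℂ
  affA : ∀ i j, Aff (A i j)
  affu : ∀ i, Aff (u i)
  affv : ∀ i, Aff (v i)
  AB : A * B = 1
  BA : B * A = 1
  detA : A.det = 1
  val : v ⬝ᵥ B.mulVec u = f

attribute [instance] GoodRep.fN GoodRep.dN

/-- Base case: an affine polynomial. -/
noncomputable def GoodRep.base (f : MvPolynomial ι ℂ) (hf : Aff f) : GoodRep f where
  N := Unit
  A := 1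
  B := 1
  u := fun _ => f
  v := fun _ => 1
  affA := fun i j => by simp [Matrix.one_apply]; exact Aff_one
  affu := fun _ => hf
  affv := fun _ => Aff_one
  AB := one_mul 1
  BA := one_mul 1
  detA := Matrix.det_one
  val := by simp [Matrix.mulVec, dotProduct, Matrix.one_apply]

end MLDA

namespace MLDA
open Matrix
set_option linter.unusedSectionVars false
variable {ι : Type} [Fintype ι] [DecidableEq ι]

/-- Sum of two representations. -/
noncomputable def GoodRep.sum {f g : MvPolynomial ι ℂ} (r : GoodRep f) (s : GoodRep g) :
    GoodRep (f + g) where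
  N := r.N ⊕ s.N
  A := fromBlocks r.A 0 0 s.A
  B := fromBlocks r.B 0 0 s.B
  u := Sum.elim r.u s.u
  v := Sum.elim r.v s.v
  affA := by
    rintro (i | i) (j | j)
    · exact r.affA i j
    · exact Aff_zero
    · exact Aff_zero
    · exact s.affA i j
  affu := by rintro (i | i); exacts [r.affu i, s.affu i]
  affv := by rintro (i | i); exacts [r.affv i, s.affv i]
  AB := by
    rw [fromBlocks_multiply]
    simp [r.AB, s.AB, ← fromBlocks_one]
  BA := by
    rw [fromBlocks_multiply]
    simp [r.BA, s.BA, ← fromBlocks_one]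
  detA := by rw [det_fromBlocks_zero₂₁, r.detA, s.detA, one_mul]
  val := by
    rw [fromBlocks_mulVec, sumElim_dotProduct_sumElim]
    simp [r.val, s.val]

/-- Multiplication by an affine polynomial. -/
noncomputable def GoodRep.mulAff {f : MvPolynomial ι ℂ} (r : GoodRep f)
    (l : MvPolynomial ι ℂ) (hl : Aff l) : GoodRep (f * l) where
  N := r.N ⊕ Unit
  A := fromBlocks r.A (Matrix.of fun i _ => -r.u i) 0 1
  B := fromBlocks r.B (Matrix.of fun i _ => r.B.mulVec r.u i) 0 1
  u := Sum.elim 0 (fun _ => l)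
  v := Sum.elim r.v 0
  affA := by
    rintro (i | i) (j | j)
    · exact r.affA i j
    · exact (r.affu i).neg
    · exact Aff_zero
    · simpa [Matrix.one_apply] using Aff_one
  affu := by rintro (i | i); exacts [Aff_zero, hl]
  affv := by rintro (i | i); exacts [r.affv i, Aff_zero]
  AB := by
    rw [fromBlocks_multiply]
    have h1 : r.A * (Matrix.of fun i _ => r.B.mulVec r.u i)
        + (Matrix.of fun i _ => -r.u i : Matrix r.N Unit (MvPolynomial ι ℂ)) * (1 : Matrix Unit Unit (MvPolynomial ι ℂ)) = 0 := by
      rw [Matrix.mul_one]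
      apply Matrix.ext; intro i j
      have h2 : (r.A * (Matrix.of fun i _ => r.B.mulVec r.u i)) i j
          = (r.A.mulVec (r.B.mulVec r.u)) i := by
        simp [Matrix.mul_apply, Matrix.mulVec, dotProduct]
      rw [Matrix.add_apply, h2, Matrix.mulVec_mulVec, r.AB, Matrix.one_mulVec]
      simp
    rw [r.AB, h1]
    simp [← fromBlocks_one]
  BA := by
    rw [fromBlocks_multiply]
    have h1 : r.B * (Matrix.of fun i _ => -r.u i)
        + (Matrix.of fun i _ => r.B.mulVec r.u i : Matrix r.N Unit (MvPolynomial ι ℂ)) * (1 : Matrix Unit Unit (MvPolynomial ι ℂ)) = 0 := by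
      rw [Matrix.mul_one]
      apply Matrix.ext; intro i j
      have h2 : (r.B * (Matrix.of fun i _ => -r.u i)) i j = -((r.B.mulVec r.u) i) := by
        simp [Matrix.mul_apply, Matrix.mulVec, dotProduct, mul_neg]
      rw [Matrix.add_apply, h2]
      simp
    rw [r.BA, h1]
    simp [← fromBlocks_one]
  detA := by
    rw [det_fromBlocks_zero₂₁, r.detA, Matrix.det_one, one_mul]
  val := by
    rw [fromBlocks_mulVec, sumElim_dotProduct_sumElim]
    simp only [Sum.elim_comp_inl, Sum.elim_comp_inr, Matrix.mulVec_zero, zero_add,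
      zero_dotProduct, dotProduct_zero, add_zero]
    have h1 : (Matrix.of fun i _ => r.B.mulVec r.u i).mulVec (fun _ : Unit => l)
        = fun i => r.B.mulVec r.u i * l := by
      funext i
      simp [Matrix.mulVec, dotProduct]
    rw [h1]
    have h2 : (r.v ⬝ᵥ fun i => r.B.mulVec r.u i * l) = (r.v ⬝ᵥ r.B.mulVec r.u) * l := by
      simp only [dotProduct, Finset.sum_mul]
      exact Finset.sum_congr rfl fun i _ => by ring
    rw [h2, r.val]

theorem exists_goodRep (f : MvPolynomial ι ℂ) : Nonempty (GoodRep f) := by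
  induction f using MvPolynomial.induction_on with
  | C c => exact ⟨GoodRep.base _ (Aff_C c)⟩
  | add p q hp hq => exact ⟨hp.some.sum hq.some⟩
  | mul_X p n hp => exact ⟨hp.some.mulAff (X n) (Aff_X n)⟩

/-- Every polynomial has an affine determinantal representation (up to sign). -/
theorem exists_affine_det_rep (f : MvPolynomial ι ℂ) :
    ∃ (N : Type) (_ : Fintype N) (_ : DecidableEq N) (M : Matrix N N (MvPolynomial ι ℂ)),
      (∀ i j, Aff (M i j)) ∧ M.det = -f := by
  obtain ⟨r⟩ := exists_goodRep f
  letI : Invertible r.A := ⟨r.B, r.BA, r.AB⟩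
  refine ⟨r.N ⊕ Unit, inferInstance, inferInstance,
    fromBlocks r.A (Matrix.of fun i _ => r.u i) (Matrix.of fun _ j => r.v j) 0, ?_, ?_⟩
  · rintro (i | i) (j | j)
    · exact r.affA i j
    · exact r.affu i
    · exact r.affv j
    · exact Aff_zero
  · rw [Matrix.det_fromBlocks₁₁, r.detA, one_mul]
    have hinv : (⅟r.A : Matrix r.N r.N (MvPolynomial ι ℂ)) = r.B := rfl
    rw [hinv]
    rw [Matrix.det_unique]
    simp only [Matrix.sub_apply, Matrix.zero_apply, Matrix.mul_apply, Matrix.of_apply,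
      zero_sub, neg_inj]
    have h3 : ∑ x : r.N, (∑ y : r.N, r.v y * r.B y x) * r.u x = r.v ⬝ᵥ r.B.mulVec r.u := by
      simp only [dotProduct, Matrix.mulVec, Finset.sum_mul, Finset.mul_sum]
      rw [Finset.sum_comm]
      exact Finset.sum_congr rfl fun x _ => Finset.sum_congr rfl fun y _ => by ring
    rw [h3, r.val]

end MLDA

namespace MLDA
open Matrix
set_option linter.unusedSectionVars false

/-- The 3×3 gadget carrying the variable `a`, symmetric with constant determinant `-1`. -/
noncomputable def gadget {k : ℕ} (a : Fin k) : Matrix (Fin 3) (Fin 3) (MvPolynomial (Fin k) ℂ) :=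
  !![0, 1, X a; 1, 0, 0; X a, 0, 1]

lemma gadget_det {k : ℕ} (a : Fin k) : (gadget a).det = -1 := by
  rw [Matrix.det_fin_three]
  simp [gadget, Matrix.vecHead, Matrix.vecTail]

lemma gadget_symm {k : ℕ} (a : Fin k) (i j : Fin 3) : (gadget a) j i = gadget a i j := by
  fin_cases i <;> fin_cases j <;> simp [gadget, Matrix.vecHead, Matrix.vecTail]

lemma gadget_aff {k : ℕ} (a : Fin k) (i j : Fin 3) : Aff (gadget a i j) := by
  fin_cases i <;> fin_cases j <;>
    simp only [gadget, Matrix.cons_val', Matrix.cons_val_zero, Matrix.cons_val_one,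
      Matrix.head_cons, Matrix.empty_val', Matrix.cons_val_fin_one, Matrix.head_fin_const,
      Matrix.vecHead, Matrix.vecTail, Matrix.of_apply, Function.comp_apply, Fin.isValue] <;>
    first
      | exact Aff_zero
      | exact Aff_one
      | exact Aff_X a
      | skip

lemma gadget_02 {k : ℕ} (a : Fin k) : gadget a 0 2 = X a := by simp [gadget]

/-- Symmetric affine determinantal representation of `C ε * F ^ 2` over `Fin m`,
with designated entries realizing each variable. -/
theorem exists_sym_rep (k : ℕ) (F : MvPolynomial (Fin k) ℂ) :
    ∃ (m : ℕ) (E : Matrix (Fin m) (Fin m) (MvPolynomial (Fin k) ℂ)) (ε : ℂ)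
      (jv : Fin k → Fin m × Fin m),
      (∀ i j, Aff (E i j)) ∧ (∀ i j, E j i = E i j) ∧ ε ≠ 0 ∧
      E.det = C ε * F ^ 2 ∧
      (∀ a, E (jv a).1 (jv a).2 = X a) ∧
      (∀ a b, (jv a).1 = (jv b).1 → a = b) ∧ (∀ a b, (jv a).1 ≠ (jv b).2) := by
  classical
  obtain ⟨N, fN, dN, M, haffM, hdetM⟩ := exists_affine_det_rep F
  letI := fN; letI := dN
  replace hdetM : M.det = -F := hdetM
  set S2 : Matrix (N ⊕ N) (N ⊕ N) (MvPolynomial (Fin k) ℂ) := fromBlocks 0 M Mᵀ 0 with hS2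
  set J2C : Matrix (N ⊕ N) (N ⊕ N) ℂ := fromBlocks 0 1 1 0 with hJ2C
  set εN : ℂ := J2C.det with hεN
  have hJ2sq : J2C * J2C = 1 := by
    rw [hJ2C, fromBlocks_multiply]
    simp [← fromBlocks_one]
  have hεN0 : εN ≠ 0 := by
    intro h
    have h2 := congrArg Matrix.det hJ2sq
    rw [Matrix.det_mul, ← hεN, h, Matrix.det_one] at h2
    simp at h2
  have hJ2R : (C : ℂ →+* MvPolynomial (Fin k) ℂ).mapMatrix J2C
      = (fromBlocks 0 1 1 0 : Matrix (N ⊕ N) (N ⊕ N) (MvPolynomial (Fin k) ℂ)) := by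
    rw [hJ2C]
    ext i j
    rcases i with i | i <;> rcases j with j | j <;>
      simp [Matrix.fromBlocks, Matrix.one_apply, apply_ite (C : ℂ →+* MvPolynomial (Fin k) ℂ)]
  have hdetJ2R :
      (fromBlocks 0 1 1 0 : Matrix (N ⊕ N) (N ⊕ N) (MvPolynomial (Fin k) ℂ)).det = C εN := by
    rw [← hJ2R, ← RingHom.map_det, hεN]
  have hS2fact : S2 = fromBlocks M 0 0 Mᵀ
      * (fromBlocks 0 1 1 0 : Matrix (N ⊕ N) (N ⊕ N) (MvPolynomial (Fin k) ℂ)) := by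
    rw [fromBlocks_multiply, hS2]
    simp
  have hdetS2 : S2.det = C εN * F ^ 2 := by
    rw [hS2fact, Matrix.det_mul, det_fromBlocks_zero₂₁, Matrix.det_transpose, hdetM, hdetJ2R]
    ring
  set BD : Matrix (Fin 3 × Fin k) (Fin 3 × Fin k) (MvPolynomial (Fin k) ℂ) :=
    blockDiagonal gadget with hBD
  set E0 : Matrix ((N ⊕ N) ⊕ Fin 3 × Fin k) ((N ⊕ N) ⊕ Fin 3 × Fin k) (MvPolynomial (Fin k) ℂ) :=
    fromBlocks S2 0 0 BD with hE0
  set ε : ℂ := εN * (-1) ^ k with hε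
  have hdetE0 : E0.det = C ε * F ^ 2 := by
    rw [hE0, det_fromBlocks_zero₂₁, hdetS2, hBD, Matrix.det_blockDiagonal]
    simp only [gadget_det, Finset.prod_const, Finset.card_univ, Fintype.card_prod,
      Fintype.card_fin]
    rw [hε]
    simp only [_root_.map_mul, map_pow, map_neg, _root_.map_one]
    ring
  have hE0symm : ∀ i j, E0 j i = E0 i j := by
    rintro (i | ⟨i3, a⟩) (j | ⟨j3, b⟩) <;>
      simp only [hE0, fromBlocks_apply₁₁, fromBlocks_apply₁₂, fromBlocks_apply₂₁,
        fromBlocks_apply₂₂, Matrix.zero_apply]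
    · rcases i with i | i <;> rcases j with j | j <;>
        simp [hS2, Matrix.fromBlocks, Matrix.transpose_apply]
    · rw [hBD]
      simp only [Matrix.blockDiagonal_apply]
      rcases eq_or_ne a b with rfl | hab
      · simp [gadget_symm]
      · simp [hab, Ne.symm hab]
  have hE0aff : ∀ i j, Aff (E0 i j) := by
    rintro (i | ⟨i3, a⟩) (j | ⟨j3, b⟩) <;>
      simp only [hE0, fromBlocks_apply₁₁, fromBlocks_apply₁₂, fromBlocks_apply₂₁,
        fromBlocks_apply₂₂, Matrix.zero_apply]
    · rcases i with i | i <;> rcases j with j | j <;>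
        simp only [hS2, fromBlocks_apply₁₁, fromBlocks_apply₁₂, fromBlocks_apply₂₁,
          fromBlocks_apply₂₂, Matrix.zero_apply, Matrix.transpose_apply]
      · exact Aff_zero
      · exact haffM i j
      · exact haffM j i
      · exact Aff_zero
    · exact Aff_zero
    · exact Aff_zero
    · rw [hBD]
      simp only [Matrix.blockDiagonal_apply]
      rcases eq_or_ne a b with rfl | hab
      · simpa using gadget_aff a i3 j3
      · simp only [hab, if_false]
        exact Aff_zero
  set m := Fintype.card ((N ⊕ N) ⊕ Fin 3 × Fin k) with hm
  set eqv : ((N ⊕ N) ⊕ Fin 3 × Fin k) ≃ Fin m := Fintype.equivFin _ with heqv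
  refine ⟨m, E0.submatrix eqv.symm eqv.symm, ε,
    fun a => (eqv (Sum.inr (0, a)), eqv (Sum.inr (2, a))), ?_, ?_, mul_ne_zero hεN0 ?_, ?_, ?_,
    ?_, ?_⟩
  · intro i j; exact hE0aff _ _
  · intro i j; exact hE0symm _ _
  · exact pow_ne_zero _ (by norm_num)
  · rw [Matrix.det_submatrix_equiv_self, hdetE0]
  · intro a
    simp only [Matrix.submatrix_apply, Equiv.symm_apply_apply]
    rw [hE0]
    simp only [fromBlocks_apply₂₂]
    rw [hBD]
    simp only [Matrix.blockDiagonal_apply]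
    simpa using gadget_02 a
  · intro a b hab
    have := eqv.injective hab
    simpa using this
  · intro a b hab
    have := eqv.injective hab
    simp at this
end MLDA

namespace MLDA
open Matrix
set_option linter.unusedSectionVars false

/-- Multiplicity of a `Sym2` index. -/
noncomputable def mult {m : ℕ} (e : Sym2 (Fin m)) : ℂ := if e.IsDiag then 1 else 2

lemma mult_ne {m : ℕ} (e : Sym2 (Fin m)) : mult e ≠ 0 := by
  rw [mult]; split_ifs <;> norm_num

lemma fiber_card {m : ℕ} (e : Sym2 (Fin m)) :
    (Finset.univ.filter (fun p : Fin m × Fin m => Sym2.mk p.1 p.2 = e)).card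
      = if e.IsDiag then 1 else 2 := by
  induction e using Sym2.ind with
  | _ a b =>
    rcases eq_or_ne a b with rfl | hab
    · rw [show (Finset.univ.filter (fun p : Fin m × Fin m => Sym2.mk p.1 p.2 = s(a, a)))
          = {(a, a)} from ?_]
      · simp [Sym2.mk_isDiag_iff]
      · ext ⟨x, y⟩
        simp [Sym2.eq_iff, Prod.ext_iff]
    · rw [show (Finset.univ.filter (fun p : Fin m × Fin m => Sym2.mk p.1 p.2 = s(a, b)))
          = {(a, b), (b, a)} from ?_]
      · rw [Finset.card_insert_of_notMem (by simp [Prod.ext_iff, hab, Ne.symm hab]),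
          Finset.card_singleton]
        simp [Sym2.mk_isDiag_iff, hab]
      · ext ⟨x, y⟩
        simp [Sym2.eq_iff, Prod.ext_iff]
  
lemma trace_matOf {m : ℕ} (v s : Pt (Sym2 (Fin m))) :
    Matrix.trace (matOf v * matOf s) = ∑ e : Sym2 (Fin m), mult e * (v e * s e) := by
  have h1 : Matrix.trace (matOf v * matOf s)
      = ∑ p : Fin m × Fin m, (fun e => v e * s e) (Sym2.mk p.1 p.2) := by
    rw [Matrix.trace, Fintype.sum_prod_type]
    refine Finset.sum_congr rfl fun i _ => ?_
    rw [Matrix.diag_apply, Matrix.mul_apply]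
    refine Finset.sum_congr rfl fun j _ => ?_
    have : (Sym2.mk j i) = Sym2.mk i j := Sym2.eq_swap
    simp [matOf, this]
  have h2 := Finset.sum_comp (s := (Finset.univ : Finset (Fin m × Fin m)))
    (fun e : Sym2 (Fin m) => v e * s e) (fun p : Fin m × Fin m => Sym2.mk p.1 p.2)
  rw [h1, h2]
  have himg : Finset.univ.image (fun p : Fin m × Fin m => Sym2.mk p.1 p.2) = Finset.univ := by
    apply Finset.eq_univ_of_forall
    intro e
    induction e using Sym2.ind with
    | _ a b => exact Finset.mem_image.mpr ⟨(a, b), Finset.mem_univ _, rfl⟩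
  rw [himg]
  refine Finset.sum_congr rfl fun e _ => ?_
  rw [fiber_card, mult]
  split_ifs <;> simp [two_mul] <;> ring

end MLDA

namespace MLDA
open Matrix
set_option linter.unusedSectionVars false

theorem part_a (m : ℕ) (Xv : Set (Pt (Sym2 (Fin m)))) (d : ℕ) :
    MLDegreeIs Xv (detPolySym m) d ↔
      ∃ h : MvPolynomial (Sym2 (Fin m)) ℂ, h ≠ 0 ∧
        ∀ s : Pt (Sym2 (Fin m)), MvPolynomial.eval s h ≠ 0 →
          {p | p ∈ smoothLocus Xv ∧ MvPolynomial.eval p (detPolySym m) ≠ 0 ∧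
            ∀ v ∈ tangentSpace Xv p,
              dotP (gradP (detPolySym m) p) v
                = MvPolynomial.eval p (detPolySym m) *
                    Matrix.trace (matOf v * matOf s)}.ncard = d := by
  have hdot : ∀ (s v : Pt (Sym2 (Fin m))),
      Matrix.trace (matOf v * matOf s) = dotP (fun e => mult e * s e) v := by
    intro s v
    rw [trace_matOf, dotP]
    exact Finset.sum_congr rfl fun e _ => by ring
  have hset : ∀ s : Pt (Sym2 (Fin m)),
      {p | p ∈ smoothLocus Xv ∧ MvPolynomial.eval p (detPolySym m) ≠ 0 ∧
          ∀ v ∈ tangentSpace Xv p,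
            dotP (gradP (detPolySym m) p) v
              = MvPolynomial.eval p (detPolySym m) * Matrix.trace (matOf v * matOf s)}
        = {p | IsCriticalPoint Xv (detPolySym m) (fun e => mult e * s e) p} := by
    intro s
    ext p
    simp only [Set.mem_setOf_eq, IsCriticalPoint, hdot s]
  constructor
  · intro hML
    obtain ⟨h, h0, hgen⟩ := hML
    have hsurj : Function.Surjective
        (fun x : Pt (Sym2 (Fin m)) =>
          (fun e => eval x (C (mult e) * X e)) : Pt (Sym2 (Fin m)) → Pt (Sym2 (Fin m))) := by
      intro u
      refine ⟨fun e => (mult e)⁻¹ * u e, funext fun e => ?_⟩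
      simp only [eval_mul, eval_C, eval_X]
      rw [← mul_assoc, mul_inv_cancel₀ (mult_ne e), one_mul]
    obtain ⟨h', h'0, hgen'⟩ := gen_pullback (fun e => C (mult e) * X e)
      (fun u => {p | IsCriticalPoint Xv (detPolySym m) u p}.ncard = d) hsurj ⟨h, h0, hgen⟩
    refine ⟨h', h'0, fun s hs => ?_⟩
    rw [hset]
    have h2 := hgen' s hs
    simpa using h2
  · rintro ⟨h, h0, hgen⟩
    have hsurj : Function.Surjective
        (fun x : Pt (Sym2 (Fin m)) =>
          (fun e => eval x (C (mult e)⁻¹ * X e)) : Pt (Sym2 (Fin m)) → Pt (Sym2 (Fin m))) := by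
      intro u
      refine ⟨fun e => mult e * u e, funext fun e => ?_⟩
      simp only [eval_mul, eval_C, eval_X]
      rw [← mul_assoc, inv_mul_cancel₀ (mult_ne e), one_mul]
    have hgen2 : ∀ s, eval s h ≠ 0 →
        {p | IsCriticalPoint Xv (detPolySym m) (fun e => mult e * s e) p}.ncard = d := by
      intro s hs
      rw [← hset]
      exact hgen s hs
    obtain ⟨h', h'0, hgen'⟩ := gen_pullback (fun e => C (mult e)⁻¹ * X e)
      (fun s => {p | IsCriticalPoint Xv (detPolySym m)
        (fun e => mult e * s e) p}.ncard = d) hsurj ⟨h, h0, hgen2⟩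
    refine ⟨h', h'0, fun u hu => ?_⟩
    have h2 := hgen' u hu
    simp only [eval_mul, eval_C, eval_X] at h2
    have h3 : (fun e => mult e * ((mult e)⁻¹ * u e)) = u := by
      funext e
      rw [← mul_assoc, mul_inv_cancel₀ (mult_ne e), one_mul]
    rwa [h3] at h2

end MLDA

namespace MLDA
open Matrix
set_option linter.unusedSectionVars false
variable {ι : Type} [Fintype ι] [DecidableEq ι]

lemma Dv_add_right (f : MvPolynomial ι ℂ) (p v w : Pt ι) :
    Dv f p (v + w) = Dv f p v + Dv f p w := by
  simp [Dv, mul_add, Finset.sum_add_distrib]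

lemma Dv_smul_right (f : MvPolynomial ι ℂ) (p v : Pt ι) (c : ℂ) :
    Dv f p (c • v) = c * Dv f p v := by
  simp only [Dv, Finset.mul_sum, Pi.smul_apply, smul_eq_mul]
  exact Finset.sum_congr rfl fun j _ => by ring

lemma Dv_sub (f g : MvPolynomial ι ℂ) (p v : Pt ι) :
    Dv (f - g) p v = Dv f p v - Dv g p v := by
  simp [Dv, map_sub, sub_mul, Finset.sum_sub_distrib]

lemma mem_tangentSpace_iff {Z : Set (Pt ι)} {p w : Pt ι} :
    w ∈ tangentSpace Z p ↔ ∀ f ∈ vanIdeal Z, dotP (gradP f p) w = 0 := by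
  rw [tangentSpace]
  simp only [Submodule.mem_iInf, LinearMap.mem_ker]
  constructor
  · intro h f hf
    rw [← dotL_eq_dotP]
    exact h f hf
  · intro h f hf
    rw [dotL_eq_dotP]
    exact h f hf

lemma dotP_add_right (u v w : Pt ι) : dotP u (v + w) = dotP u v + dotP u w := by
  simp [dotP, mul_add, Finset.sum_add_distrib]

end MLDA

namespace MLDA
open Matrix
set_option linter.unusedSectionVars false
set_option maxHeartbeats 1000000

theorem part_b (k : ℕ) (X : Set (Pt (Fin k))) (F : MvPolynomial (Fin k) ℂ) :
    ∃ (m : ℕ) (A : Pt (Fin k) →ᵃ[ℂ] Pt (Sym2 (Fin m))),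
      Function.Injective A ∧
      ∀ d : ℕ, MLDegreeIs X F d ↔ MLDegreeIs (⇑A '' X) (detPolySym m) d := by
  classical
  obtain ⟨m, E, ε, jv, hEaff, hEsymm, hε, hEdet, hEvar, hjv1, hjv12⟩ := exists_sym_rep k F
  set φ : Sym2 (Fin m) → MvPolynomial (Fin k) ℂ :=
    Sym2.lift ⟨fun i j => E i j, fun i j => hEsymm j i⟩ with hφdef
  have hφmk : ∀ i j, φ (Sym2.mk i j) = E i j := fun i j => rfl
  have hφaff : ∀ e, Aff (φ e) := by
    intro e
    induction e using Sym2.ind with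
    | _ i j => rw [hφmk]; exact hEaff i j
  set eVar : Fin k → Sym2 (Fin m) := fun a => Sym2.mk (jv a).1 (jv a).2 with heVar
  have hφvar : ∀ a, φ (eVar a) = MvPolynomial.X a := by
    intro a
    show φ (Sym2.mk (jv a).1 (jv a).2) = MvPolynomial.X a
    exact (hφmk (jv a).1 (jv a).2).trans (hEvar a)
  have heVarInj : Function.Injective eVar := by
    intro a b hab
    have hab' : s((jv a).1, (jv a).2) = s((jv b).1, (jv b).2) := hab
    rw [Sym2.eq_iff] at hab'
    rcases hab' with ⟨h1, _⟩ | ⟨h1, _⟩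
    · exact hjv1 a b h1
    · exact absurd h1 (hjv12 a b)
  set L : Pt (Fin k) →ₗ[ℂ] Pt (Sym2 (Fin m)) :=
    { toFun := fun v e => Dv (φ e) 0 v,
      map_add' := fun v w => funext fun e => Dv_add_right _ _ _ _,
      map_smul' := fun c v => funext fun e => by
        simpa using Dv_smul_right (φ e) 0 v c } with hLdef
  have hLapp : ∀ v e, L v e = Dv (φ e) 0 v := fun _ _ => rfl
  set Af : Pt (Fin k) →ᵃ[ℂ] Pt (Sym2 (Fin m)) :=
    { toFun := fun x e => eval x (φ e),
      linear := L,
      map_vadd' := by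
        intro p v
        funext e
        have h := (hφaff e).eval_add p v
        show eval (v +ᵥ p) (φ e) = L v e + eval p (φ e)
        have hv : (v +ᵥ p) = v + p := rfl
        rw [hv, h, hLapp, (hφaff e).dv_const p 0 v] } with hAfdef
  have hAx : ∀ x e, Af x e = eval x (φ e) := fun _ _ => rfl
  have hAlin : Af.linear = L := rfl
  have hAinj : Function.Injective ⇑Af := by
    intro x y hxy
    funext a
    have hx : Af x (eVar a) = x a := by rw [hAx, hφvar, eval_X]
    have hy : Af y (eVar a) = y a := by rw [hAx, hφvar, eval_X]
    rw [← hx, ← hy, hxy]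
  have hLvar : ∀ (v : Pt (Fin k)) a, L v (eVar a) = v a := by
    intro v a
    rw [hLapp, hφvar, Dv_X]
  have hLinj : Function.Injective L := by
    intro v w hvw
    funext a
    rw [← hLvar v a, ← hLvar w a, hvw]
  have hpull : ∀ (g : MvPolynomial (Sym2 (Fin m)) ℂ) x, eval x (aeval φ g) = eval (Af x) g := by
    intro g x
    rw [eval_aeval]
    rfl
  have hdet2 : aeval φ (detPolySym m) = C ε * F ^ 2 := by
    have h1 : aeval φ (detPolySym m)
        = ((aeval φ : MvPolynomial (Sym2 (Fin m)) ℂ →ₐ[ℂ] MvPolynomial (Fin k) ℂ) :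
            MvPolynomial (Sym2 (Fin m)) ℂ →+* MvPolynomial (Fin k) ℂ) (detPolySym m) := rfl
    rw [h1, detPolySym, RingHom.map_det]
    have h2 : (((aeval φ : MvPolynomial (Sym2 (Fin m)) ℂ →ₐ[ℂ] MvPolynomial (Fin k) ℂ) :
        MvPolynomial (Sym2 (Fin m)) ℂ →+* MvPolynomial (Fin k) ℂ).mapMatrix
          (Matrix.of fun i j : Fin m =>
            (MvPolynomial.X (Sym2.mk i j) : MvPolynomial (Sym2 (Fin m)) ℂ))) = E := by
      apply Matrix.ext; intro i j
      simp only [RingHom.mapMatrix_apply, Matrix.map_apply, Matrix.of_apply, RingHom.coe_coe,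
        aeval_X]
      exact hφmk i j
    rw [h2, hEdet]
  have hdetval : ∀ x, eval (Af x) (detPolySym m) = ε * (eval x F) ^ 2 := by
    intro x
    rw [← hpull, hdet2]
    simp
  have hchain : ∀ (g : MvPolynomial (Sym2 (Fin m)) ℂ) x v,
      dotP (gradP g (Af x)) (L v) = Dv (aeval φ g) x v := by
    intro g x v
    rw [Dv_aeval]
    rw [show (fun e' => eval x (φ e')) = (Af x : Pt (Sym2 (Fin m))) from rfl]
    rw [dotP]
    refine Finset.sum_congr rfl fun e _ => ?_
    rw [hLapp, (hφaff e).dv_const 0 x v]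
    rfl
  set Y : Set (Pt (Sym2 (Fin m))) := ⇑Af '' X with hYdef
  have hvan1 : ∀ g ∈ vanIdeal Y, aeval φ g ∈ vanIdeal X := by
    intro g hg x hx
    rw [hpull]
    exact hg _ ⟨x, hx, rfl⟩
  have hpt : ∀ x' : Pt (Fin k),
      (fun a => eval (Af x') (MvPolynomial.X (eVar a) : MvPolynomial (Sym2 (Fin m)) ℂ)) = x' := by
    intro x'
    funext a
    rw [eval_X, show Af x' (eVar a) = eval x' (φ (eVar a)) from rfl, hφvar, eval_X]
  have hβ : ∀ (f : MvPolynomial (Fin k) ℂ) x,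
      eval (Af x) (aeval (fun a => MvPolynomial.X (eVar a)) f) = eval x f := by
    intro f x
    rw [eval_aeval, hpt x]
  have hβφ : ∀ f : MvPolynomial (Fin k) ℂ,
      aeval (R := ℂ) φ (aeval (R := ℂ) (fun a => MvPolynomial.X (eVar a)) f) = f := by
    intro f
    rw [aeval_aeval φ (fun a => MvPolynomial.X (eVar a)) f]
    have h1 : (fun a => aeval φ (MvPolynomial.X (eVar a) : MvPolynomial (Sym2 (Fin m)) ℂ))
        = (fun a => (MvPolynomial.X a : MvPolynomial (Fin k) ℂ)) := by
      funext a
      rw [aeval_X, hφvar]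
    rw [h1]
    exact aeval_X_left_apply f
  have hvan2 : ∀ f ∈ vanIdeal X, ∃ g ∈ vanIdeal Y, aeval φ g = f := by
    intro f hf
    refine ⟨aeval (fun a => MvPolynomial.X (eVar a)) f, ?_, hβφ f⟩
    rintro y ⟨x, hx, rfl⟩
    rw [hβ]
    exact hf x hx
  have htan : ∀ x, tangentSpace Y (Af x) = (tangentSpace X x).map L := by
    intro x
    apply le_antisymm
    · intro w hw
      rw [mem_tangentSpace_iff] at hw
      set v₀ : Pt (Fin k) := fun a => w (eVar a) with hv₀
      have hw' : w = L v₀ := by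
        funext e
        have hq : (MvPolynomial.X e - aeval (fun a => MvPolynomial.X (eVar a)) (φ e))
            ∈ vanIdeal Y := by
          rintro y ⟨x', hx', rfl⟩
          rw [map_sub, hβ, eval_X, show Af x' e = eval x' (φ e) from rfl, sub_self]
        have h0 := hw _ hq
        rw [dotP_gradP, Dv_sub, Dv_X, sub_eq_zero] at h0
        rw [h0, Dv_aeval, hpt x]
        rw [hLapp, (hφaff e).dv_const 0 x v₀, Dv]
        refine Finset.sum_congr rfl fun a _ => ?_
        rw [Dv_X]
      rw [hw']
      refine Submodule.mem_map_of_mem ?_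
      rw [mem_tangentSpace_iff]
      intro f hf
      obtain ⟨g, hg, rfl⟩ := hvan2 f hf
      rw [dotP_gradP, ← hchain g x v₀, ← hw']
      exact hw _ hg
    · rintro w hw
      obtain ⟨v, hv, rfl⟩ := Submodule.mem_map.mp hw
      rw [mem_tangentSpace_iff] at hv ⊢
      intro g hg
      rw [hchain g x v, ← dotP_gradP]
      exact hv _ (hvan1 g hg)
  have hrank : ∀ x, Module.finrank ℂ (tangentSpace Y (Af x))
      = Module.finrank ℂ (tangentSpace X x) := by
    intro x
    rw [htan]
    exact (LinearEquiv.finrank_eq (Submodule.equivMapOfInjective L hLinj _)).symm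
  have hsmooth : ∀ x, Af x ∈ smoothLocus Y ↔ x ∈ smoothLocus X := by
    intro x
    constructor
    · rintro ⟨hmem, hmin⟩
      obtain ⟨x', hx', hxx⟩ := hmem
      have hxeq : x' = x := hAinj hxx
      subst hxeq
      refine ⟨hx', fun q hq => ?_⟩
      have h2 := hmin (Af q) ⟨q, hq, rfl⟩
      rwa [hrank, hrank] at h2
    · rintro ⟨hx, hmin⟩
      refine ⟨⟨x, hx, rfl⟩, ?_⟩
      rintro q ⟨x', hx', rfl⟩
      rw [hrank, hrank]
      exact hmin x' hx'
  -- transpose map and sections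
  set cf : Sym2 (Fin m) → Fin k → ℂ := fun e a => L (Pi.single a 1) e with hcf
  set T : Pt (Sym2 (Fin m)) → Pt (Fin k) := fun S a => (∑ e, S e * cf e a) / 2 with hT
  have hcf1 : ∀ e a, cf e a = eval 0 (pderiv a (φ e)) := by
    intro e a
    rw [hcf]
    show Dv (φ e) 0 (Pi.single a 1) = _
    rw [Dv, Finset.sum_eq_single a]
    · simp
    · intro b _ hb; simp [Pi.single_apply, hb]
    · simp
  have hLdecomp : ∀ v e, L v e = ∑ a, v a * cf e a := by
    intro v e
    rw [hLapp, Dv]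
    refine Finset.sum_congr rfl fun a _ => ?_
    rw [hcf1]
    ring
  have hdot2 : ∀ S v, dotP S (L v) = 2 * dotP (T S) v := by
    intro S v
    rw [dotP, dotP]
    have h1 : ∀ e, S e * L v e = ∑ a, S e * (v a * cf e a) := fun e => by
      rw [hLdecomp, Finset.mul_sum]
    rw [Finset.sum_congr rfl (fun e _ => h1 e), Finset.sum_comm, Finset.mul_sum]
    refine Finset.sum_congr rfl fun a _ => ?_
    have h2 : (2:ℂ) * (T S a * v a) = (∑ e, S e * cf e a) * v a := by
      rw [hT]
      ring
    rw [h2, Finset.sum_mul]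
    exact Finset.sum_congr rfl fun e _ => by ring
  have hcfvar : ∀ a b, cf (eVar b) a = (Pi.single a 1 : Pt (Fin k)) b := by
    intro a b
    rw [hcf]
    exact hLvar _ b
  set σp : Pt (Fin k) → Pt (Sym2 (Fin m)) := fun u e => ∑ a, if e = eVar a then 2 * u a else 0
    with hσp
  have key1 : ∀ (s : Pt (Fin k)) a, ∑ e, σp s e * cf e a = 2 * s a := by
    intro s a
    have h1 : ∀ e, σp s e * cf e a = ∑ b, (if e = eVar b then 2 * s b * cf e a else 0) := by
      intro e
      rw [hσp, Finset.sum_mul]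
      exact Finset.sum_congr rfl fun b _ => by rw [ite_mul, zero_mul, mul_assoc]
    rw [Finset.sum_congr rfl (fun e _ => h1 e), Finset.sum_comm]
    have h2 : ∀ b, ∑ e, (if e = eVar b then 2 * s b * cf e a else 0)
        = 2 * s b * cf (eVar b) a := by
      intro b
      rw [Finset.sum_ite_eq' Finset.univ (eVar b) (fun e => 2 * s b * cf e a)]
      simp
    rw [Finset.sum_congr rfl (fun b _ => h2 b)]
    rw [Finset.sum_eq_single a]
    · rw [hcfvar]; simp
    · intro b _ hb
      rw [hcfvar]
      simp [Pi.single_apply, Ne.symm hb]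
    · simp
  have key2 : ∀ (z : Pt (Sym2 (Fin m))) a, ∑ e, z e * cf e a = 2 * T z a := by
    intro z a
    rw [hT]
    ring
  have hTσ : ∀ u, T (σp u) = u := by
    intro u
    funext a
    rw [hT]
    show (∑ e, σp u e * cf e a) / 2 = u a
    rw [key1]
    ring
  -- equivalence of critical points
  have hFiff : ∀ x, eval (Af x) (detPolySym m) ≠ 0 ↔ eval x F ≠ 0 := by
    intro x
    rw [hdetval]
    constructor
    · intro h hF
      apply h
      rw [hF]
      ring
    · intro h
      exact mul_ne_zero hε (pow_ne_zero 2 h)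
  have hDvdet : ∀ x v, Dv (aeval φ (detPolySym m)) x v = ε * (2 * eval x F * Dv F x v) := by
    intro x v
    rw [hdet2, show (F ^ 2 : MvPolynomial (Fin k) ℂ) = F * F from sq F, Dv_mul, Dv_mul, Dv_C]
    simp only [eval_C, eval_mul]
    ring
  have hcrit : ∀ S x, IsCriticalPoint Y (detPolySym m) S (Af x) ↔ IsCriticalPoint X F (T S) x := by
    intro S x
    constructor
    · rintro ⟨h1, h2, h3⟩
      have hF : eval x F ≠ 0 := (hFiff x).mp h2
      refine ⟨(hsmooth x).mp h1, hF, ?_⟩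
      intro v hv
      have h4 := h3 (L v) (by rw [htan]; exact Submodule.mem_map_of_mem hv)
      rw [hchain, hDvdet, hdetval, hdot2] at h4
      have hc : (2 * ε * eval x F) ≠ 0 := mul_ne_zero (mul_ne_zero two_ne_zero hε) hF
      rw [dotP_gradP]
      apply mul_left_cancel₀ hc
      linear_combination h4
    · rintro ⟨h1, h2, h3⟩
      refine ⟨(hsmooth x).mpr h1, (hFiff x).mpr h2, ?_⟩
      intro w hw
      rw [htan] at hw
      obtain ⟨v, hv, rfl⟩ := Submodule.mem_map.mp hw
      have h4 := h3 v hv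
      rw [dotP_gradP] at h4
      rw [hchain, hDvdet, hdetval, hdot2]
      linear_combination (2 * ε * eval x F) * h4
  have hncard : ∀ S, {q | IsCriticalPoint Y (detPolySym m) S q}.ncard
      = {x | IsCriticalPoint X F (T S) x}.ncard := by
    intro S
    have hseteq : {q | IsCriticalPoint Y (detPolySym m) S q}
        = ⇑Af '' {x | IsCriticalPoint X F (T S) x} := by
      ext q
      simp only [Set.mem_setOf_eq, Set.mem_image]
      constructor
      · intro hq
        obtain ⟨x, hx, rfl⟩ := hq.1.1
        exact ⟨x, (hcrit S x).mp hq, rfl⟩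
      · rintro ⟨x, hx, rfl⟩
        exact (hcrit S x).mpr hx
    rw [hseteq]
    exact Set.ncard_image_of_injective _ hAinj
  refine ⟨m, Af, hAinj, fun d => ?_⟩
  unfold MLDegreeIs Generically
  constructor
  · intro hML
    obtain ⟨h, h0, hgen⟩ := hML
    set Tpoly : Fin k → MvPolynomial (Sym2 (Fin m)) ℂ :=
      fun a => C (2⁻¹ : ℂ) * ∑ e, C (cf e a) * MvPolynomial.X e with hTpoly
    have hTpeval : ∀ S a, eval S (Tpoly a) = T S a := by
      intro S a
      rw [hTpoly]
      simp only [eval_mul, eval_C, map_sum, eval_X]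
      rw [hT]
      have h1 : ∑ e, cf e a * S e = ∑ e, S e * cf e a :=
        Finset.sum_congr rfl fun e _ => by ring
      rw [h1]
      ring
    have hsurjT : Function.Surjective
        (fun S : Pt (Sym2 (Fin m)) =>
          (fun a => eval S (Tpoly a)) : Pt (Sym2 (Fin m)) → Pt (Fin k)) := by
      intro u
      refine ⟨σp u, funext fun a => ?_⟩
      show eval (σp u) (Tpoly a) = u a
      rw [hTpeval]
      exact congrFun (hTσ u) a
    obtain ⟨h', h'0, hgen'⟩ := gen_pullback Tpoly
      (fun u => {p | IsCriticalPoint X F u p}.ncard = d) hsurjT ⟨h, h0, hgen⟩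
    refine ⟨h', h'0, fun S hS => ?_⟩
    have h2 := hgen' S hS
    have h3 : (fun a => eval S (Tpoly a)) = T S := by funext a; exact hTpeval S a
    rw [h3] at h2
    exact (hncard S).trans h2
  · intro hML
    obtain ⟨h', h'0, hgen'⟩ := hML
    set Ψpoly : Sym2 (Fin m) → MvPolynomial (Sym2 (Fin m) ⊕ Fin k) ℂ := fun e =>
      (∑ a, if e = eVar a then (C 2 * MvPolynomial.X (Sum.inr a)) else 0)
      + MvPolynomial.X (Sum.inl e)
      - (∑ a, if e = eVar a then
          (∑ e', C (cf e' a) * MvPolynomial.X (Sum.inl e')) else 0) with hΨ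
    have hΨeval : ∀ (z : Pt (Sym2 (Fin m))) (u : Pt (Fin k)) e,
        eval (Sum.elim z u) (Ψpoly e) = σp u e + z e - σp (T z) e := by
      intro z u e
      rw [hΨ]
      simp only [map_sub, map_add, map_sum, eval_mul, eval_C, eval_X,
        apply_ite (eval (Sum.elim z u)), map_zero, Sum.elim_inl, Sum.elim_inr]
      have e1 : ∑ a, (if e = eVar a then 2 * u a else 0) = σp u e := by rw [hσp]
      have e2 : ∑ a, (if e = eVar a then ∑ e', cf e' a * z e' else 0) = σp (T z) e := by
        rw [hσp]
        refine Finset.sum_congr rfl fun a _ => ?_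
        split_ifs with hcond
        · have h1 : ∑ e', cf e' a * z e' = ∑ e', z e' * cf e' a :=
            Finset.sum_congr rfl fun e' _ => by ring
          rw [h1, key2]
        · rfl
      rw [e1, e2]
    have hsec : ∀ (z : Pt (Sym2 (Fin m))) (u : Pt (Fin k)),
        T (fun e => eval (Sum.elim z u) (Ψpoly e)) = u := by
      intro z u
      have hfun : (fun e => eval (Sum.elim z u) (Ψpoly e))
          = fun e => σp u e + z e - σp (T z) e := funext (hΨeval z u)
      rw [hfun]
      funext a
      rw [hT]
      show (∑ e, (σp u e + z e - σp (T z) e) * cf e a) / 2 = u a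
      have hsplit : ∑ e, (σp u e + z e - σp (T z) e) * cf e a
          = ((∑ e, σp u e * cf e a) + (∑ e, z e * cf e a)) - ∑ e, σp (T z) e * cf e a := by
        rw [← Finset.sum_add_distrib, ← Finset.sum_sub_distrib]
        exact Finset.sum_congr rfl fun e _ => by ring
      rw [hsplit, key1, key2, key1]
      ring
    have hsurjΨ : ∀ S : Pt (Sym2 (Fin m)), ∃ (z : Pt (Sym2 (Fin m))) (u : Pt (Fin k)),
        (fun e => eval (Sum.elim z u) (Ψpoly e)) = S := by
      intro S
      refine ⟨S, T S, funext fun e => ?_⟩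
      rw [hΨeval]
      ring
    apply gen_pushforward T (fun u => {p | IsCriticalPoint X F u p}.ncard = d) Ψpoly hsec hsurjΨ
    refine ⟨h', h'0, fun S hS => ?_⟩
    have h2 := hgen' S hS
    exact (hncard S).symm.trans h2

end MLDA
/-- **Proposition (the coordinate-free ML degree agrees with the usual Gaussian ML degree).**
(a) For a subvariety `X ⊆ Sym₂(ℂ^m)`, the ML degree `MLD_det(X)` equals the usual
Gaussian ML degree of `X`: the number of critical points of
`K ↦ log det K − tr(K S)` on `X^sm ∖ V(det)` for a general symmetric matrix `S`.
(b) For any finite dimensional `𝓛`, any subvariety `X ⊆ 𝓛` and any polynomial `F`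
on `𝓛`, there are `m` and an injective affine map `𝒜 : 𝓛 → Sym₂(ℂ^m)` with
`MLD_F(X) = MLD_det(𝒜(X))`. -/
theorem mld_eq_usual_gaussian_mld :
    -- (a)
    (∀ (m : ℕ) (Xv : Set (Pt (Sym2 (Fin m)))), IsAffineVariety Xv → ∀ d : ℕ,
      MLDegreeIs Xv (detPolySym m) d ↔
        ∃ h : MvPolynomial (Sym2 (Fin m)) ℂ, h ≠ 0 ∧
          ∀ s : Pt (Sym2 (Fin m)), MvPolynomial.eval s h ≠ 0 →
            {p | p ∈ smoothLocus Xv ∧ MvPolynomial.eval p (detPolySym m) ≠ 0 ∧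
              ∀ v ∈ tangentSpace Xv p,
                dotP (gradP (detPolySym m) p) v
                  = MvPolynomial.eval p (detPolySym m) *
                      Matrix.trace (matOf v * matOf s)}.ncard = d) ∧
    -- (b)
    (∀ (k : ℕ) (X : Set (Pt (Fin k))) (F : MvPolynomial (Fin k) ℂ),
      IsAffineVariety X →
        ∃ (m : ℕ) (A : Pt (Fin k) →ᵃ[ℂ] Pt (Sym2 (Fin m))),
          Function.Injective A ∧
          ∀ d : ℕ, MLDegreeIs X F d ↔ MLDegreeIs (⇑A '' X) (detPolySym m) d) := by
  constructor
  · intro m Xv _ d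
    exact MLDA.part_a m Xv d
  · intro k X F _
    exact MLDA.part_b k X F
end

section
/- Let (p₁,…,pₙ) be a basis of a finite-dimensional ℂ-vector space 𝓛 and (ℓ₁,…,ℓₙ) the dual basis of 𝓛*. Let F := ∏ᵢ₌₁ⁿ ℓᵢ^{aᵢ} with integers aᵢ ≥ 0. Then F is homaloidal if and only if aᵢ ≥ 1 for all i; in that case the rational inverse Ψ : 𝓛* ⇢ 𝓛 of ∇ log F is given by Ψ(u) = Σᵢ₌₁ⁿ (aᵢ / u(pᵢ))·pᵢ. -/
open MvPolynomial

noncomputable section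

/-- The linear form on `𝓛` with coefficient vector `w`, as a polynomial. -/
def linForm {ι : Type} [Fintype ι] [DecidableEq ι] (w : Pt ι) : MvPolynomial ι ℂ :=
  ∑ j, MvPolynomial.C (w j) * MvPolynomial.X j

/-- The map `∇ log F : 𝓛 ⇢ 𝓛*`, `p ↦ ∇_p F / F(p)`. -/
def gradLogPoly {ι : Type} [Fintype ι] [DecidableEq ι]
    (F : MvPolynomial ι ℂ) (p : Pt ι) : Pt ι :=
  fun i => eval p (pderiv i F) / eval p F

/-- `Ψ` is a rational (two-sided, generic) inverse of `∇ log F : 𝓛 ⇢ 𝓛*`. -/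
def IsGradLogInverse {ι : Type} [Fintype ι] [DecidableEq ι]
    (F : MvPolynomial ι ℂ) (Ψ : RatMap ι ι) : Prop :=
  Generically (fun p : Pt ι =>
    eval p F ≠ 0 ∧ Ψ.isDefinedAt (gradLogPoly F p) ∧ Ψ.eval (gradLogPoly F p) = p) ∧
  Generically (fun u : Pt ι =>
    Ψ.isDefinedAt u ∧ MvPolynomial.eval (Ψ.eval u) F ≠ 0 ∧ gradLogPoly F (Ψ.eval u) = u)

/-- `F` is homaloidal: the map `∇ log F : 𝓛 ⇢ 𝓛*` is birational. -/
def IsHomaloidal {ι : Type} [Fintype ι] [DecidableEq ι] (F : MvPolynomial ι ℂ) : Prop :=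
  ∃ Ψ : RatMap ι ι, IsGradLogInverse F Ψ

end

noncomputable section HomaloidalAux

open Finset MvPolynomial

namespace HomAux

variable {ι : Type} [Fintype ι] [DecidableEq ι]

lemma dotP_comm (u v : Pt ι) : dotP u v = dotP v u := by
  simp [dotP, mul_comm]

lemma dotP_add_right (u v w : Pt ι) :
    dotP u (fun m => v m + w m) = dotP u v + dotP u w := by
  simp [dotP, mul_add, Finset.sum_add_distrib]

lemma eval_linForm (w q : Pt ι) : MvPolynomial.eval q (linForm w) = dotP w q := by
  simp [linForm, dotP]

lemma ne_zero_of_eval {h : MvPolynomial ι ℂ} {x : Pt ι}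
    (hx : MvPolynomial.eval x h ≠ 0) : h ≠ 0 := fun h0 => hx (by simp [h0])

lemma exists_eval_ne_zero {h : MvPolynomial ι ℂ} (hh : h ≠ 0) :
    ∃ x : Pt ι, MvPolynomial.eval x h ≠ 0 := by
  by_contra hc
  push_neg at hc
  exact hh (MvPolynomial.funext (q := 0) fun x => by simp [hc x])

lemma pderiv_linForm (w : Pt ι) (j : ι) : pderiv j (linForm w) = C (w j) := by
  rw [linForm, map_sum]
  have h : ∀ k, pderiv j (C (w k) * X k) = if k = j then C (w k) else 0 := by
    intro k
    rcases eq_or_ne k j with rfl | hk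
    · simp [pderiv_C_mul]
    · simp [pderiv_C_mul, hk]
  simp [h]

lemma pderiv_finset_prod {κ : Type} [DecidableEq κ] (s : Finset κ)
    (f : κ → MvPolynomial ι ℂ) (j : ι) :
    pderiv j (∏ i ∈ s, f i) = ∑ i ∈ s, pderiv j (f i) * ∏ k ∈ s.erase i, f k := by
  induction s using Finset.induction_on with
  | empty => simp
  | @insert a s ha ih =>
    rw [Finset.prod_insert ha, pderiv_mul, ih, Finset.sum_insert ha, Finset.erase_insert ha]
    congr 1
    rw [Finset.mul_sum]
    refine Finset.sum_congr rfl fun i hi => ?_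
    rw [Finset.erase_insert_of_ne (Ne.symm fun h : i = a => ha (h ▸ hi)),
      Finset.prod_insert (fun h => ha (Finset.mem_of_mem_erase h))]
    ring

lemma eval_F (l : ι → Pt ι) (a : ι → ℕ) (q : Pt ι) :
    MvPolynomial.eval q (∏ i, linForm (l i) ^ a i) = ∏ i, (dotP (l i) q) ^ a i := by
  rw [map_prod]
  exact Finset.prod_congr rfl fun i _ => by rw [map_pow, eval_linForm]

lemma eval_pderiv_F (l : ι → Pt ι) (a : ι → ℕ) (j : ι) (q : Pt ι) :
    MvPolynomial.eval q (pderiv j (∏ i, linForm (l i) ^ a i)) =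
      ∑ i, (a i : ℂ) * l i j * dotP (l i) q ^ (a i - 1)
        * ∏ k ∈ Finset.univ.erase i, dotP (l k) q ^ a k := by
  rw [pderiv_finset_prod, map_sum]
  refine Finset.sum_congr rfl fun i _ => ?_
  rw [map_mul, pderiv_pow, pderiv_linForm]
  rw [map_mul, map_mul, map_prod]
  simp only [map_natCast, map_pow, eval_linForm, eval_C]
  ring

lemma sum_div_prod (c t : ι → ℂ) (hc : ∀ i, c i ≠ 0) :
    (∑ i, t i * ∏ k ∈ Finset.univ.erase i, c k) / (∏ k, c k) = ∑ i, t i / c i := by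
  rw [div_eq_iff (Finset.prod_ne_zero_iff.mpr fun i _ => hc i), Finset.sum_mul]
  refine Finset.sum_congr rfl fun i _ => ?_
  rw [← Finset.mul_prod_erase Finset.univ c (Finset.mem_univ i), ← mul_assoc,
    div_mul_cancel₀ _ (hc i)]

section Dual

variable (p l : ι → Pt ι)
variable (hdual : ∀ i j, dotP (l i) (p j) = if i = j then (1 : ℂ) else 0)

include hdual

lemma dual_key (j m : ι) : ∑ i, p i j * l i m = if j = m then (1 : ℂ) else 0 := by
  have hAB : (Matrix.of fun i k => l i k) * (Matrix.of fun k i => p i k)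
      = (1 : Matrix ι ι ℂ) := by
    ext i j
    simpa [Matrix.mul_apply, Matrix.one_apply, dotP] using hdual i j
  have hBA := mul_eq_one_comm.mp hAB
  have h := congrFun (congrFun hBA j) m
  simpa [Matrix.mul_apply, Matrix.one_apply] using h

lemma expand_u (u : Pt ι) (m : ι) : ∑ i, dotP u (p i) * l i m = u m := by
  have h : ∑ i, dotP u (p i) * l i m = ∑ k, u k * ∑ i, p i k * l i m := by
    simp only [dotP, Finset.sum_mul, Finset.mul_sum]
    rw [Finset.sum_comm]
    try exact Finset.sum_congr rfl fun k _ => Finset.sum_congr rfl fun i _ => by ring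
  rw [h]
  simp [dual_key p l hdual]

lemma expand_q (q : Pt ι) (j : ι) : ∑ i, dotP (l i) q * p i j = q j := by
  have h : ∑ i, dotP (l i) q * p i j = ∑ k, q k * ∑ i, p i j * l i k := by
    simp only [dotP, Finset.sum_mul, Finset.mul_sum]
    rw [Finset.sum_comm]
    try exact Finset.sum_congr rfl fun k _ => Finset.sum_congr rfl fun i _ => by ring
  rw [h]
  simp only [dual_key p l hdual]
  simp

lemma dotP_l_sum (c : ι → ℂ) (j : ι) : dotP (l j) (∑ i, c i • p i) = c j := by
  have h : ∀ k, (∑ i, c i • p i) k = ∑ i, c i * p i k := by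
    intro k; simp [Finset.sum_apply]
  have h2 : dotP (l j) (∑ i, c i • p i) = ∑ i, c i * dotP (l j) (p i) := by
    simp only [dotP, h, Finset.mul_sum]
    rw [Finset.sum_comm]
    try exact Finset.sum_congr rfl fun k _ => Finset.sum_congr rfl fun i _ => by ring
  rw [h2]
  simp [hdual]

lemma dotP_sum_l (c : ι → ℂ) (j : ι) : dotP (∑ i, c i • l i) (p j) = c j := by
  have h : ∀ k, (∑ i, c i • l i) k = ∑ i, c i * l i k := by
    intro k; simp [Finset.sum_apply]
  have h2 : dotP (∑ i, c i • l i) (p j) = ∑ i, c i * dotP (l i) (p j) := by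
    simp only [dotP, h, Finset.sum_mul, Finset.mul_sum]
    rw [Finset.sum_comm]
    try exact Finset.sum_congr rfl fun k _ => Finset.sum_congr rfl fun i _ => by ring
  rw [h2]
  simp [hdual]

lemma dotP_p_usum (i : ι) : dotP (p i) (fun m => ∑ j, l j m) = 1 := by
  have h : dotP (p i) (fun m => ∑ j, l j m) = ∑ j, dotP (l j) (p i) := by
    simp only [dotP, Finset.mul_sum]
    rw [Finset.sum_comm]
    try exact Finset.sum_congr rfl fun k _ => Finset.sum_congr rfl fun j _ => by ring
  rw [h]
  simp [hdual]

lemma dotP_l_qsum (i : ι) : dotP (l i) (fun m => ∑ j, p j m) = 1 := by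
  have h : dotP (l i) (fun m => ∑ j, p j m) = ∑ j, dotP (l i) (p j) := by
    simp only [dotP, Finset.mul_sum]
    rw [Finset.sum_comm]
    try exact Finset.sum_congr rfl fun k _ => Finset.sum_congr rfl fun j _ => by ring
  rw [h]
  simp [hdual]

end Dual

lemma gradLog_eq (l : ι → Pt ι) (a : ι → ℕ) (ha : ∀ i, 1 ≤ a i) {q : Pt ι}
    (hq : ∀ i, dotP (l i) q ≠ 0) (m : ι) :
    gradLogPoly (∏ i, linForm (l i) ^ a i) q m
      = ∑ i, (a i : ℂ) / dotP (l i) q * l i m := by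
  have hpow : ∀ i, dotP (l i) q ^ a i ≠ 0 := fun i => pow_ne_zero _ (hq i)
  show MvPolynomial.eval q (pderiv m (∏ i, linForm (l i) ^ a i))
      / MvPolynomial.eval q (∏ i, linForm (l i) ^ a i) = _
  rw [eval_pderiv_F, eval_F, sum_div_prod _ _ hpow]
  refine Finset.sum_congr rfl fun i _ => ?_
  have h1 : dotP (l i) q * dotP (l i) q ^ (a i - 1) = dotP (l i) q ^ a i := by
    rw [← pow_succ', Nat.sub_add_cancel (ha i)]
  rw [← h1, mul_div_mul_right _ _ (pow_ne_zero _ (hq i))]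
  ring

end HomAux

end HomaloidalAux

/-- **Lemma (products of powers of the dual basis).**
Let `(pᵢ)` be a basis of `𝓛` with dual basis `(ℓᵢ)` of `𝓛*`, and let
`F = ∏ᵢ ℓᵢ^{aᵢ}` with `aᵢ ≥ 0`.  Then `F` is homaloidal if and only if all
`aᵢ ≥ 1`, in which case the inverse `Ψ` of `∇ log F` is
`Ψ(u) = ∑ᵢ (aᵢ / u(pᵢ)) • pᵢ`. -/
theorem product_of_dual_basis_homaloidal {ι : Type} [Fintype ι] [DecidableEq ι]
    (p : ι → Pt ι) (l : ι → Pt ι) (a : ι → ℕ)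
    (hbasis : LinearIndependent ℂ p ∧ Submodule.span ℂ (Set.range p) = ⊤)
    (hdual : ∀ i j, dotP (l i) (p j) = if i = j then (1 : ℂ) else 0)
    (F : MvPolynomial ι ℂ) (hFdef : F = ∏ i, linForm (l i) ^ a i) :
    (IsHomaloidal F ↔ ∀ i, 1 ≤ a i) ∧
    ((∀ i, 1 ≤ a i) →
      -- `u ↦ ∑ᵢ (aᵢ / u(pᵢ)) • pᵢ` is a two-sided generic inverse of `∇ log F`
      Generically (fun u : Pt ι =>
        (∀ i, dotP u (p i) ≠ 0) ∧
        MvPolynomial.eval (∑ i, ((a i : ℂ) / dotP u (p i)) • p i) F ≠ 0 ∧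
        gradLogPoly F (∑ i, ((a i : ℂ) / dotP u (p i)) • p i) = u) ∧
      Generically (fun q : Pt ι =>
        eval q F ≠ 0 ∧ (∀ i, dotP (gradLogPoly F q) (p i) ≠ 0) ∧
        (∑ i, ((a i : ℂ) / dotP (gradLogPoly F q) (p i)) • p i) = q)) := by
  classical
  have hFeval : ∀ q : Pt ι, MvPolynomial.eval q F = ∏ i, dotP (l i) q ^ a i := by
    intro q; rw [hFdef]; exact HomAux.eval_F l a q
  have hFpd : ∀ (j : ι) (q : Pt ι), MvPolynomial.eval q (pderiv j F)
      = ∑ i, (a i : ℂ) * l i j * dotP (l i) q ^ (a i - 1)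
          * ∏ k ∈ Finset.univ.erase i, dotP (l k) q ^ a k := by
    intro j q; rw [hFdef]; exact HomAux.eval_pderiv_F l a j q
  have hgl : ∀ (_ : ∀ i, 1 ≤ a i) (q : Pt ι), (∀ i, dotP (l i) q ≠ 0) → ∀ m,
      gradLogPoly F q m = ∑ i, (a i : ℂ) / dotP (l i) q * l i m := by
    intro ha q hq m; rw [hFdef]; exact HomAux.gradLog_eq l a ha hq m
  have hane : ∀ (_ : ∀ i, 1 ≤ a i) (i : ι), (a i : ℂ) ≠ 0 :=
    fun ha i => Nat.cast_ne_zero.mpr (Nat.one_le_iff_ne_zero.mp (ha i))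
  -- Helper A : from a generic dual point `u` back to the primal side
  have hA : ∀ (_ : ∀ i, 1 ≤ a i) (u : Pt ι), (∀ i, dotP u (p i) ≠ 0) →
      (MvPolynomial.eval (∑ i, ((a i : ℂ) / dotP u (p i)) • p i) F ≠ 0 ∧
       gradLogPoly F (∑ i, ((a i : ℂ) / dotP u (p i)) • p i) = u) := by
    intro ha u hu
    have hq : ∀ j, dotP (l j) (∑ i, ((a i : ℂ) / dotP u (p i)) • p i)
        = (a j : ℂ) / dotP u (p j) := fun j => HomAux.dotP_l_sum p l hdual _ j
    have hqne : ∀ j, dotP (l j) (∑ i, ((a i : ℂ) / dotP u (p i)) • p i) ≠ 0 := fun j => by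
      rw [hq j]; exact div_ne_zero (hane ha j) (hu j)
    constructor
    · rw [hFeval]
      exact Finset.prod_ne_zero_iff.mpr fun j _ => pow_ne_zero _ (hqne j)
    · funext m
      rw [hgl ha _ hqne m]
      have hc : ∀ j, (a j : ℂ) / dotP (l j) (∑ i, ((a i : ℂ) / dotP u (p i)) • p i)
          = dotP u (p j) := fun j => by
        rw [hq j, div_div_eq_mul_div, mul_div_cancel_left₀ _ (hane ha j)]
      calc ∑ i, (a i : ℂ) / dotP (l i) (∑ i, ((a i : ℂ) / dotP u (p i)) • p i) * l i m
          = ∑ i, dotP u (p i) * l i m := Finset.sum_congr rfl fun i _ => by rw [hc i]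
        _ = u m := HomAux.expand_u p l hdual u m
  -- Helper B : from a generic primal point `q` to the dual side and back
  have hB : ∀ (_ : ∀ i, 1 ≤ a i) (q : Pt ι), (∀ i, dotP (l i) q ≠ 0) →
      (MvPolynomial.eval q F ≠ 0 ∧
       (∀ j, dotP (gradLogPoly F q) (p j) = (a j : ℂ) / dotP (l j) q) ∧
       (∑ i, ((a i : ℂ) / dotP (gradLogPoly F q) (p i)) • p i) = q) := by
    intro ha q hq
    have hFq : MvPolynomial.eval q F ≠ 0 := by
      rw [hFeval]; exact Finset.prod_ne_zero_iff.mpr fun j _ => pow_ne_zero _ (hq j)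
    have huf : gradLogPoly F q = ∑ i, ((a i : ℂ) / dotP (l i) q) • l i := by
      funext m
      rw [hgl ha q hq m]
      simp [Finset.sum_apply]
    have hup : ∀ j, dotP (gradLogPoly F q) (p j) = (a j : ℂ) / dotP (l j) q := by
      intro j
      rw [huf]
      exact HomAux.dotP_sum_l p l hdual _ j
    refine ⟨hFq, hup, ?_⟩
    funext j
    have hcoef : ∀ i, (a i : ℂ) / dotP (gradLogPoly F q) (p i) = dotP (l i) q := fun i => by
      rw [hup i, div_div_eq_mul_div, mul_div_cancel_left₀ _ (hane ha i)]
    calc (∑ i, ((a i : ℂ) / dotP (gradLogPoly F q) (p i)) • p i) j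
        = ∑ i, ((a i : ℂ) / dotP (gradLogPoly F q) (p i)) * p i j := by
          simp [Finset.sum_apply]
      _ = ∑ i, dotP (l i) q * p i j := Finset.sum_congr rfl fun i _ => by rw [hcoef i]
      _ = q j := HomAux.expand_q p l hdual q j
  -- nonvanishing of the two denominators
  have hdenp : (∏ i, linForm (p i) : MvPolynomial ι ℂ) ≠ 0 := by
    apply HomAux.ne_zero_of_eval (x := fun m => ∑ j, l j m)
    rw [map_prod]
    have h1 : ∀ i : ι, MvPolynomial.eval (fun m => ∑ j, l j m) (linForm (p i)) = 1 := fun i => by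
      rw [HomAux.eval_linForm]; exact HomAux.dotP_p_usum p l hdual i
    rw [Finset.prod_congr rfl fun i _ => h1 i]
    simp
  have hdenl : (∏ i, linForm (l i) : MvPolynomial ι ℂ) ≠ 0 := by
    apply HomAux.ne_zero_of_eval (x := fun m => ∑ j, p j m)
    rw [map_prod]
    have h1 : ∀ i : ι, MvPolynomial.eval (fun m => ∑ j, p j m) (linForm (l i)) = 1 := fun i => by
      rw [HomAux.eval_linForm]; exact HomAux.dotP_l_qsum p l hdual i
    rw [Finset.prod_congr rfl fun i _ => h1 i]
    simp
  have hfactp : ∀ u : Pt ι, MvPolynomial.eval u (∏ i, linForm (p i)) ≠ 0 →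
      ∀ i, dotP u (p i) ≠ 0 := by
    intro u hu i h0
    apply hu
    rw [map_prod]
    exact Finset.prod_eq_zero (Finset.mem_univ i)
      (by rw [HomAux.eval_linForm, HomAux.dotP_comm]; exact h0)
  have hfactl : ∀ q : Pt ι, MvPolynomial.eval q (∏ i, linForm (l i)) ≠ 0 →
      ∀ i, dotP (l i) q ≠ 0 := by
    intro q hq i h0
    apply hq
    rw [map_prod]
    exact Finset.prod_eq_zero (Finset.mem_univ i) (by rw [HomAux.eval_linForm]; exact h0)
  have hdefp : ∀ u : Pt ι, (∀ i, dotP u (p i) ≠ 0) →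
      MvPolynomial.eval u (∏ i, linForm (p i)) ≠ 0 := by
    intro u hu
    rw [map_prod]
    exact Finset.prod_ne_zero_iff.mpr fun i _ => by
      rw [HomAux.eval_linForm, HomAux.dotP_comm]; exact hu i
  -- the value of the explicit rational map
  have hnum_eval : ∀ u : Pt ι, (∀ i, dotP u (p i) ≠ 0) → ∀ j : ι,
      MvPolynomial.eval u (∑ i, MvPolynomial.C ((a i : ℂ) * p i j)
          * ∏ k ∈ Finset.univ.erase i, linForm (p k))
        / MvPolynomial.eval u (∏ i, linForm (p i))
      = (∑ i, ((a i : ℂ) / dotP u (p i)) • p i) j := by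
    intro u hu j
    have hnum : MvPolynomial.eval u (∑ i, MvPolynomial.C ((a i : ℂ) * p i j)
        * ∏ k ∈ Finset.univ.erase i, linForm (p k))
        = ∑ i, ((a i : ℂ) * p i j) * ∏ k ∈ Finset.univ.erase i, dotP u (p k) := by
      rw [map_sum]
      refine Finset.sum_congr rfl fun i _ => ?_
      rw [map_mul, MvPolynomial.eval_C, map_prod]
      congr 1
      exact Finset.prod_congr rfl fun k _ => by
        rw [HomAux.eval_linForm, HomAux.dotP_comm]
    have hden : MvPolynomial.eval u (∏ i, linForm (p i)) = ∏ k, dotP u (p k) := by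
      rw [map_prod]
      exact Finset.prod_congr rfl fun k _ => by
        rw [HomAux.eval_linForm, HomAux.dotP_comm]
    rw [hnum, hden, HomAux.sum_div_prod _ _ hu]
    rw [Finset.sum_apply]
    refine Finset.sum_congr rfl fun i _ => ?_
    simp only [Pi.smul_apply, smul_eq_mul]
    ring
  -- second bullet: the two generic statements
  have hGenU : ∀ (_ : ∀ i, 1 ≤ a i), Generically (fun u : Pt ι =>
      (∀ i, dotP u (p i) ≠ 0) ∧
      MvPolynomial.eval (∑ i, ((a i : ℂ) / dotP u (p i)) • p i) F ≠ 0 ∧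
      gradLogPoly F (∑ i, ((a i : ℂ) / dotP u (p i)) • p i) = u) := by
    intro ha
    refine ⟨∏ i, linForm (p i), hdenp, fun u hu => ?_⟩
    have hu' := hfactp u hu
    exact ⟨hu', (hA ha u hu').1, (hA ha u hu').2⟩
  have hGenQ : ∀ (_ : ∀ i, 1 ≤ a i), Generically (fun q : Pt ι =>
      MvPolynomial.eval q F ≠ 0 ∧ (∀ i, dotP (gradLogPoly F q) (p i) ≠ 0) ∧
      (∑ i, ((a i : ℂ) / dotP (gradLogPoly F q) (p i)) • p i) = q) := by
    intro ha
    refine ⟨∏ i, linForm (l i), hdenl, fun q hq => ?_⟩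
    have hq' := hfactl q hq
    obtain ⟨h1, h2, h3⟩ := hB ha q hq'
    exact ⟨h1, fun i => by rw [h2 i]; exact div_ne_zero (hane ha i) (hq' i), h3⟩
  -- the forward construction of the inverse rational map
  have hhom : (∀ i, 1 ≤ a i) → IsHomaloidal F := by
    intro ha
    refine ⟨⟨fun j => ∑ i, MvPolynomial.C ((a i : ℂ) * p i j)
        * ∏ k ∈ Finset.univ.erase i, linForm (p k), ∏ i, linForm (p i), hdenp⟩, ?_, ?_⟩
    · refine ⟨∏ i, linForm (l i), hdenl, fun q hq => ?_⟩
      have hq' := hfactl q hq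
      obtain ⟨h1, h2, h3⟩ := hB ha q hq'
      have hu : ∀ i, dotP (gradLogPoly F q) (p i) ≠ 0 := fun i => by
        rw [h2 i]; exact div_ne_zero (hane ha i) (hq' i)
      refine ⟨h1, hdefp _ hu, ?_⟩
      have he : RatMap.eval ⟨fun j => ∑ i, MvPolynomial.C ((a i : ℂ) * p i j)
          * ∏ k ∈ Finset.univ.erase i, linForm (p k), ∏ i, linForm (p i), hdenp⟩
            (gradLogPoly F q)
          = ∑ i, ((a i : ℂ) / dotP (gradLogPoly F q) (p i)) • p i :=
        funext fun j => hnum_eval _ hu j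
      rw [he, h3]
    · refine ⟨∏ i, linForm (p i), hdenp, fun u hu => ?_⟩
      have hu' := hfactp u hu
      have he : RatMap.eval ⟨fun j => ∑ i, MvPolynomial.C ((a i : ℂ) * p i j)
          * ∏ k ∈ Finset.univ.erase i, linForm (p k), ∏ i, linForm (p i), hdenp⟩ u
          = ∑ i, ((a i : ℂ) / dotP u (p i)) • p i :=
        funext fun j => hnum_eval u hu' j
      refine ⟨hdefp _ hu', ?_, ?_⟩
      · rw [he]; exact (hA ha u hu').1
      · rw [he]; exact (hA ha u hu').2
  -- the converse: homaloidal forces every exponent to be positive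
  have hconv : IsHomaloidal F → ∀ i, 1 ≤ a i := by
    rintro ⟨Ψ, hgen, -⟩ i
    by_contra hai
    have hai0 : a i = 0 := Nat.lt_one_iff.mp (not_le.mp hai)
    obtain ⟨h, hh, hP⟩ := hgen
    have hsval : ∀ x : Pt ι,
        MvPolynomial.eval x (MvPolynomial.eval₂ (MvPolynomial.C : ℂ →+* MvPolynomial ι ℂ)
          (fun j => MvPolynomial.X j + MvPolynomial.C (p i j)) h)
        = MvPolynomial.eval (fun m => x m + p i m) h := by
      intro x
      rw [MvPolynomial.eval_eval₂]
      have h1 : (MvPolynomial.eval x).comp (MvPolynomial.C : ℂ →+* MvPolynomial ι ℂ)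
          = RingHom.id ℂ := by
        ext r; simp
      rw [h1]
      simp [MvPolynomial.eval₂_id]
    have hsne : MvPolynomial.eval₂ (MvPolynomial.C : ℂ →+* MvPolynomial ι ℂ)
        (fun j => MvPolynomial.X j + MvPolynomial.C (p i j)) h ≠ 0 := by
      intro h0
      apply hh
      apply MvPolynomial.funext (q := 0)
      intro z
      have h2 : (fun m => (z m - p i m) + p i m) = z := by funext m; ring
      have h3 := hsval (fun m => z m - p i m)
      rw [h0, map_zero, h2] at h3
      simp [← h3]
    obtain ⟨x, hx⟩ := HomAux.exists_eval_ne_zero (mul_ne_zero hh hsne)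
    rw [map_mul] at hx
    have hx1 : MvPolynomial.eval x h ≠ 0 := left_ne_zero_of_mul hx
    have hx2' : MvPolynomial.eval (fun m => x m + p i m) h ≠ 0 := by
      rw [← hsval]; exact right_ne_zero_of_mul hx
    have hq1 := hP x hx1
    have hq2 := hP _ hx2'
    have hdq : ∀ k, dotP (l k) (fun m => x m + p i m)
        = dotP (l k) x + (if k = i then 1 else 0) := by
      intro k
      rw [HomAux.dotP_add_right (l k) x (p i), hdual k i]
    have hgrad : gradLogPoly F (fun m => x m + p i m) = gradLogPoly F x := by
      funext m
      have hFe : MvPolynomial.eval (fun m => x m + p i m) F = MvPolynomial.eval x F := by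
        rw [hFeval, hFeval]
        refine Finset.prod_congr rfl fun k _ => ?_
        rcases eq_or_ne k i with rfl | hk
        · rw [hai0]; simp
        · rw [hdq k, if_neg hk, add_zero]
      have hPe : MvPolynomial.eval (fun m => x m + p i m) (pderiv m F)
          = MvPolynomial.eval x (pderiv m F) := by
        rw [hFpd, hFpd]
        refine Finset.sum_congr rfl fun k _ => ?_
        rcases eq_or_ne k i with rfl | hk
        · rw [hai0]; simp
        · rw [hdq k, if_neg hk, add_zero]
          congr 1
          refine Finset.prod_congr rfl fun r _ => ?_
          rcases eq_or_ne r i with rfl | hr2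
          · rw [hai0]; simp
          · rw [hdq r, if_neg hr2, add_zero]
      show MvPolynomial.eval _ (pderiv m F) / MvPolynomial.eval _ F
          = MvPolynomial.eval x (pderiv m F) / MvPolynomial.eval x F
      rw [hFe, hPe]
    have hxx : (fun m => x m + p i m) = x := by
      calc (fun m => x m + p i m) = Ψ.eval (gradLogPoly F (fun m => x m + p i m)) :=
            hq2.2.2.symm
        _ = Ψ.eval (gradLogPoly F x) := by rw [hgrad]
        _ = x := hq1.2.2
    have hpi0 : ∀ m, p i m = 0 := by
      intro m
      have h4 := congrFun hxx m
      exact add_eq_left.mp h4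
    have h5 := hdual i i
    rw [if_pos rfl] at h5
    have h6 : dotP (l i) (p i) = 0 := by
      simp [dotP, hpi0]
    rw [h6] at h5
    exact one_ne_zero h5.symm
  exact ⟨⟨hconv, hhom⟩, fun ha => ⟨hGenU ha, hGenQ ha⟩⟩
end

section
/- Let A ∪ B ∪ C be a partition of {1,…,m} and S a general positive definite real symmetric m×m matrix. Define K̂ := [S⁻¹_{A∪C}]^V + [S⁻¹_{B∪C}]^V − [S⁻¹_C]^V, where V = {1,…,m}. Then det K̂ = det(S_C) / (det(S_{A∪C})·det(S_{B∪C})). -/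
noncomputable section

/-- The principal submatrix of `S` with rows and columns indexed by `D`. -/
def subm {m : ℕ} (S : Matrix (Fin m) (Fin m) ℝ) (D : Finset (Fin m)) :
    Matrix D D ℝ :=
  S.submatrix (fun i => (i : Fin m)) (fun j => (j : Fin m))

/-- Padding a symmetric matrix indexed by `D ⊆ {1,…,m}` with zeros at all
positions having an index outside `D`. -/
def padded {m : ℕ} (D : Finset (Fin m)) (M : Matrix D D ℝ) :
    Matrix (Fin m) (Fin m) ℝ :=
  Matrix.of fun i j =>
    if hi : i ∈ D then (if hj : j ∈ D then M ⟨i, hi⟩ ⟨j, hj⟩ else 0) else 0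

end

open Matrix

/-- A principal submatrix (along an injective map) of a positive definite matrix is
positive definite. -/
lemma posDef_submatrix_inj {n N : Type*} [Fintype n] [Fintype N]
    {S : Matrix N N ℝ} (hS : S.PosDef) {f : n → N} (hf : Function.Injective f) :
    (S.submatrix f f).PosDef := by
  exact hS.submatrix hf

/-- Block facts about the inverse of a positive definite matrix written in `2×2` block form. -/
lemma schur_blocks {n k : Type*} [Fintype n] [Fintype k] [DecidableEq n] [DecidableEq k]
    (U : Matrix (n ⊕ k) (n ⊕ k) ℝ) (hU : U.PosDef) :
    (U⁻¹.submatrix Sum.inr Sum.inr)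
        - U⁻¹.submatrix Sum.inr Sum.inl * (U⁻¹.submatrix Sum.inl Sum.inl)⁻¹
          * U⁻¹.submatrix Sum.inl Sum.inr
      = (U.submatrix Sum.inr Sum.inr)⁻¹ ∧
    (U⁻¹.submatrix Sum.inl Sum.inl).det * U.det = (U.submatrix Sum.inr Sum.inr).det := by
  classical
  have hdet : IsUnit U.det := hU.det_pos.ne'.isUnit
  have hmul1 : U * U⁻¹ = 1 := Matrix.mul_nonsing_inv U hdet
  set ua := U.submatrix (Sum.inl : n → n ⊕ k) (Sum.inl : n → n ⊕ k) with hua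
  set ub := U.submatrix (Sum.inl : n → n ⊕ k) (Sum.inr : k → n ⊕ k) with hub
  set uc := U.submatrix (Sum.inr : k → n ⊕ k) (Sum.inl : n → n ⊕ k) with huc
  set ud := U.submatrix (Sum.inr : k → n ⊕ k) (Sum.inr : k → n ⊕ k) with hud
  set p := U⁻¹.submatrix (Sum.inl : n → n ⊕ k) (Sum.inl : n → n ⊕ k) with hp
  set q := U⁻¹.submatrix (Sum.inl : n → n ⊕ k) (Sum.inr : k → n ⊕ k) with hq
  set r := U⁻¹.submatrix (Sum.inr : k → n ⊕ k) (Sum.inl : n → n ⊕ k) with hr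
  set s := U⁻¹.submatrix (Sum.inr : k → n ⊕ k) (Sum.inr : k → n ⊕ k) with hs
  have hUb : U = Matrix.fromBlocks ua ub uc ud := by
    ext (i | i) (j | j) <;> rfl
  have hPb : U⁻¹ = Matrix.fromBlocks p q r s := by
    ext (i | i) (j | j) <;> rfl
  have hpPD : p.PosDef := posDef_submatrix_inj hU.inv Sum.inl_injective
  have hdPD : ud.PosDef := posDef_submatrix_inj hU Sum.inr_injective
  have hpdet : IsUnit p.det := hpPD.det_pos.ne'.isUnit
  have hddet : IsUnit ud.det := hdPD.det_pos.ne'.isUnit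
  have hmul : Matrix.fromBlocks (ua * p + ub * r) (ua * q + ub * s)
      (uc * p + ud * r) (uc * q + ud * s) = Matrix.fromBlocks 1 0 0 1 := by
    rw [← Matrix.fromBlocks_multiply, ← hUb, ← hPb, hmul1, Matrix.fromBlocks_one]
  rw [Matrix.fromBlocks_inj] at hmul
  obtain ⟨e11, e12, e21, e22⟩ := hmul
  have hdr : ud * r = -(uc * p) := by
    have h := e21
    rwa [add_eq_zero_iff_eq_neg'] at h
  have hds : ud * s = 1 - uc * q := eq_sub_iff_add_eq'.mpr e22
  have hpp : p * p⁻¹ = 1 := Matrix.mul_nonsing_inv p hpdet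
  have h5 : ud * (r * p⁻¹ * q) = -(uc * q) := by
    calc ud * (r * p⁻¹ * q) = ud * r * p⁻¹ * q := by simp only [Matrix.mul_assoc]
      _ = -(uc * p) * p⁻¹ * q := by rw [hdr]
      _ = -(uc * (p * p⁻¹) * q) := by simp only [Matrix.neg_mul, Matrix.mul_assoc]
      _ = -(uc * q) := by rw [hpp, Matrix.mul_one]
  have key1 : ud * (s - r * p⁻¹ * q) = 1 := by
    rw [Matrix.mul_sub, hds, h5, sub_neg_eq_add]
    abel
  have schur1 : s - r * p⁻¹ * q = ud⁻¹ := (Matrix.inv_eq_right_inv key1).symm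
  have hrr : r = -(ud⁻¹ * (uc * p)) := by
    have h : ud⁻¹ * (ud * r) = ud⁻¹ * -(uc * p) := by rw [hdr]
    rw [← Matrix.mul_assoc, Matrix.nonsing_inv_mul ud hddet, Matrix.one_mul] at h
    rw [h, Matrix.mul_neg]
  have key2 : (ua - ub * ud⁻¹ * uc) * p = 1 := by
    have h1 : (ua - ub * ud⁻¹ * uc) * p = ua * p - ub * (ud⁻¹ * (uc * p)) := by
      rw [Matrix.sub_mul]; simp only [Matrix.mul_assoc]
    rw [h1, ← neg_neg (ud⁻¹ * (uc * p)), ← hrr, Matrix.mul_neg, sub_neg_eq_add]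
    exact e11
  haveI : Invertible ud := ud.invertibleOfIsUnitDet hddet
  have hdetU : U.det = ud.det * (ua - ub * ud⁻¹ * uc).det := by
    rw [hUb, Matrix.det_fromBlocks₂₂, Matrix.invOf_eq_nonsing_inv]
  have h1 : (ua - ub * ud⁻¹ * uc).det * p.det = 1 := by
    rw [← Matrix.det_mul, key2, Matrix.det_one]
  refine ⟨schur1, ?_⟩
  rw [hdetU]
  calc p.det * (ud.det * (ua - ub * ud⁻¹ * uc).det)
      = ud.det * ((ua - ub * ud⁻¹ * uc).det * p.det) := by ring
    _ = ud.det := by rw [h1, mul_one]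

/-- The equivalence `↥A ⊕ ↥C ≃ ↥(A ∪ C)` for disjoint finsets. -/
def pairEquiv {m : ℕ} (A C : Finset (Fin m)) (hAC : Disjoint A C) :
    (A ⊕ C : Type) ≃ (A ∪ C : Finset (Fin m)) where
  toFun := Sum.elim (fun a => ⟨a, Finset.mem_union_left _ a.2⟩)
    (fun c => ⟨c, Finset.mem_union_right _ c.2⟩)
  invFun x := if h : (x : Fin m) ∈ A then Sum.inl ⟨x, h⟩
    else Sum.inr ⟨x, (Finset.mem_union.1 x.2).resolve_left h⟩
  left_inv := by
    rintro (a | c)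
    · simp
    · simp [Finset.disjoint_right.mp hAC c.2]
  right_inv x := by
    by_cases h : (x : Fin m) ∈ A <;> simp [h]

@[simp] lemma pairEquiv_inl {m : ℕ} (A C : Finset (Fin m)) (hAC : Disjoint A C) (a : A) :
    ((pairEquiv A C hAC (Sum.inl a) : (A ∪ C : Finset (Fin m))) : Fin m) = ↑a := rfl

@[simp] lemma pairEquiv_inr {m : ℕ} (A C : Finset (Fin m)) (hAC : Disjoint A C) (c : C) :
    ((pairEquiv A C hAC (Sum.inr c) : (A ∪ C : Finset (Fin m))) : Fin m) = ↑c := rfl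

/-- The equivalence `(↥A ⊕ ↥B) ⊕ ↥C ≃ Fin m` for a partition. -/
def tripEquiv {m : ℕ} (A B C : Finset (Fin m)) (hAB : Disjoint A B) (hAC : Disjoint A C)
    (hBC : Disjoint B C) (hunion : A ∪ B ∪ C = Finset.univ) :
    ((A ⊕ B) ⊕ C : Type) ≃ Fin m where
  toFun := Sum.elim (Sum.elim (fun a => ↑a) (fun b => ↑b)) (fun c => ↑c)
  invFun x :=
    if h1 : x ∈ A then Sum.inl (Sum.inl ⟨x, h1⟩)
    else if h2 : x ∈ B then Sum.inl (Sum.inr ⟨x, h2⟩)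
    else Sum.inr ⟨x, by
      have hx : x ∈ A ∪ B ∪ C := hunion ▸ Finset.mem_univ x
      simp only [Finset.mem_union, h1, h2, false_or] at hx
      exact hx⟩
  left_inv := by
    rintro ((a | b) | c)
    · simp
    · simp [Finset.disjoint_right.mp hAB b.2]
    · simp [Finset.disjoint_right.mp hAC c.2, Finset.disjoint_right.mp hBC c.2]
  right_inv x := by
    by_cases h1 : x ∈ A
    · simp [h1]
    · by_cases h2 : x ∈ B <;> simp [h1, h2]

@[simp] lemma tripEquiv_inl_inl {m : ℕ} (A B C : Finset (Fin m)) (h1 : Disjoint A B)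
    (h2 : Disjoint A C) (h3 : Disjoint B C) (h4 : A ∪ B ∪ C = Finset.univ) (a : A) :
    tripEquiv A B C h1 h2 h3 h4 (Sum.inl (Sum.inl a)) = ↑a := rfl

@[simp] lemma tripEquiv_inl_inr {m : ℕ} (A B C : Finset (Fin m)) (h1 : Disjoint A B)
    (h2 : Disjoint A C) (h3 : Disjoint B C) (h4 : A ∪ B ∪ C = Finset.univ) (b : B) :
    tripEquiv A B C h1 h2 h3 h4 (Sum.inl (Sum.inr b)) = ↑b := rfl

@[simp] lemma tripEquiv_inr {m : ℕ} (A B C : Finset (Fin m)) (h1 : Disjoint A B)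
    (h2 : Disjoint A C) (h3 : Disjoint B C) (h4 : A ∪ B ∪ C = Finset.univ) (c : C) :
    tripEquiv A B C h1 h2 h3 h4 (Sum.inr c) = ↑c := rfl

lemma padded_apply_mem {m : ℕ} (D : Finset (Fin m)) (M : Matrix D D ℝ) {i j : Fin m}
    (hi : i ∈ D) (hj : j ∈ D) : padded D M i j = M ⟨i, hi⟩ ⟨j, hj⟩ := by
  simp [padded, hi, hj]

lemma padded_apply_not_left {m : ℕ} (D : Finset (Fin m)) (M : Matrix D D ℝ) {i j : Fin m}
    (hi : i ∉ D) : padded D M i j = 0 := by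
  simp [padded, hi]

lemma padded_apply_not_right {m : ℕ} (D : Finset (Fin m)) (M : Matrix D D ℝ) {i j : Fin m}
    (hj : j ∉ D) : padded D M i j = 0 := by
  simp [padded, hj]

/-- **Lemma (determinant formula for a decomposition).**
Let `A ∪ B ∪ C` be a partition of `{1,…,m}` and `S` a positive definite symmetric
real `m×m` matrix.  With `K̂ := [S⁻¹_{A∪C}]^V + [S⁻¹_{B∪C}]^V − [S⁻¹_C]^V` we have
`det K̂ = det S_C / (det S_{A∪C} · det S_{B∪C})`. -/
theorem det_of_padded_inverses {m : ℕ} (A B C : Finset (Fin m))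
    (hAB : Disjoint A B) (hAC : Disjoint A C) (hBC : Disjoint B C)
    (hunion : A ∪ B ∪ C = Finset.univ)
    (S : Matrix (Fin m) (Fin m) ℝ) (hS : S.PosDef) :
    (padded (A ∪ C) (subm S (A ∪ C))⁻¹ + padded (B ∪ C) (subm S (B ∪ C))⁻¹
        - padded C (subm S C)⁻¹).det
      = (subm S C).det / ((subm S (A ∪ C)).det * (subm S (B ∪ C)).det) := by
  classical
  have hsubAC : (subm S (A ∪ C)).PosDef := posDef_submatrix_inj hS Subtype.coe_injective
  have hsubBC : (subm S (B ∪ C)).PosDef := posDef_submatrix_inj hS Subtype.coe_injective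
  have hsubC : (subm S C).PosDef := posDef_submatrix_inj hS Subtype.coe_injective
  set U := (subm S (A ∪ C)).submatrix (pairEquiv A C hAC) (pairEquiv A C hAC) with hUdef
  set V := (subm S (B ∪ C)).submatrix (pairEquiv B C hBC) (pairEquiv B C hBC) with hVdef
  have hUPD : U.PosDef := posDef_submatrix_inj hsubAC (pairEquiv A C hAC).injective
  have hVPD : V.PosDef := posDef_submatrix_inj hsubBC (pairEquiv B C hBC).injective
  have hUinv : U⁻¹ = (subm S (A ∪ C))⁻¹.submatrix (pairEquiv A C hAC) (pairEquiv A C hAC) :=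
    Matrix.inv_submatrix_equiv _ _ _
  have hVinv : V⁻¹ = (subm S (B ∪ C))⁻¹.submatrix (pairEquiv B C hBC) (pairEquiv B C hBC) :=
    Matrix.inv_submatrix_equiv _ _ _
  have hUd : U.submatrix Sum.inr Sum.inr = subm S C := by ext i j; rfl
  have hVd : V.submatrix Sum.inr Sum.inr = subm S C := by ext i j; rfl
  obtain ⟨sch1U, sch2U⟩ := schur_blocks U hUPD
  obtain ⟨sch1V, sch2V⟩ := schur_blocks V hVPD
  rw [hUd] at sch1U sch2U
  rw [hVd] at sch1V sch2V
  have hpU : (U⁻¹.submatrix (Sum.inl : {x // x ∈ A} → _) Sum.inl).PosDef :=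
    posDef_submatrix_inj hUPD.inv Sum.inl_injective
  have hpV : (V⁻¹.submatrix (Sum.inl : {x // x ∈ B} → _) Sum.inl).PosDef :=
    posDef_submatrix_inj hVPD.inv Sum.inl_injective
  -- membership facts
  have hA_AC : ∀ a : A, (↑a : Fin m) ∈ A ∪ C := fun a => Finset.mem_union_left _ a.2
  have hB_BC : ∀ b : B, (↑b : Fin m) ∈ B ∪ C := fun b => Finset.mem_union_left _ b.2
  have hC_AC : ∀ c : C, (↑c : Fin m) ∈ A ∪ C := fun c => Finset.mem_union_right _ c.2
  have hC_BC : ∀ c : C, (↑c : Fin m) ∈ B ∪ C := fun c => Finset.mem_union_right _ c.2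
  have hA_nBC : ∀ a : A, (↑a : Fin m) ∉ B ∪ C := fun a => by
    simp [Finset.mem_union, Finset.disjoint_left.mp hAB a.2, Finset.disjoint_left.mp hAC a.2]
  have hA_nC : ∀ a : A, (↑a : Fin m) ∉ C := fun a => Finset.disjoint_left.mp hAC a.2
  have hB_nAC : ∀ b : B, (↑b : Fin m) ∉ A ∪ C := fun b => by
    simp [Finset.mem_union, Finset.disjoint_right.mp hAB b.2, Finset.disjoint_left.mp hBC b.2]
  have hB_nC : ∀ b : B, (↑b : Fin m) ∉ C := fun b => Finset.disjoint_left.mp hBC b.2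
  have hC_mem : ∀ c : C, (↑c : Fin m) ∈ C := fun c => c.2
  -- the block decomposition
  have hKblock : (padded (A ∪ C) (subm S (A ∪ C))⁻¹ + padded (B ∪ C) (subm S (B ∪ C))⁻¹
        - padded C (subm S C)⁻¹).submatrix (tripEquiv A B C hAB hAC hBC hunion)
          (tripEquiv A B C hAB hAC hBC hunion) =
      Matrix.fromBlocks
        (Matrix.fromBlocks (U⁻¹.submatrix Sum.inl Sum.inl) 0 0 (V⁻¹.submatrix Sum.inl Sum.inl))
        (Matrix.fromRows (U⁻¹.submatrix Sum.inl Sum.inr) (V⁻¹.submatrix Sum.inl Sum.inr))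
        (Matrix.fromCols (U⁻¹.submatrix Sum.inr Sum.inl) (V⁻¹.submatrix Sum.inr Sum.inl))
        (U⁻¹.submatrix Sum.inr Sum.inr + V⁻¹.submatrix Sum.inr Sum.inr - (subm S C)⁻¹) := by
    ext x y
    rcases x with (i | i) | i <;> rcases y with (j | j) | j <;>
      simp only [Matrix.submatrix_apply, tripEquiv_inl_inl, tripEquiv_inl_inr, tripEquiv_inr,
        Matrix.add_apply, Matrix.sub_apply, Matrix.fromBlocks_apply₁₁, Matrix.fromBlocks_apply₁₂,
        Matrix.fromBlocks_apply₂₁, Matrix.fromBlocks_apply₂₂, Matrix.fromRows_apply_inl,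
        Matrix.fromRows_apply_inr, Matrix.fromCols_apply_inl, Matrix.fromCols_apply_inr,
        Matrix.zero_apply, hUinv, hVinv]
    · rw [padded_apply_mem _ _ (hA_AC i) (hA_AC j), padded_apply_not_left _ _ (hA_nBC i),
        padded_apply_not_left _ _ (hA_nC i)]
      simp only [add_zero, sub_zero, Matrix.submatrix_apply]
      rfl
    · rw [padded_apply_not_right _ _ (hB_nAC j), padded_apply_not_left _ _ (hA_nBC i),
        padded_apply_not_left _ _ (hA_nC i)]
      simp
    · rw [padded_apply_mem _ _ (hA_AC i) (hC_AC j), padded_apply_not_left _ _ (hA_nBC i),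
        padded_apply_not_left _ _ (hA_nC i)]
      simp only [add_zero, sub_zero, Matrix.submatrix_apply]
      rfl
    · rw [padded_apply_not_left _ _ (hB_nAC i), padded_apply_not_right _ _ (hA_nBC j),
        padded_apply_not_left _ _ (hB_nC i)]
      simp
    · rw [padded_apply_not_left _ _ (hB_nAC i), padded_apply_mem _ _ (hB_BC i) (hB_BC j),
        padded_apply_not_left _ _ (hB_nC i)]
      simp only [zero_add, sub_zero, Matrix.submatrix_apply]
      rfl
    · rw [padded_apply_not_left _ _ (hB_nAC i), padded_apply_mem _ _ (hB_BC i) (hC_BC j),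
        padded_apply_not_left _ _ (hB_nC i)]
      simp only [zero_add, sub_zero, Matrix.submatrix_apply]
      rfl
    · rw [padded_apply_mem _ _ (hC_AC i) (hA_AC j), padded_apply_not_right _ _ (hA_nBC j),
        padded_apply_not_right _ _ (hA_nC j)]
      simp only [add_zero, sub_zero, Matrix.submatrix_apply]
      rfl
    · rw [padded_apply_not_right _ _ (hB_nAC j), padded_apply_mem _ _ (hC_BC i) (hB_BC j),
        padded_apply_not_right _ _ (hB_nC j)]
      simp only [zero_add, sub_zero, Matrix.submatrix_apply]
      rfl
    · rw [padded_apply_mem _ _ (hC_AC i) (hC_AC j), padded_apply_mem _ _ (hC_BC i) (hC_BC j),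
        padded_apply_mem _ _ (hC_mem i) (hC_mem j)]
      rfl
  rw [← Matrix.det_submatrix_equiv_self (tripEquiv A B C hAB hAC hBC hunion), hKblock]
  haveI : Invertible (Matrix.fromBlocks (U⁻¹.submatrix Sum.inl Sum.inl) 0 0
      (V⁻¹.submatrix Sum.inl Sum.inl)) := by
    apply Matrix.invertibleOfIsUnitDet
    rw [Matrix.det_fromBlocks_zero₂₁]
    exact (mul_pos hpU.det_pos hpV.det_pos).ne'.isUnit
  rw [Matrix.det_fromBlocks₁₁]
  have hXinv : ⅟(Matrix.fromBlocks (U⁻¹.submatrix Sum.inl Sum.inl) 0 0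
      (V⁻¹.submatrix Sum.inl Sum.inl)) =
      Matrix.fromBlocks (U⁻¹.submatrix Sum.inl Sum.inl)⁻¹ 0 0
        (V⁻¹.submatrix Sum.inl Sum.inl)⁻¹ := by
    rw [Matrix.invOf_eq_nonsing_inv]
    apply Matrix.inv_eq_right_inv
    rw [Matrix.fromBlocks_multiply]
    simp only [Matrix.mul_zero, Matrix.zero_mul, add_zero, zero_add,
      Matrix.mul_nonsing_inv _ hpU.det_pos.ne'.isUnit,
      Matrix.mul_nonsing_inv _ hpV.det_pos.ne'.isUnit]
    exact Matrix.fromBlocks_one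
  rw [hXinv, Matrix.fromCols_mul_fromBlocks, Matrix.fromCols_mul_fromRows]
  simp only [Matrix.mul_zero, add_zero, zero_add]
  have hW : (U⁻¹.submatrix Sum.inr Sum.inr + V⁻¹.submatrix Sum.inr Sum.inr - (subm S C)⁻¹)
      - (U⁻¹.submatrix Sum.inr Sum.inl * (U⁻¹.submatrix Sum.inl Sum.inl)⁻¹ *
          U⁻¹.submatrix Sum.inl Sum.inr +
        V⁻¹.submatrix Sum.inr Sum.inl * (V⁻¹.submatrix Sum.inl Sum.inl)⁻¹ *
          V⁻¹.submatrix Sum.inl Sum.inr)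
      = (subm S C)⁻¹ := by
    calc (U⁻¹.submatrix Sum.inr Sum.inr + V⁻¹.submatrix Sum.inr Sum.inr - (subm S C)⁻¹)
          - (U⁻¹.submatrix Sum.inr Sum.inl * (U⁻¹.submatrix Sum.inl Sum.inl)⁻¹ *
              U⁻¹.submatrix Sum.inl Sum.inr +
            V⁻¹.submatrix Sum.inr Sum.inl * (V⁻¹.submatrix Sum.inl Sum.inl)⁻¹ *
              V⁻¹.submatrix Sum.inl Sum.inr)
        = (U⁻¹.submatrix Sum.inr Sum.inr - U⁻¹.submatrix Sum.inr Sum.inl *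
            (U⁻¹.submatrix Sum.inl Sum.inl)⁻¹ * U⁻¹.submatrix Sum.inl Sum.inr) +
          (V⁻¹.submatrix Sum.inr Sum.inr - V⁻¹.submatrix Sum.inr Sum.inl *
            (V⁻¹.submatrix Sum.inl Sum.inl)⁻¹ * V⁻¹.submatrix Sum.inl Sum.inr) -
          (subm S C)⁻¹ := by abel
      _ = (subm S C)⁻¹ := by rw [sch1U, sch1V]; abel
  rw [hW, Matrix.det_fromBlocks_zero₂₁, Matrix.det_nonsing_inv]
  have hUdet : U.det = (subm S (A ∪ C)).det := Matrix.det_submatrix_equiv_self _ _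
  have hVdet : V.det = (subm S (B ∪ C)).det := Matrix.det_submatrix_equiv_self _ _
  have hdac : (subm S (A ∪ C)).det ≠ 0 := hsubAC.det_pos.ne'
  have hdbc : (subm S (B ∪ C)).det ≠ 0 := hsubBC.det_pos.ne'
  have hdc : (subm S C).det ≠ 0 := hsubC.det_pos.ne'
  rw [hUdet] at sch2U
  rw [hVdet] at sch2V
  rw [Ring.inverse_eq_inv]
  have e1 : (U⁻¹.submatrix Sum.inl Sum.inl).det
      = (subm S C).det / (subm S (A ∪ C)).det := by
    rw [eq_div_iff hdac]; exact sch2U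
  have e2 : (V⁻¹.submatrix Sum.inl Sum.inl).det
      = (subm S C).det / (subm S (B ∪ C)).det := by
    rw [eq_div_iff hdbc]; exact sch2V
  rw [e1, e2]
  field_simp
end

section
/- Let G = (V,E) be a directed acyclic graph and S a general positive definite symmetric |V|×|V| matrix. Define K̂ := Σ_{v∈V} K_{[v|pa(v)]}, where K_{[v|pa(v)]} := [S⁻¹_{{v}∪pa(v)}]^V − [S⁻¹_{pa(v)}]^V. Then det K̂ = ∏_{v∈V} det(S_{pa(v)}) / det(S_{{v}∪pa(v)}). -/
noncomputable section

/-- The set of parents of a node `v` in the directed graph `E`. -/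
def parents {m : ℕ} (E : Fin m → Fin m → Prop) [DecidableRel E] (v : Fin m) :
    Finset (Fin m) :=
  Finset.univ.filter (fun i => E i v)

end

section helpers
open Matrix

variable {m : ℕ} {S : Matrix (Fin m) (Fin m) ℝ}

lemma padded_apply {D : Finset (Fin m)} (M : Matrix D D ℝ) {i j : Fin m}
    (hi : i ∈ D) (hj : j ∈ D) : padded D M i j = M ⟨i, hi⟩ ⟨j, hj⟩ := by
  simp [padded, hi, hj]

lemma padded_eq_zero {D : Finset (Fin m)} (M : Matrix D D ℝ) {i j : Fin m}
    (h : i ∉ D ∨ j ∉ D) : padded D M i j = 0 := by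
  rcases h with h | h <;> simp [padded, h]

lemma sum_subtype_eq (D : Finset (Fin m)) (f : Fin m → ℝ) (h : ∀ i ∉ D, f i = 0) :
    ∑ i : Fin m, f i = ∑ i : D, f ↑i := by
  rw [Finset.sum_coe_sort]
  exact (Finset.sum_subset (Finset.subset_univ D) (fun x _ hx => h x hx)).symm

lemma hsym (hS : S.PosDef) (i j : Fin m) : S i j = S j i := by
  have := congrFun (congrFun hS.1 i) j
  simpa [Matrix.conjTranspose_apply] using this.symm

lemma subm_posDef (hS : S.PosDef) (D : Finset (Fin m)) : (subm S D).PosDef := by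
  refine Matrix.PosDef.of_dotProduct_mulVec_pos ?_ ?_
  · ext i j
    simp only [Matrix.conjTranspose_apply, subm, Matrix.submatrix_apply, star_trivial]
    exact hsym hS _ _
  · intro x hx
    set y : Fin m → ℝ := fun i => if h : i ∈ D then x ⟨i, h⟩ else 0 with hy
    have hyx : ∀ i : D, y ↑i = x i := fun i => by simp [hy, i.2]
    have hy0 : ∀ i ∉ D, y i = 0 := fun i hi => by simp [hy, hi]
    have hyne : y ≠ 0 := by
      intro h
      apply hx
      funext i
      have := congrFun h ↑i
      rw [hyx i] at this
      exact this
    have hpos := hS.dotProduct_mulVec_pos hyne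
    have : dotProduct (star x) (subm S D *ᵥ x) = dotProduct (star y) (S *ᵥ y) := by
      simp only [star_trivial, dotProduct, Matrix.mulVec, dotProduct]
      rw [sum_subtype_eq D (fun i => y i * ∑ j, S i j * y j)
        (fun i hi => by simp [hy0 i hi])]
      refine Finset.sum_congr rfl fun i _ => ?_
      rw [hyx i]
      congr 1
      rw [sum_subtype_eq D (fun j => S ↑i j * y j)
        (fun j hj => by simp [hy0 j hj])]
      exact Finset.sum_congr rfl fun j _ => by rw [hyx j]; rfl
    rw [this]
    exact hpos

lemma subm_det_pos (hS : S.PosDef) (D : Finset (Fin m)) : 0 < (subm S D).det :=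
  (subm_posDef hS D).det_pos

lemma subm_inv_mul (hS : S.PosDef) (D : Finset (Fin m)) :
    (subm S D)⁻¹ * subm S D = 1 :=
  Matrix.nonsing_inv_mul _ (subm_det_pos hS D).ne'.isUnit

lemma subm_mul_inv (hS : S.PosDef) (D : Finset (Fin m)) :
    subm S D * (subm S D)⁻¹ = 1 :=
  Matrix.mul_nonsing_inv _ (subm_det_pos hS D).ne'.isUnit

lemma padded_inv_symm (hS : S.PosDef) (D : Finset (Fin m)) (i j : Fin m) :
    padded D (subm S D)⁻¹ i j = padded D (subm S D)⁻¹ j i := by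
  by_cases hi : i ∈ D
  · by_cases hj : j ∈ D
    · rw [padded_apply _ hi hj, padded_apply _ hj hi]
      have hsub : (subm S D)ᵀ = subm S D := by
        ext a b
        simp only [Matrix.transpose_apply, subm, Matrix.submatrix_apply]
        exact hsym hS _ _
      have : ((subm S D)⁻¹)ᵀ = (subm S D)⁻¹ := by
        rw [Matrix.transpose_nonsing_inv, hsub]
      exact congrFun (congrFun this ⟨j, hj⟩) ⟨i, hi⟩
    · rw [padded_eq_zero _ (Or.inr hj), padded_eq_zero _ (Or.inl hj)]
  · rw [padded_eq_zero _ (Or.inl hi), padded_eq_zero _ (Or.inr hi)]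

end helpers

section defs
noncomputable def bvec {m : ℕ} (S : Matrix (Fin m) (Fin m) ℝ) (A : Finset (Fin m)) (v : Fin m) :
    Fin m → ℝ :=
  fun i => (if i = v then 1 else 0) - ∑ j : Fin m, padded A (subm S A)⁻¹ i j * S j v

noncomputable def svar {m : ℕ} (S : Matrix (Fin m) (Fin m) ℝ) (A : Finset (Fin m)) (v : Fin m) : ℝ :=
  ∑ k : Fin m, bvec S A v k * S k v
end defs

section pervertex
open Matrix
variable {m : ℕ} {S : Matrix (Fin m) (Fin m) ℝ} {A : Finset (Fin m)} {v : Fin m}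

lemma bvec_self (hvA : v ∉ A) : bvec S A v v = 1 := by
  have : ∀ j : Fin m, padded A (subm S A)⁻¹ v j * S j v = 0 := fun j => by
    rw [padded_eq_zero _ (Or.inl hvA)]; ring
  simp [bvec, this]

lemma bvec_zero {i : Fin m} (hi : i ∉ insert v A) : bvec S A v i = 0 := by
  have hiv : i ≠ v := fun h => hi (h ▸ Finset.mem_insert_self v A)
  have hiA : i ∉ A := fun h => hi (Finset.mem_insert_of_mem h)
  have : ∀ j : Fin m, padded A (subm S A)⁻¹ i j * S j v = 0 := fun j => by
    rw [padded_eq_zero _ (Or.inl hiA)]; ring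
  simp [bvec, hiv, this]

lemma PS_id (hS : S.PosDef) {i j : Fin m} (hi : i ∈ A) (hj : j ∈ A) :
    ∑ k : Fin m, padded A (subm S A)⁻¹ i k * S k j = if i = j then 1 else 0 := by
  rw [sum_subtype_eq A _ (fun k hk => by rw [padded_eq_zero _ (Or.inr hk)]; ring)]
  have : ∀ k : ↥A, padded A (subm S A)⁻¹ i ↑k * S ↑k j
      = (subm S A)⁻¹ ⟨i, hi⟩ k * subm S A k ⟨j, hj⟩ := fun k => by
    rw [padded_apply _ hi k.2]; rfl
  rw [Finset.sum_congr rfl (fun k _ => this k), ← Matrix.mul_apply, subm_inv_mul hS,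
    Matrix.one_apply]
  simp [Subtype.ext_iff]

lemma cvec_zero (hS : S.PosDef) (hvA : v ∉ A) {j : Fin m} (hj : j ∈ A) :
    ∑ k : Fin m, bvec S A v k * S k j = 0 := by
  have expand : ∑ k : Fin m, bvec S A v k * S k j
      = S v j - ∑ k : Fin m, ∑ l : Fin m, padded A (subm S A)⁻¹ k l * S l v * S k j := by
    simp only [bvec, sub_mul, Finset.sum_sub_distrib, ite_mul, one_mul, zero_mul,
      Finset.sum_ite_eq' Finset.univ v fun k => S k j, Finset.mem_univ, if_true,
      Finset.sum_mul]
  rw [expand, Finset.sum_comm]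
  have inner : ∀ l : Fin m, (∑ k : Fin m, padded A (subm S A)⁻¹ k l * S l v * S k j)
      = if l = j then S l v else 0 := by
    intro l
    by_cases hl : l ∈ A
    · have : ∀ k : Fin m, padded A (subm S A)⁻¹ k l * S l v * S k j
          = padded A (subm S A)⁻¹ l k * S k j * S l v := fun k => by
        rw [padded_inv_symm hS]; ring
      rw [Finset.sum_congr rfl fun k _ => this k, ← Finset.sum_mul, PS_id hS hl hj]
      by_cases hlj : l = j <;> simp [hlj]
    · have : ∀ k : Fin m, padded A (subm S A)⁻¹ k l * S l v * S k j = 0 := fun k => by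
        rw [padded_eq_zero _ (Or.inr hl)]; ring
      have hlj : l ≠ j := fun h => hl (h ▸ hj)
      simp [this, hlj]
  rw [Finset.sum_congr rfl fun l _ => inner l, Finset.sum_ite_eq' Finset.univ j fun l => S l v]
  simp [hsym hS v j]

section svar
open Matrix
variable {m : ℕ} {S : Matrix (Fin m) (Fin m) ℝ} {A : Finset (Fin m)} {v : Fin m}

lemma svar_quadform (hS : S.PosDef) (hvA : v ∉ A) :
    svar S A v = ∑ k : Fin m, bvec S A v k * (∑ l : Fin m, bvec S A v l * S l k) := by
  have key : ∀ k : Fin m, bvec S A v k * (∑ l : Fin m, bvec S A v l * S l k)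
      = if k = v then svar S A v else 0 := by
    intro k
    by_cases hk : k = v
    · subst hk
      rw [bvec_self hvA, if_pos rfl, one_mul]; rfl
    · rw [if_neg hk]
      by_cases hkA : k ∈ A
      · rw [cvec_zero hS hvA hkA, mul_zero]
      · rw [bvec_zero (by simp [hk, hkA]), zero_mul]
  rw [Finset.sum_congr rfl fun k _ => key k, Finset.sum_ite_eq' Finset.univ v
    fun _ => svar S A v]
  simp

lemma svar_pos (hS : S.PosDef) (hvA : v ∉ A) : 0 < svar S A v := by
  rw [svar_quadform hS hvA]
  have hb : bvec S A v ≠ 0 := by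
    intro h
    have := congrFun h v
    rw [bvec_self hvA] at this
    simpa using this
  have := hS.dotProduct_mulVec_pos hb
  have heq : star (bvec S A v) ⬝ᵥ (S *ᵥ bvec S A v)
      = ∑ k : Fin m, bvec S A v k * (∑ l : Fin m, bvec S A v l * S l k) := by
    simp only [star_trivial, dotProduct, Matrix.mulVec, dotProduct]
    refine Finset.sum_congr rfl fun k _ => ?_
    congr 1
    exact Finset.sum_congr rfl fun l _ => by rw [hsym hS k l]; ring
  rw [heq] at this
  exact this

lemma padded_insert_eq (hS : S.PosDef) (hvA : v ∉ A) :
    padded (insert v A) (subm S (insert v A))⁻¹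
      = padded A (subm S A)⁻¹
        + (svar S A v)⁻¹ • Matrix.of (fun i j => bvec S A v i * bvec S A v j) := by
  set b := bvec S A v with hb
  set s := svar S A v with hs
  have hs0 : s ≠ 0 := (svar_pos hS hvA).ne'
  set N : Matrix (Fin m) (Fin m) ℝ :=
    padded A (subm S A)⁻¹ + s⁻¹ • Matrix.of (fun i j => b i * b j) with hNdef
  have hN0 : ∀ i j : Fin m, (i ∉ insert v A ∨ j ∉ insert v A) → N i j = 0 := by
    intro i j hij
    have hb0 : b i * b j = 0 := by
      rcases hij with h | h
      · rw [hb, bvec_zero h, zero_mul]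
      · rw [hb, bvec_zero h, mul_zero]
    have hP0 : padded A (subm S A)⁻¹ i j = 0 := by
      refine padded_eq_zero _ ?_
      rcases hij with h | h
      · exact Or.inl fun hA => h (Finset.mem_insert_of_mem hA)
      · exact Or.inr fun hA => h (Finset.mem_insert_of_mem hA)
    simp [hNdef, hP0, hb0]
  have hNapply : ∀ i j : Fin m,
      N i j = padded A (subm S A)⁻¹ i j + s⁻¹ * (b i * b j) := fun i j => rfl
  have hPSb : ∀ i : Fin m, ∑ k : Fin m, padded A (subm S A)⁻¹ i k * S k v
      = (if i = v then 1 else 0) - b i := by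
    intro i; rw [hb]; simp only [bvec]; ring
  have hmul : subm N (insert v A) * subm S (insert v A) = 1 := by
    ext p q
    rw [Matrix.mul_apply]
    have step1 : ∑ k : ↥(insert v A), subm N (insert v A) p k * subm S (insert v A) k q
        = ∑ k : Fin m, N ↑p k * S k ↑q :=
      (sum_subtype_eq _ (fun k => N ↑p k * S k ↑q)
        (fun k hk => by show N ↑p k * S k ↑q = 0; rw [hN0 _ _ (Or.inr hk)]; ring)).symm
    rw [step1]
    have step2 : ∑ k : Fin m, N ↑p k * S k ↑q
        = (∑ k : Fin m, padded A (subm S A)⁻¹ ↑p k * S k ↑q)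
          + s⁻¹ * b ↑p * (∑ k : Fin m, b k * S k ↑q) := by
      rw [Finset.mul_sum]
      rw [← Finset.sum_add_distrib]
      refine Finset.sum_congr rfl fun k _ => ?_
      rw [hNapply]; ring
    rw [step2]
    by_cases hq : (↑q : Fin m) = v
    · rw [hq, hPSb]
      have : (∑ k : Fin m, b k * S k v) = s := rfl
      rw [this]
      have hpq : (p = q) = ((↑p : Fin m) = v) := by
        rw [Subtype.ext_iff, hq]
      rw [Matrix.one_apply]
      field_simp [hpq]
      simp [hpq]
    · have hqA : (↑q : Fin m) ∈ A := by
        rcases Finset.mem_insert.mp q.2 with h | h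
        · exact absurd h hq
        · exact h
      rw [cvec_zero hS hvA hqA, mul_zero, add_zero]
      by_cases hp : (↑p : Fin m) = v
      · have : ∀ k : Fin m, padded A (subm S A)⁻¹ ↑p k * S k ↑q = 0 := fun k => by
          rw [hp, padded_eq_zero _ (Or.inl hvA)]; ring
        rw [Finset.sum_congr rfl fun k _ => this k]
        have hpq : p ≠ q := fun h => hq (h ▸ hp)
        simp [Matrix.one_apply, hpq]
      · have hpA : (↑p : Fin m) ∈ A := by
          rcases Finset.mem_insert.mp p.2 with h | h
          · exact absurd h hp
          · exact h
        rw [PS_id hS hpA hqA, Matrix.one_apply]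
        by_cases hpq : p = q
        · subst hpq; simp
        · rw [if_neg hpq, if_neg (fun h => hpq (Subtype.ext h))]
  have hinv : (subm S (insert v A))⁻¹ = subm N (insert v A) := Matrix.inv_eq_left_inv hmul
  ext i j
  show padded (insert v A) (subm S (insert v A))⁻¹ i j = N i j
  by_cases hi : i ∈ insert v A
  · by_cases hj : j ∈ insert v A
    · rw [padded_apply _ hi hj, hinv]; rfl
    · rw [padded_eq_zero _ (Or.inr hj), hN0 _ _ (Or.inr hj)]
  · rw [padded_eq_zero _ (Or.inl hi), hN0 _ _ (Or.inl hi)]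
end svar

section detid
open Matrix
variable {m : ℕ} {S : Matrix (Fin m) (Fin m) ℝ} {A : Finset (Fin m)} {v : Fin m}

lemma det_insert (hS : S.PosDef) (hvA : v ∉ A) :
    (subm S (insert v A)).det = svar S A v * (subm S A).det := by
  classical
  set b := bvec S A v with hb
  set D : Finset (Fin m) := insert v A with hD
  have hvD : v ∈ D := Finset.mem_insert_self v A
  set T : Matrix ↥D ↥D ℝ := subm S D with hT
  set U : Matrix ↥D ↥D ℝ :=
    Matrix.of (fun i j => if (↑j : Fin m) = v then b ↑i else (if i = j then 1 else 0)) with hU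
  have hdetU : U.det = 1 := by
    have hUeq : U = 1 + Matrix.replicateCol Unit (fun i : ↥D => b ↑i - if (↑i : Fin m) = v then (1:ℝ) else 0)
        * Matrix.replicateRow Unit (fun j : ↥D => if (↑j : Fin m) = v then (1:ℝ) else 0) := by
      ext i j
      simp only [hU, Matrix.of_apply, Matrix.add_apply, Matrix.one_apply, Matrix.mul_apply,
        Finset.univ_unique, Finset.sum_singleton, Matrix.replicateCol_apply, Matrix.replicateRow_apply]
      split_ifs <;> first
        | ring1
        | (exfalso; rename_i hc1 hc2 hc3; exact hc3 ((Subtype.ext_iff.mp hc2).trans hc1))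
        | (exfalso; rename_i hc1 hc2 hc3; exact hc2 (Subtype.ext (hc3.trans hc1.symm)))
    rw [hUeq, Matrix.det_one_add_replicateCol_mul_replicateRow]
    have : (fun j : ↥D => if (↑j : Fin m) = v then (1:ℝ) else 0)
        ⬝ᵥ (fun i : ↥D => b ↑i - if (↑i : Fin m) = v then (1:ℝ) else 0) = 0 := by
      simp only [dotProduct]
      rw [Fintype.sum_eq_single (⟨v, hvD⟩ : ↥D)]
      · simp [bvec_self hvA, hb]
      · intro x hx
        have : (↑x : Fin m) ≠ v := fun h => hx (Subtype.ext h)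
        simp [this]
    rw [this, add_zero]
  set W : Matrix ↥D ↥D ℝ := Matrix.of (fun i j =>
    if (↑i : Fin m) = v then (if (↑j : Fin m) = v then svar S A v else 0)
    else (if (↑j : Fin m) = v then 0 else S ↑i ↑j)) with hW
  have hcongr : Uᵀ * (T * U) = W := by
    have hTU : ∀ i j : ↥D, (T * U) i j
        = if (↑j : Fin m) = v then (∑ k : Fin m, b k * S k ↑i) else S ↑i ↑j := by
      intro i j
      rw [Matrix.mul_apply]
      by_cases hj : (↑j : Fin m) = v
      · rw [if_pos hj]
        have : ∀ k : ↥D, T i k * U k j = S ↑i ↑k * b ↑k := fun k => by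
          show T i k * (if (↑j : Fin m) = v then b ↑k else _) = _
          rw [if_pos hj]; rfl
        rw [Finset.sum_congr rfl fun k _ => this k]
        rw [← sum_subtype_eq D (fun k => S ↑i k * b k)
          (fun k hk => by show S ↑i k * b k = 0; rw [hb, bvec_zero hk]; ring)]
        exact Finset.sum_congr rfl fun k _ => by rw [hsym hS ↑i k]; ring
      · rw [if_neg hj]
        have : ∀ k : ↥D, T i k * U k j = if k = j then S ↑i ↑k else 0 := fun k => by
          show T i k * (if (↑j : Fin m) = v then b ↑k else _) = _
          rw [if_neg hj]
          by_cases hkj : k = j <;> simp [hkj, hT, subm]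
        rw [Finset.sum_congr rfl fun k _ => this k]
        simp
    ext i j
    rw [Matrix.mul_apply]
    by_cases hi : (↑i : Fin m) = v
    · have : ∀ k : ↥D, Uᵀ i k * (T * U) k j = b ↑k * (T * U) k j := fun k => by
        rw [Matrix.transpose_apply]
        show (if (↑i : Fin m) = v then b ↑k else _) * _ = _
        rw [if_pos hi]
      rw [Finset.sum_congr rfl fun k _ => this k]
      by_cases hj : (↑j : Fin m) = v
      · have : ∀ k : ↥D, b ↑k * (T * U) k j = b ↑k * (∑ l : Fin m, b l * S l ↑k) :=
          fun k => by rw [hTU, if_pos hj]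
        rw [Finset.sum_congr rfl fun k _ => this k]
        rw [← sum_subtype_eq D (fun k => b k * (∑ l : Fin m, b l * S l k))
          (fun k hk => by show b k * _ = 0; rw [hb, bvec_zero hk]; ring)]
        rw [hb, ← svar_quadform hS hvA]
        simp [hW, hi, hj]
      · have : ∀ k : ↥D, b ↑k * (T * U) k j = b ↑k * S ↑k ↑j := fun k => by
          rw [hTU, if_neg hj]
        rw [Finset.sum_congr rfl fun k _ => this k]
        rw [← sum_subtype_eq D (fun k => b k * S k ↑j)
          (fun k hk => by show b k * _ = 0; rw [hb, bvec_zero hk]; ring)]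
        have hjA : (↑j : Fin m) ∈ A := by
          rcases Finset.mem_insert.mp j.2 with h | h
          · exact absurd h hj
          · exact h
        rw [hb, cvec_zero hS hvA hjA]
        simp [hW, hi, hj]
    · have : ∀ k : ↥D, Uᵀ i k * (T * U) k j
          = if k = i then (T * U) k j else 0 := fun k => by
        rw [Matrix.transpose_apply]
        show (if (↑i : Fin m) = v then b ↑k else _) * _ = _
        rw [if_neg hi]
        by_cases hki : k = i <;> simp [hki]
      rw [Finset.sum_congr rfl fun k _ => this k]
      simp only [Finset.sum_ite_eq' Finset.univ i, Finset.mem_univ, if_true]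
      rw [hTU]
      by_cases hj : (↑j : Fin m) = v
      · rw [if_pos hj]
        have hiA : (↑i : Fin m) ∈ A := by
          rcases Finset.mem_insert.mp i.2 with h | h
          · exact absurd h hi
          · exact h
        have : ∑ k : Fin m, b k * S k ↑i = 0 := by rw [hb]; exact cvec_zero hS hvA hiA
        rw [this]
        simp [hW, hi, hj]
      · rw [if_neg hj]
        simp [hW, hi, hj]
  have hdetW : W.det = svar S A v * (subm S A).det := by
    have hvA' : ∀ a : ↥A, (↑a : Fin m) ≠ v := fun a h => hvA (h ▸ a.2)
    set e : ↥A ⊕ Unit → ↥D := Sum.elim (fun a => ⟨↑a, Finset.mem_insert_of_mem a.2⟩)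
      (fun _ => ⟨v, hvD⟩) with he
    have hbij : Function.Bijective e := by
      constructor
      · rintro (a | _) (a' | _) h <;> simp only [he, Sum.elim_inl, Sum.elim_inr] at h
        · rw [Subtype.ext_iff] at h
          exact congrArg Sum.inl (Subtype.ext h)
        · exact absurd (congrArg Subtype.val h) (hvA' a)
        · exact absurd (congrArg Subtype.val h).symm (hvA' a')
        · rfl
      · intro d
        by_cases hd : (↑d : Fin m) ∈ A
        · exact ⟨Sum.inl ⟨↑d, hd⟩, Subtype.ext rfl⟩
        · have : (↑d : Fin m) = v := by
            rcases Finset.mem_insert.mp d.2 with h | h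
            · exact h
            · exact absurd h hd
          exact ⟨Sum.inr (), Subtype.ext this.symm⟩
    set eq : ↥A ⊕ Unit ≃ ↥D := Equiv.ofBijective e hbij with heq
    have hWsub : W.submatrix eq eq
        = Matrix.fromBlocks (subm S A) 0 0 (Matrix.of fun _ _ : Unit => svar S A v) := by
      ext (a | _) (a' | _) <;>
        simp [hW, heq, he, Matrix.submatrix_apply, Equiv.ofBijective,
          hvA' _, Matrix.fromBlocks, subm]
    have h2 := Matrix.det_submatrix_equiv_self eq W
    rw [hWsub] at h2
    rw [← h2, Matrix.det_fromBlocks_zero₂₁,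
      Matrix.det_unique (Matrix.of fun _ _ : Unit => svar S A v)]
    simp [mul_comm]
  have hfin : (Uᵀ * (T * U)).det = T.det := by
    rw [Matrix.det_mul, Matrix.det_mul, Matrix.det_transpose, hdetU]
    ring
  rw [hcongr, hdetW] at hfin
  exact hfin.symm
end detid


/-- **Lemma (determinant formula for DAGs).**
Let `G = (V, E)` be a directed acyclic graph and `S` a positive definite symmetric
`|V|×|V|` matrix.  With
`K̂ := ∑_{v∈V} ([S⁻¹_{{v}∪pa(v)}]^V − [S⁻¹_{pa(v)}]^V)` we have
`det K̂ = ∏_{v∈V} det S_{pa(v)} / det S_{{v}∪pa(v)}`. -/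

theorem det_of_dag_padded_inverses {m : ℕ} (E : Fin m → Fin m → Prop) [DecidableRel E]
    (hacyclic : ∀ v, ¬ Relation.TransGen E v v)
    (S : Matrix (Fin m) (Fin m) ℝ) (hS : S.PosDef) :
    (∑ v : Fin m,
        (padded (insert v (parents E v)) (subm S (insert v (parents E v)))⁻¹
          - padded (parents E v) (subm S (parents E v))⁻¹)).det
      = ∏ v : Fin m, (subm S (parents E v)).det / (subm S (insert v (parents E v))).det := by
  classical
  have hvA : ∀ v : Fin m, v ∉ parents E v := by
    intro v hv
    exact hacyclic v (Relation.TransGen.single (by simpa [parents] using hv))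
  set b : Fin m → Fin m → ℝ := fun v => bvec S (parents E v) v with hbdef
  set s : Fin m → ℝ := fun v => svar S (parents E v) v with hsdef
  set Bm : Matrix (Fin m) (Fin m) ℝ := Matrix.of (fun v i => b v i) with hBm
  have hsum : (∑ v : Fin m,
      (padded (insert v (parents E v)) (subm S (insert v (parents E v)))⁻¹
        - padded (parents E v) (subm S (parents E v))⁻¹))
      = Bmᵀ * ((Matrix.diagonal fun v => (s v)⁻¹) * Bm) := by
    have hterm : ∀ v : Fin m,
        padded (insert v (parents E v)) (subm S (insert v (parents E v)))⁻¹
          - padded (parents E v) (subm S (parents E v))⁻¹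
        = (s v)⁻¹ • Matrix.of (fun i j => b v i * b v j) := by
      intro v
      rw [padded_insert_eq hS (hvA v)]
      rw [add_sub_cancel_left]
    rw [Finset.sum_congr rfl fun v _ => hterm v]
    ext i j
    rw [Matrix.mul_apply]
    have hrhs : ∀ k : Fin m, Bmᵀ i k * ((Matrix.diagonal fun v => (s v)⁻¹) * Bm) k j
        = b k i * ((s k)⁻¹ * b k j) := fun k => by
      rw [Matrix.transpose_apply, Matrix.diagonal_mul]
      rfl
    rw [Finset.sum_congr rfl fun k _ => hrhs k]
    simp only [Matrix.sum_apply, Matrix.smul_apply, Matrix.of_apply, smul_eq_mul]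
    exact Finset.sum_congr rfl fun k _ => by ring
  rw [hsum]
  have hdetB : Bm.det = 1 := by
    set rnk : Fin m → ℕ :=
      fun v => (Finset.univ.filter fun i => Relation.TransGen E i v).card with hrnkdef
    have hrnk : ∀ i v : Fin m, E i v → rnk i < rnk v := by
      intro i v h
      apply Finset.card_lt_card
      rw [Finset.ssubset_iff_of_subset]
      · refine ⟨i, ?_, ?_⟩
        · simp only [Finset.mem_filter, Finset.mem_univ, true_and]
          exact Relation.TransGen.single h
        · simp only [Finset.mem_filter, Finset.mem_univ, true_and]
          exact fun hti => hacyclic i hti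
      · intro x hx
        simp only [Finset.mem_filter, Finset.mem_univ, true_and] at hx ⊢
        exact Relation.TransGen.tail hx h
    set σ := Tuple.sort rnk with hσ
    have hmono : Monotone (rnk ∘ σ) := Tuple.monotone_sort rnk
    have hsub : ((Bm.submatrix σ σ)).det = Bm.det := Matrix.det_submatrix_equiv_self σ Bm
    rw [← hsub]
    have htri : (Bm.submatrix σ σ).BlockTriangular OrderDual.toDual := by
      intro p q hlt
      have hpq : p < q := hlt
      show Bm (σ p) (σ q) = 0
      apply bvec_zero
      intro hmem
      rcases Finset.mem_insert.mp hmem with h | h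
      · exact absurd (σ.injective h) hpq.ne'
      · have h1 : rnk (σ q) < rnk (σ p) := hrnk _ _ (by simpa [parents] using h)
        have h2 : rnk (σ p) ≤ rnk (σ q) := hmono hpq.le
        omega
    rw [Matrix.det_of_lowerTriangular _ htri]
    have : ∀ p : Fin m, (Bm.submatrix σ σ) p p = 1 := fun p => bvec_self (hvA (σ p))
    rw [Finset.prod_congr rfl fun p _ => this p]
    simp
  rw [Matrix.det_mul, Matrix.det_mul, Matrix.det_transpose, hdetB, Matrix.det_diagonal,
    one_mul, mul_one]
  refine Finset.prod_congr rfl fun v _ => ?_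
  have hdet := det_insert hS (hvA v)
  have h1 : 0 < (subm S (parents E v)).det := subm_det_pos hS _
  have hs0 : s v ≠ 0 := (svar_pos hS (hvA v)).ne'
  rw [hdet]
  rw [div_mul_eq_div_div_swap, div_self h1.ne', one_div]
end pervertex
end

section
/- Fix coordinates u₁,…,u_n on 𝓛* (n = dim 𝓛). Let Ψ be the maximum likelihood estimator of a projective variety X ⊆ ℙ(𝓛) with MLD_F(X) = 1, and write each coordinate ψᵢ of Ψ as a product ψᵢ = cᵢ·∏_{f∈𝓕} f^{α_{i,f}}, where cᵢ ∈ ℂ, 𝓕 is the set of all prime (irreducible) polynomial factors appearing in some coordinate, and α_{i,f} ∈ ℤ. Then: (a) α_{i,f} ≥ −1 for all f ∈ 𝓕 and all i ∈ {1,…,n}, i.e. every factor appears in a denominator with exponent at most one; and (b) if f appears in some denominator, then ∂f/∂u_j ≠ 0 if and only if α_{j,f} = −1, i.e. f depends only on those variables u_j for which f divides the denominator of ψ_j. -/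
open MvPolynomial

set_option linter.unusedSectionVars false
set_option maxHeartbeats 1000000


namespace MLEAux

variable {ι : Type} [Fintype ι] [DecidableEq ι]

lemma generic_eq_zero {h Q : MvPolynomial ι ℂ} (hh : h ≠ 0)
    (H : ∀ u : ι → ℂ, eval u h ≠ 0 → eval u Q = 0) : Q = 0 := by
  have h0 : h * Q = 0 := by
    apply MvPolynomial.funext (q := 0); intro x
    by_cases hx : eval x h = 0
    · simp [hx]
    · simp [H x hx]
  rcases mul_eq_zero.1 h0 with h' | h'
  · exact absurd h' hh
  · exact h'

lemma generic_eq {h Q R : MvPolynomial ι ℂ} (hh : h ≠ 0)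
    (H : ∀ u : ι → ℂ, eval u h ≠ 0 → eval u Q = eval u R) : Q = R := by
  have : Q - R = 0 := generic_eq_zero hh (fun u hu => by rw [map_sub, H u hu, sub_self])
  exact sub_eq_zero.mp this

lemma generic_exists {h : MvPolynomial ι ℂ} (hh : h ≠ 0) : ∃ u : ι → ℂ, eval u h ≠ 0 := by
  by_contra hc
  push_neg at hc
  exact hh (MvPolynomial.funext (q := 0) (fun x => by simp [hc x]))

lemma degree_sum_univ (d : ι →₀ ℕ) : ∑ i, d i = d.degree := by
  rw [Finsupp.degree]
  exact (Finset.sum_subset (Finset.subset_univ _) (by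
    intro x _ hx
    simpa using (Finsupp.notMem_support_iff.mp hx))).symm

lemma euler_monomial (d : ι →₀ ℕ) (a : ℂ) :
    ∑ i, X i * pderiv i (monomial d a) = C ((d.degree : ℂ)) * monomial d a := by
  have key : ∀ i : ι, X i * pderiv i (monomial d a) = (d i) • monomial d a := by
    intro i
    rw [pderiv_monomial]
    by_cases hdi : d i = 0
    · simp [hdi]
    · have h1 : Finsupp.single i 1 ≤ d := by
        rw [Finsupp.single_le_iff]
        omega
      rw [X, monomial_mul, one_mul, add_comm, tsub_add_cancel_of_le h1]
      rw [smul_monomial, nsmul_eq_mul, mul_comm]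
  rw [Finset.sum_congr rfl (fun i _ => key i), ← Finset.sum_smul, degree_sum_univ]
  rw [C_mul']
  rw [← Nat.cast_smul_eq_nsmul ℂ]

lemma euler {f : MvPolynomial ι ℂ} {n : ℕ} (hf : f.IsHomogeneous n) :
    ∑ i, X i * pderiv i f = C ((n : ℂ)) * f := by
  conv_lhs => rw [f.as_sum]
  conv_rhs => rw [f.as_sum]
  simp only [map_sum, Finset.mul_sum]
  rw [Finset.sum_comm]
  refine Finset.sum_congr rfl fun v hv => ?_
  have hdeg : v.degree = n := by
    have := hf (MvPolynomial.mem_support_iff.mp hv)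
    rw [Finsupp.degree_eq_weight_one]; exact this
  rw [euler_monomial, hdeg]

end MLEAux

namespace MLEAux
variable {ι : Type} [Fintype ι] [DecidableEq ι]

lemma pderiv_aeval_eq (a : ι → MvPolynomial ι ℂ) (j : ι) (f : MvPolynomial ι ℂ) :
    pderiv j (aeval a f) = ∑ k, aeval a (pderiv k f) * pderiv j (a k) := by
  induction f using MvPolynomial.induction_on with
  | C c => simp
  | add p q hp hq =>
    rw [map_add, map_add, hp, hq, ← Finset.sum_add_distrib]
    exact Finset.sum_congr rfl fun k _ => by simp only [map_add]; ring

  | mul_X p i hp =>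
    rw [map_mul, aeval_X, pderiv_mul, hp]
    have key : ∀ x : ι, aeval a (pderiv x (p * X i)) * pderiv j (a x)
        = (aeval a (pderiv x p) * pderiv j (a x)) * a i
          + (if x = i then aeval a p * pderiv j (a x) else 0) := by
      intro x
      rcases eq_or_ne x i with rfl | hxi
      · rw [pderiv_mul, pderiv_X_self, if_pos rfl, map_add, map_mul, map_mul, aeval_X, map_one,
          mul_one]
        ring
      · rw [pderiv_mul, pderiv_X_of_ne (Ne.symm hxi), if_neg hxi, mul_zero, add_zero, map_mul,
          aeval_X, add_zero]
        ring
    rw [Finset.sum_congr rfl (fun x _ => key x), Finset.sum_add_distrib,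
      Finset.sum_ite_eq' Finset.univ i, if_pos (Finset.mem_univ i), ← Finset.sum_mul]

lemma eval_smul_of_isHomogeneous {f : MvPolynomial ι ℂ} {n : ℕ} (hf : f.IsHomogeneous n)
    (t : ℂ) (x : ι → ℂ) : eval (t • x) f = t ^ n * eval x f := by
  conv_lhs => rw [f.as_sum]
  conv_rhs => rw [f.as_sum]
  rw [map_sum, map_sum, Finset.mul_sum]
  refine Finset.sum_congr rfl fun v hv => ?_
  have hdeg : v.degree = n := by
    have := hf (MvPolynomial.mem_support_iff.mp hv)
    rw [Finsupp.degree_eq_weight_one]; exact this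
  rw [eval_monomial, eval_monomial]
  have : (v.prod fun i e => (t • x) i ^ e) = t ^ n * v.prod fun i e => x i ^ e := by
    rw [Finsupp.prod, Finsupp.prod]
    simp only [Pi.smul_apply, smul_eq_mul, mul_pow]
    rw [Finset.prod_mul_distrib, Finset.prod_pow_eq_pow_sum]
    rw [← Finsupp.degree_apply, hdeg]
  rw [this]; ring

lemma eval_aeval' (u : ι → ℂ) (a : ι → MvPolynomial ι ℂ) (f : MvPolynomial ι ℂ) :
    eval u (aeval a f) = eval (fun k => eval u (a k)) f := by
  rw [aeval_def, MvPolynomial.algebraMap_eq, ← eval_assoc]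
  rfl

end MLEAux

namespace MLEAux
variable {ι : Type} [Fintype ι] [DecidableEq ι]

/-- If `f(t • p) = 0` for all `t`, then each homogeneous component of `f` vanishes at `p`. -/
lemma homogeneousComponent_eval_eq_zero {f : MvPolynomial ι ℂ} {p : ι → ℂ}
    (H : ∀ t : ℂ, eval (t • p) f = 0) (d : ℕ) :
    eval p (homogeneousComponent d f) = 0 := by
  by_cases hd : d ≤ f.totalDegree
  · set N := f.totalDegree + 1 with hN
    set q : Polynomial ℂ :=
      ∑ e ∈ Finset.range N, Polynomial.C (eval p (homogeneousComponent e f)) * Polynomial.X ^ e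
      with hq
    have hqe : ∀ t : ℂ, q.eval t = 0 := by
      intro t
      have h1 : eval (t • p) f
          = ∑ e ∈ Finset.range N, eval (t • p) (homogeneousComponent e f) := by
        conv_lhs => rw [← f.sum_homogeneousComponent]
        rw [map_sum]
      have h2 : ∀ e, eval (t • p) (homogeneousComponent e f)
          = t ^ e * eval p (homogeneousComponent e f) :=
        fun e => eval_smul_of_isHomogeneous (homogeneousComponent_isHomogeneous e f) t p
      have := H t
      rw [h1] at this
      rw [hq]
      simp only [Polynomial.eval_finset_sum, Polynomial.eval_mul, Polynomial.eval_C,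
        Polynomial.eval_pow, Polynomial.eval_X]
      rw [← this]
      exact Finset.sum_congr rfl fun e _ => by rw [h2 e]; ring
    have hq0 : q = 0 := Polynomial.funext fun t => by rw [hqe t, Polynomial.eval_zero]
    have := congrArg (fun r => Polynomial.coeff r d) hq0
    simp only [hq, Polynomial.finset_sum_coeff, Polynomial.coeff_C_mul, Polynomial.coeff_X_pow,
      Polynomial.coeff_zero] at this
    rw [Finset.sum_eq_single d] at this
    · simpa using this
    · intro b _ hb; rw [if_neg (fun h' => hb h'.symm), mul_zero]
    · intro hdd; exact absurd (Finset.mem_range.mpr (by omega)) (fun h => hdd h)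
  · push_neg at hd
    rw [homogeneousComponent_eq_zero _ _ hd, map_zero]

/-- Leading homogeneous component is nonzero. -/
lemma homogeneousComponent_totalDegree_ne_zero {p : MvPolynomial ι ℂ} (hp : p ≠ 0) :
    homogeneousComponent p.totalDegree p ≠ 0 := by
  obtain ⟨d, hd, hdeg⟩ : ∃ d ∈ p.support, d.degree = p.totalDegree := by
    obtain ⟨d, hd, h⟩ := Finset.exists_mem_eq_sup p.support
      (MvPolynomial.support_nonempty.mpr hp) (fun s => s.sum fun _ e => e)
    exact ⟨d, hd, by rw [MvPolynomial.totalDegree, h]; rfl⟩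
  intro h0
  have := congrArg (coeff d) h0
  rw [coeff_homogeneousComponent, if_pos hdeg, coeff_zero] at this
  exact MvPolynomial.mem_support_iff.mp hd this

lemma homogeneousComponent_mul_totalDegree (p q : MvPolynomial ι ℂ) :
    homogeneousComponent (p.totalDegree + q.totalDegree) (p * q)
      = homogeneousComponent p.totalDegree p * homogeneousComponent q.totalDegree q := by
  set dp := p.totalDegree
  set dq := q.totalDegree
  conv_lhs => rw [← p.sum_homogeneousComponent, ← q.sum_homogeneousComponent]
  rw [Finset.sum_mul_sum, map_sum]
  rw [Finset.sum_eq_single dp]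
  · rw [map_sum, Finset.sum_eq_single dq]
    · have : (homogeneousComponent dp p * homogeneousComponent dq q).IsHomogeneous (dp + dq) :=
        (homogeneousComponent_isHomogeneous dp p).mul (homogeneousComponent_isHomogeneous dq q)
      rw [homogeneousComponent_of_mem this, if_pos rfl]
    · intro b hb hbne
      have hhom : (homogeneousComponent dp p * homogeneousComponent b q).IsHomogeneous (dp + b) :=
        (homogeneousComponent_isHomogeneous dp p).mul (homogeneousComponent_isHomogeneous b q)
      rw [homogeneousComponent_of_mem hhom, if_neg (by
        intro h
        exact hbne (by omega))]
    · intro h; exact absurd (Finset.mem_range.mpr (by omega)) h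
  · intro b hb hbne
    rw [map_sum, Finset.sum_eq_zero]
    intro e he
    have hble : b < dp := by
      have := Finset.mem_range.mp hb; omega
    have hele : e ≤ dq := by
      have := Finset.mem_range.mp he; omega
    have hhom : (homogeneousComponent b p * homogeneousComponent e q).IsHomogeneous (b + e) :=
      (homogeneousComponent_isHomogeneous b p).mul (homogeneousComponent_isHomogeneous e q)
    rw [homogeneousComponent_of_mem hhom, if_neg (by omega)]
  · intro h; exact absurd (Finset.mem_range.mpr (by omega)) h

lemma totalDegree_le_of_dvd {p q : MvPolynomial ι ℂ} (hq : q ≠ 0) (h : p ∣ q) :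
    p.totalDegree ≤ q.totalDegree := by
  obtain ⟨r, rfl⟩ := h
  have hp : p ≠ 0 := fun h0 => hq (by rw [h0, zero_mul])
  have hr : r ≠ 0 := fun h0 => hq (by rw [h0, mul_zero])
  have hne : homogeneousComponent (p.totalDegree + r.totalDegree) (p * r) ≠ 0 := by
    rw [homogeneousComponent_mul_totalDegree]
    exact mul_ne_zero (homogeneousComponent_totalDegree_ne_zero hp)
      (homogeneousComponent_totalDegree_ne_zero hr)
  have : p.totalDegree + r.totalDegree ≤ (p * r).totalDegree := by
    by_contra hlt
    push_neg at hlt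
    exact hne (homogeneousComponent_eq_zero _ _ hlt)
  omega

lemma totalDegree_pderiv_lt {f : MvPolynomial ι ℂ} {j : ι} (h : pderiv j f ≠ 0) :
    (pderiv j f).totalDegree < f.totalDegree := by
  have key : ∀ d ∈ (pderiv j f).support, d.degree < f.totalDegree := by
    intro d hd
    have hf : pderiv j f = ∑ v ∈ f.support, pderiv j (monomial v (coeff v f)) := by
      conv_lhs => rw [f.as_sum, map_sum]
    rw [hf] at hd
    obtain ⟨v, hv, hdv⟩ := Finset.mem_biUnion.mp (MvPolynomial.support_sum hd)
    rw [pderiv_monomial] at hdv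
    rw [MvPolynomial.support_monomial] at hdv
    by_cases hz : coeff v f * (v j : ℂ) = 0
    · rw [if_pos hz] at hdv; exact absurd hdv (Finset.notMem_empty d)
    · rw [if_neg hz] at hdv
      have hvj : v j ≠ 0 := by
        intro h0; exact hz (by rw [h0]; simp)
      have hd_eq : d = v - Finsupp.single j 1 := Finset.mem_singleton.mp hdv
      have hle : Finsupp.single j 1 ≤ v := by rw [Finsupp.single_le_iff]; omega
      have hdeg : d.degree + 1 = v.degree := by
        have : (v - Finsupp.single j 1) + Finsupp.single j 1 = v := tsub_add_cancel_of_le hle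
        have h2 := congrArg Finsupp.degree this
        rw [Finsupp.degree_eq_weight_one] at h2 ⊢
        rw [map_add] at h2
        rw [hd_eq]
        have hs : (Finsupp.weight fun _ => 1) (Finsupp.single j 1) = 1 := by
          rw [Finsupp.weight_apply, Finsupp.sum_single_index] <;> simp
        omega
      have hvle : v.degree ≤ f.totalDegree := by
        have := MvPolynomial.le_totalDegree (p := f) hv
        rw [Finsupp.degree]; exact le_trans (le_of_eq rfl) this
      omega
  have hne : (pderiv j f).support.Nonempty := MvPolynomial.support_nonempty.mpr h
  rw [MvPolynomial.totalDegree]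
  obtain ⟨d0, hd0⟩ := hne
  rw [Finset.sup_lt_iff (lt_of_le_of_lt (Nat.zero_le _) (key d0 hd0))]
  intro d hd
  exact key d hd

end MLEAux

namespace MLEAux
variable {ι : Type} [Fintype ι] [DecidableEq ι]

lemma isHomogeneous_pderiv {g : MvPolynomial ι ℂ} {n : ℕ} (hg : g.IsHomogeneous n) (k : ι) :
    (pderiv k g).IsHomogeneous (n - 1) := by
  have hrw : pderiv k g = ∑ v ∈ g.support, pderiv k (monomial v (coeff v g)) := by
    conv_lhs => rw [g.as_sum, map_sum]
  rw [← mem_homogeneousSubmodule, hrw]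
  apply Submodule.sum_mem
  intro v hv
  rw [pderiv_monomial, mem_homogeneousSubmodule]
  by_cases hz : coeff v g * (v k : ℂ) = 0
  · rw [hz, map_zero]; exact isHomogeneous_zero ι ℂ _
  · have hvk : v k ≠ 0 := fun h0 => hz (by rw [h0]; simp)
    have hdeg : v.degree = n := by
      have := hg (MvPolynomial.mem_support_iff.mp hv)
      rw [Finsupp.degree_eq_weight_one]; exact this
    apply isHomogeneous_monomial
    have hle : Finsupp.single k 1 ≤ v := by rw [Finsupp.single_le_iff]; omega
    have : (v - Finsupp.single k 1) + Finsupp.single k 1 = v := tsub_add_cancel_of_le hle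
    have h2 := congrArg Finsupp.degree this
    rw [Finsupp.degree_eq_weight_one] at h2 ⊢
    rw [map_add] at h2
    have hs : (Finsupp.weight fun _ => 1) (Finsupp.single k 1) = 1 := by
      rw [Finsupp.weight_apply, Finsupp.sum_single_index] <;> simp
    rw [Finsupp.degree_eq_weight_one] at hdeg
    omega

lemma prime_pow_eq_pow {f x y : MvPolynomial ι ℂ} (hf : Prime f) {m n : ℕ}
    (hx : ¬ f ∣ x) (hy : ¬ f ∣ y) (h : f ^ m * x = f ^ n * y) : m = n := by
  rcases le_total m n with hmn | hmn
  · have : x = f ^ (n - m) * y := by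
      apply mul_left_cancel₀ (pow_ne_zero m hf.ne_zero)
      rw [h, ← mul_assoc, ← pow_add]
      congr 2
      omega
    by_contra hne
    exact hx (this ▸ Dvd.dvd.mul_right (dvd_pow_self f (by omega)) y)
  · have : y = f ^ (m - n) * x := by
      apply mul_left_cancel₀ (pow_ne_zero n hf.ne_zero)
      rw [← h, ← mul_assoc, ← pow_add]
      congr 2
      omega
    by_contra hne
    exact hy (this ▸ Dvd.dvd.mul_right (dvd_pow_self f (by omega)) x)

end MLEAux


namespace MLEAux
variable {ι : Type} [Fintype ι] [DecidableEq ι]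

lemma dotL_apply (u v : Pt ι) : dotL u v = dotP u v := by
  simp [dotL, dotP, LinearMap.sum_apply]

lemma dotP_grad (f : MvPolynomial ι ℂ) (p v : Pt ι) :
    dotP (gradP f p) v = ∑ i, eval p (pderiv i f) * v i := by
  simp [dotP, gradP]

lemma mem_tangent_iff {X : Set (Pt ι)} {p v : Pt ι} :
    v ∈ tangentSpace X p ↔ ∀ f ∈ vanIdeal X, dotP (gradP f p) v = 0 := by
  rw [tangentSpace]
  simp only [Submodule.mem_iInf, LinearMap.mem_ker]
  constructor
  · intro h f hf; rw [← dotL_apply]; exact h f hf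
  · intro h f hf; rw [dotL_apply]; exact h f hf

lemma dotP_grad_self_of_isHomogeneous {g : MvPolynomial ι ℂ} {e : ℕ} (hg : g.IsHomogeneous e)
    (p : Pt ι) : dotP (gradP g p) p = (e : ℂ) * eval p g := by
  rw [dotP_grad]
  have : ∑ i, eval p (pderiv i g) * p i = eval p (∑ i, X i * pderiv i g) := by
    rw [map_sum]
    exact Finset.sum_congr rfl fun i _ => by rw [eval_mul, eval_X]; ring
  rw [this, euler hg, eval_mul, eval_C]

lemma dotP_grad_sum {β : Type*} (s : Finset β) (g : β → MvPolynomial ι ℂ) (p v : Pt ι) :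
    dotP (gradP (∑ d ∈ s, g d) p) v = ∑ d ∈ s, dotP (gradP (g d) p) v := by
  rw [dotP_grad]
  have h1 : ∀ i : ι, eval p (pderiv i (∑ d ∈ s, g d)) = ∑ d ∈ s, eval p (pderiv i (g d)) := by
    intro i; rw [map_sum, map_sum]
  simp_rw [h1, Finset.sum_mul]
  rw [Finset.sum_comm]
  exact Finset.sum_congr rfl fun d _ => (dotP_grad _ _ _).symm

lemma vanIdeal_homogeneousComponent {X : Set (Pt ι)} (hcone : IsCone X)
    {f : MvPolynomial ι ℂ} (hf : f ∈ vanIdeal X) (d : ℕ) :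
    homogeneousComponent d f ∈ vanIdeal X := by
  intro x hx
  exact homogeneousComponent_eval_eq_zero (fun t => hf _ (hcone t x hx)) d

lemma self_mem_tangent {X : Set (Pt ι)} (hcone : IsCone X) {p : Pt ι} (hp : p ∈ X) :
    p ∈ tangentSpace X p := by
  rw [mem_tangent_iff]
  intro f hf
  have hdec : f = ∑ d ∈ Finset.range (f.totalDegree + 1), homogeneousComponent d f :=
    (sum_homogeneousComponent f).symm
  have hsum := dotP_grad_sum (Finset.range (f.totalDegree + 1))
    (fun d => homogeneousComponent d f) p p
  rw [← hdec] at hsum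
  rw [hsum]
  apply Finset.sum_eq_zero
  intro d _
  rw [dotP_grad_self_of_isHomogeneous (homogeneousComponent_isHomogeneous d f) p]
  rw [vanIdeal_homogeneousComponent hcone hf d p hp, mul_zero]

lemma eq_C_of_isHomogeneous_zero {F : MvPolynomial ι ℂ} (hF : F.IsHomogeneous 0) :
    F = MvPolynomial.C (coeff 0 F) := by
  ext m
  rcases eq_or_ne m 0 with rfl | hm
  · simp
  · rw [coeff_C, if_neg (fun h => hm h.symm)]
    by_contra hc
    have := hF hc
    exact hm ((Finsupp.degree_eq_zero_iff m).mp (by rw [Finsupp.degree_eq_weight_one]; exact this))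

lemma le_of_pow_dvd_pow_mul {f x : MvPolynomial ι ℂ} (hf : Prime f) {r t : ℕ}
    (hx : ¬ f ∣ x) (h : f ^ r ∣ f ^ t * x) : r ≤ t := by
  by_contra hrt
  push_neg at hrt
  obtain ⟨y, hy⟩ := h
  have hxy : x = f ^ (r - t) * y := by
    apply mul_left_cancel₀ (pow_ne_zero t hf.ne_zero)
    rw [hy, ← mul_assoc, ← pow_add]
    congr 2
    omega
  exact hx (hxy ▸ Dvd.dvd.mul_right (dvd_pow_self f (by omega)) y)

lemma mul_pderiv_pow (f g : MvPolynomial ι ℂ) (r : ℕ) (j : ι) :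
    f * pderiv j (f ^ r * g)
      = f ^ r * (MvPolynomial.C (r : ℂ) * pderiv j f * g + f * pderiv j g) := by
  rw [pderiv_mul]
  cases r with
  | zero =>
    simp only [pow_zero, pderiv_one, Nat.cast_zero, map_zero]
    ring
  | succ t =>
    rw [pderiv_pow]
    have hc : ((t + 1 : ℕ) : MvPolynomial ι ℂ) = MvPolynomial.C ((t + 1 : ℕ) : ℂ) :=
      (MvPolynomial.C_eq_coe_nat (t + 1)).symm
    rw [hc]
    have hp : f * (f ^ (t + 1 - 1)) = f ^ (t + 1) := by
      rw [Nat.add_sub_cancel, pow_succ]; ring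
    calc f * (MvPolynomial.C ((t+1:ℕ):ℂ) * f ^ (t + 1 - 1) * pderiv j f * g
            + f ^ (t+1) * pderiv j g)
        = MvPolynomial.C ((t+1:ℕ):ℂ) * (f * f ^ (t + 1 - 1)) * pderiv j f * g
            + f * f ^ (t+1) * pderiv j g := by ring
      _ = f ^ (t+1) * (MvPolynomial.C ((t+1:ℕ):ℂ) * pderiv j f * g + f * pderiv j g) := by
          rw [hp]; ring

end MLEAux


namespace MLEAux
variable {ι : Type} [Fintype ι] [DecidableEq ι]

/-- Key analytic input: the coordinates of the MLE satisfy
`aⱼ · P = dF · P · ∂ⱼb − b · ∂ⱼP` where `P = F(a)`. -/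
lemma mle_star (V : Set (Pt ι)) (F : MvPolynomial ι ℂ) (dF : ℕ)
    (hcone : IsCone V) (hF : F.IsHomogeneous dF)
    (Ψ : RatMap ι ι) (hΨ : IsMLEof V F Ψ) :
    aeval Ψ.num F ≠ 0 ∧
      ∀ j, Ψ.num j * aeval Ψ.num F
        = MvPolynomial.C (dF : ℂ) * aeval Ψ.num F * pderiv j Ψ.den
          - Ψ.den * pderiv j (aeval Ψ.num F) := by
  classical
  obtain ⟨h₁, h₁0, H₁⟩ := hΨ
  set a : ι → MvPolynomial ι ℂ := Ψ.num with ha_def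
  set b : MvPolynomial ι ℂ := Ψ.den with hb_def
  set P : MvPolynomial ι ℂ := aeval a F with hP_def
  have hb0 : b ≠ 0 := Ψ.den_ne
  set h : MvPolynomial ι ℂ := h₁ * b with hh_def
  have hh0 : h ≠ 0 := mul_ne_zero h₁0 hb0
  -- basic consequences at a generic point
  have hsplit : ∀ u : Pt ι, eval u h ≠ 0 → eval u h₁ ≠ 0 ∧ eval u b ≠ 0 := by
    intro u hu
    rw [hh_def, map_mul] at hu
    exact ⟨fun h' => hu (by rw [h', zero_mul]), fun h' => hu (by rw [h', mul_zero])⟩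
  have hcrit : ∀ u : Pt ι, eval u h ≠ 0 → IsCriticalPoint V F u (Ψ.eval u) := by
    intro u hu
    have h2 := (H₁ u (hsplit u hu).1).2
    have : Ψ.eval u ∈ {p | IsCriticalPoint V F u p} := by
      rw [h2]; exact rfl
    exact this
  -- evaluation of homogeneous polynomials at Ψ(u)
  have heval : ∀ (g : MvPolynomial ι ℂ) (e : ℕ), g.IsHomogeneous e → ∀ u : Pt ι,
      eval u b ≠ 0 → (eval u b) ^ e * eval (Ψ.eval u) g = eval u (aeval a g) := by
    intro g e hg u hbu
    have hΨu : Ψ.eval u = (eval u b)⁻¹ • (fun k => eval u (a k)) := by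
      funext k
      simp only [RatMap.eval, Pi.smul_apply, smul_eq_mul]
      rw [div_eq_inv_mul]
    rw [hΨu, eval_smul_of_isHomogeneous hg, eval_aeval']
    rw [inv_pow]
    field_simp
  -- (S1) as a pointwise identity
  have hS1ev : ∀ u : Pt ι, eval u h ≠ 0 →
      ∑ k, u k * eval u (a k) = (dF : ℂ) * eval u b := by
    intro u hu
    obtain ⟨hu1, hub⟩ := hsplit u hu
    obtain ⟨hsm, hF0, htan⟩ := hcrit u hu
    have hmem : Ψ.eval u ∈ V := hsm.1
    have htp := htan _ (self_mem_tangent hcone hmem)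
    rw [dotP_grad_self_of_isHomogeneous hF] at htp
    have hdot : dotP u (Ψ.eval u) = (dF : ℂ) := by
      apply mul_left_cancel₀ hF0
      linear_combination - htp
    have hrw : dotP u (Ψ.eval u) = (∑ k, u k * eval u (a k)) / eval u b := by
      rw [dotP, Finset.sum_div]
      exact Finset.sum_congr rfl fun k _ => by
        simp only [RatMap.eval]
        rw [mul_div_assoc]
    rw [hrw, div_eq_iff hub] at hdot
    exact hdot
  -- (S1) as a polynomial identity
  have hS1 : (∑ k, X k * a k) = MvPolynomial.C (dF : ℂ) * b := by
    apply generic_eq hh0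
    intro u hu
    have : eval u (∑ k, X k * a k) = ∑ k, u k * eval u (a k) := by
      rw [map_sum]
      exact Finset.sum_congr rfl fun k _ => by rw [eval_mul, eval_X]
    rw [this, hS1ev u hu, eval_mul, eval_C]
  -- (S2): pderiv of (S1)
  have hS2 : ∀ j, a j + ∑ k, X k * pderiv j (a k) = MvPolynomial.C (dF : ℂ) * pderiv j b := by
    intro j
    have h0 := congrArg (pderiv j) hS1
    rw [map_sum, pderiv_C_mul] at h0
    have h1 : ∀ k : ι, pderiv j (X k * a k) = (if k = j then a k else 0) + X k * pderiv j (a k) := by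
      intro k
      rw [pderiv_mul]
      rcases eq_or_ne k j with rfl | hkj
      · rw [pderiv_X_self, if_pos rfl, one_mul]
      · rw [pderiv_X_of_ne hkj, if_neg hkj, zero_mul]
    rw [Finset.sum_congr rfl (fun k _ => h1 k), Finset.sum_add_distrib,
      Finset.sum_ite_eq' Finset.univ j, if_pos (Finset.mem_univ j)] at h0
    exact h0
  -- (T): homogeneous components of the vanishing ideal pull back to zero
  have hT : ∀ f ∈ vanIdeal V, ∀ d : ℕ, aeval a (homogeneousComponent d f) = 0 := by
    intro f hf d
    apply generic_eq_zero hh0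
    intro u hu
    obtain ⟨hu1, hub⟩ := hsplit u hu
    have hmem : Ψ.eval u ∈ V := (hcrit u hu).1.1
    rw [← heval _ d (homogeneousComponent_isHomogeneous d f) u hub]
    rw [vanIdeal_homogeneousComponent hcone hf d _ hmem, mul_zero]
  -- the "partial derivative" tangent vectors
  have hW : ∀ u : Pt ι, eval u b ≠ 0 → ∀ j : ι,
      (fun k => eval u (pderiv j (a k) * b - a k * pderiv j b)) ∈ tangentSpace V (Ψ.eval u) := by
    intro u hub j
    rw [mem_tangent_iff]
    intro f hf
    have hdec : f = ∑ d ∈ Finset.range (f.totalDegree + 1), homogeneousComponent d f :=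
      (sum_homogeneousComponent f).symm
    have hsum := dotP_grad_sum (Finset.range (f.totalDegree + 1))
      (fun d => homogeneousComponent d f) (Ψ.eval u)
      (fun k => eval u (pderiv j (a k) * b - a k * pderiv j b))
    rw [← hdec] at hsum
    rw [hsum]
    apply Finset.sum_eq_zero
    intro d _
    set fd := homogeneousComponent d f with hfd_def
    have hfd0 : aeval a fd = 0 := hT f hf d
    -- chain rule and Euler at `a`
    have hch : ∑ k, aeval a (pderiv k fd) * pderiv j (a k) = 0 := by
      rw [← pderiv_aeval_eq, hfd0, map_zero]
    have heu : ∑ k, a k * aeval a (pderiv k fd) = 0 := by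
      have := congrArg (aeval a) (euler (homogeneousComponent_isHomogeneous d f))
      rw [map_sum, map_mul] at this
      have h2 : ∀ k : ι, aeval a (X k * pderiv k fd) = a k * aeval a (pderiv k fd) := by
        intro k; rw [map_mul, aeval_X]
      rw [Finset.sum_congr rfl (fun k _ => h2 k)] at this
      rw [this, ← hfd_def, hfd0, mul_zero]
    -- multiply by `β^(d-1)` and reduce to a polynomial identity
    have hkey : ∀ k : ι, (eval u b) ^ (d - 1) * eval (Ψ.eval u) (pderiv k fd)
        = eval u (aeval a (pderiv k fd)) :=
      fun k => heval _ (d - 1) (isHomogeneous_pderiv (homogeneousComponent_isHomogeneous d f) k)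
        u hub
    have hmain : (eval u b) ^ (d - 1) * dotP (gradP fd (Ψ.eval u))
        (fun k => eval u (pderiv j (a k) * b - a k * pderiv j b)) = 0 := by
      rw [dotP_grad, Finset.mul_sum]
      have : ∀ k : ι, (eval u b) ^ (d-1) * (eval (Ψ.eval u) (pderiv k fd)
            * eval u (pderiv j (a k) * b - a k * pderiv j b))
          = eval u (aeval a (pderiv k fd) * (pderiv j (a k) * b - a k * pderiv j b)) := by
        intro k
        rw [eval_mul, ← mul_assoc, hkey k]
      rw [Finset.sum_congr rfl (fun k _ => this k), ← map_sum]
      have hpoly : ∑ k, aeval a (pderiv k fd) * (pderiv j (a k) * b - a k * pderiv j b)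
          = b * (∑ k, aeval a (pderiv k fd) * pderiv j (a k))
            - pderiv j b * (∑ k, a k * aeval a (pderiv k fd)) := by
        rw [Finset.mul_sum, Finset.mul_sum, ← Finset.sum_sub_distrib]
        exact Finset.sum_congr rfl fun k _ => by ring
      rw [hpoly, hch, heu, mul_zero, mul_zero, sub_zero, map_zero]
    rcases mul_eq_zero.mp hmain with h' | h'
    · exact absurd h' (pow_ne_zero _ hub)
    · exact h'
  -- P ≠ 0
  have hP0 : P ≠ 0 := by
    obtain ⟨u, hu⟩ := generic_exists hh0
    obtain ⟨hu1, hub⟩ := hsplit u hu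
    have hF0 : eval (Ψ.eval u) F ≠ 0 := (hcrit u hu).2.1
    intro h'
    have h2 : eval u (aeval a F) ≠ 0 := by
      rw [← heval F dF hF u hub]
      exact mul_ne_zero (pow_ne_zero _ hub) hF0
    have h3 : aeval a F = 0 := by rw [← hP_def]; exact h'
    exact h2 (by rw [h3, map_zero])
  refine ⟨hP0, ?_⟩
  -- the master pointwise identity
  intro j
  have hMev : ∀ u : Pt ι, eval u h ≠ 0 →
      eval u (b * pderiv j P - MvPolynomial.C (dF : ℂ) * pderiv j b * P + a j * P) = 0 := by
    intro u hu
    obtain ⟨hu1, hub⟩ := hsplit u hu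
    obtain ⟨hsm, hF0, htan⟩ := hcrit u hu
    set w : Pt ι := fun k => eval u (pderiv j (a k) * b - a k * pderiv j b) with hw_def
    have htw := htan w (hW u hub j)
    -- compute dotP u w
    have hS1u : ∑ k, u k * eval u (a k) = (dF : ℂ) * eval u b := hS1ev u hu
    have hS2u : eval u (a j) + ∑ k, u k * eval u (pderiv j (a k))
        = (dF : ℂ) * eval u (pderiv j b) := by
      have := congrArg (eval u) (hS2 j)
      rw [map_add, map_sum, map_mul, eval_C] at this
      have h2 : ∀ k : ι, eval u (X k * pderiv j (a k)) = u k * eval u (pderiv j (a k)) := by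
        intro k; rw [eval_mul, eval_X]
      rw [Finset.sum_congr rfl (fun k _ => h2 k)] at this
      exact this
    have hdotw : dotP u w = - eval u (a j) * eval u b := by
      rw [dotP]
      have h3 : ∀ k : ι, u k * w k
          = u k * eval u (pderiv j (a k)) * eval u b
            - u k * eval u (a k) * eval u (pderiv j b) := by
        intro k
        rw [hw_def]
        simp only [map_sub, map_mul]
        ring
      rw [Finset.sum_congr rfl (fun k _ => h3 k), Finset.sum_sub_distrib,
        ← Finset.sum_mul, ← Finset.sum_mul]
      rw [hS1u]
      have h4 : ∑ k, u k * eval u (pderiv j (a k)) = (dF:ℂ) * eval u (pderiv j b) - eval u (a j) := by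
        linear_combination hS2u
      rw [h4]
      ring
    -- compute dotP (gradP F p) w scaled
    have hkeyF : ∀ k : ι, (eval u b) ^ (dF - 1) * eval (Ψ.eval u) (pderiv k F)
        = eval u (aeval a (pderiv k F)) :=
      fun k => heval _ (dF - 1) (isHomogeneous_pderiv hF k) u hub
    have hgradw : (eval u b) ^ (dF - 1) * dotP (gradP F (Ψ.eval u)) w
        = eval u (b * pderiv j P - MvPolynomial.C (dF : ℂ) * pderiv j b * P) := by
      rw [dotP_grad, Finset.mul_sum]
      have h5 : ∀ k : ι, (eval u b) ^ (dF-1) * (eval (Ψ.eval u) (pderiv k F) * w k)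
          = eval u (aeval a (pderiv k F) * (pderiv j (a k) * b - a k * pderiv j b)) := by
        intro k
        rw [hw_def, eval_mul, ← mul_assoc, hkeyF k]
      rw [Finset.sum_congr rfl (fun k _ => h5 k), ← map_sum]
      congr 1
      have hch : ∑ k, aeval a (pderiv k F) * pderiv j (a k) = pderiv j P := by
        rw [hP_def, pderiv_aeval_eq]
      have heu : ∑ k, a k * aeval a (pderiv k F) = MvPolynomial.C (dF : ℂ) * P := by
        have := congrArg (aeval a) (euler hF)
        rw [map_sum, map_mul, aeval_C] at this
        have h2 : ∀ k : ι, aeval a (X k * pderiv k F) = a k * aeval a (pderiv k F) := by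
          intro k; rw [map_mul, aeval_X]
        rw [Finset.sum_congr rfl (fun k _ => h2 k)] at this
        rw [this, hP_def]
        congr 1
      calc ∑ k, aeval a (pderiv k F) * (pderiv j (a k) * b - a k * pderiv j b)
          = b * (∑ k, aeval a (pderiv k F) * pderiv j (a k))
            - pderiv j b * (∑ k, a k * aeval a (pderiv k F)) := by
            rw [Finset.mul_sum, Finset.mul_sum, ← Finset.sum_sub_distrib]
            exact Finset.sum_congr rfl fun k _ => by ring
        _ = b * pderiv j P - MvPolynomial.C (dF:ℂ) * pderiv j b * P := by rw [hch, heu]; ring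
    rcases Nat.eq_zero_or_pos dF with hdF0 | hdFpos
    · -- degenerate case: F is a constant
      subst hdF0
      have hFC : F = MvPolynomial.C (coeff 0 F) := eq_C_of_isHomogeneous_zero hF
      have hgrad0 : ∀ k : ι, pderiv k F = 0 := by
        intro k; rw [hFC, pderiv_C]
      have hPj : pderiv j P = 0 := by
        rw [hP_def, hFC, aeval_C, MvPolynomial.algebraMap_eq, pderiv_C]
      have haj : eval u (a j) = 0 := by
        have h6 : dotP (gradP F (Ψ.eval u)) w = 0 := by
          rw [dotP_grad]
          apply Finset.sum_eq_zero
          intro k _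
          rw [hgrad0 k, map_zero, zero_mul]
        rw [h6, hdotw] at htw
        have := htw.symm
        have h7 : eval (Ψ.eval u) F * (eval u (a j) * eval u b) = 0 := by
          rw [← neg_eq_zero]
          rw [← this]
          ring
        rcases mul_eq_zero.mp h7 with h' | h'
        · exact absurd h' hF0
        · rcases mul_eq_zero.mp h' with h'' | h''
          · exact h''
          · exact absurd h'' hub
      simp only [map_add, map_sub, map_mul, eval_C, hPj, map_zero, Nat.cast_zero]
      rw [haj]
      ring
    · -- main case dF ≥ 1
      obtain ⟨e, rfl⟩ : ∃ e, dF = e + 1 := ⟨dF - 1, by omega⟩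
      have hstep : (eval u b) ^ e * (dotP (gradP F (Ψ.eval u)) w)
          = (eval u b) ^ e * (eval (Ψ.eval u) F * dotP u w) := by rw [htw]
      have hL : (eval u b) ^ e * dotP (gradP F (Ψ.eval u)) w
          = eval u (b * pderiv j P - MvPolynomial.C ((e+1 : ℕ) : ℂ) * pderiv j b * P) := by
        have : e + 1 - 1 = e := by omega
        rw [← hgradw, this]
      have hR : (eval u b) ^ e * (eval (Ψ.eval u) F * dotP u w)
          = - eval u (a j) * eval u P := by
        rw [hdotw]
        have hPF : (eval u b) ^ (e+1) * eval (Ψ.eval u) F = eval u P :=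
          heval F (e+1) hF u hub
        calc (eval u b) ^ e * (eval (Ψ.eval u) F * (- eval u (a j) * eval u b))
            = - eval u (a j) * ((eval u b) ^ (e+1) * eval (Ψ.eval u) F) := by ring
          _ = - eval u (a j) * eval u P := by rw [hPF]
      rw [hL, hR] at hstep
      rw [map_add, hstep, map_mul]
      ring
  -- upgrade to polynomial identity
  have hM : b * pderiv j P - MvPolynomial.C (dF : ℂ) * pderiv j b * P + a j * P = 0 :=
    generic_eq_zero hh0 hMev
  linear_combination hM

end MLEAux


namespace MLEAux
lemma zpow_mul_toNat {x : ℂ} (hx : x ≠ 0) (z : ℤ) :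
    x ^ z * x ^ ((-z).toNat) = x ^ (z.toNat) := by
  rw [← zpow_natCast x ((-z).toNat), ← zpow_add₀ hx, ← zpow_natCast x z.toNat]
  congr 1
  omega
end MLEAux


/-- **Proposition (factorization properties of the MLE).**
Let `Ψ` be the maximum likelihood estimator of a projective variety `X` (with
affine cone `C`) of ML degree one with respect to the homogeneous polynomial `F`.
Write each coordinate of `Ψ` as `ψᵢ = cᵢ · ∏_{f ∈ 𝓕} f^{α_{i,f}}` with `cᵢ ∈ ℂ`,
`𝓕` the set of prime factors appearing in some coordinate, `α_{i,f} ∈ ℤ`.  Then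
(a) `α_{i,f} ≥ −1` for all `i, f` (factors in denominators appear with exponent
one), and (b) if `f` appears in some denominator, then `∂f/∂u_j ≠ 0` if and only
if `α_{j,f} = −1`. -/
theorem mle_factorization {ι : Type} [Fintype ι] [DecidableEq ι]
    (C : Set (Pt ι)) (F : MvPolynomial ι ℂ) (dF : ℕ)
    (hvar : IsAffineVariety C) (hcone : IsCone C) (hF : F.IsHomogeneous dF)
    (hmld : MLDegreeIs C F 1)
    (Ψ : RatMap ι ι) (hΨ : IsMLEof C F Ψ)
    (𝓕 : Finset (MvPolynomial ι ℂ))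
    (hprime : ∀ f ∈ 𝓕, Irreducible f)
    (hnonassoc : ∀ f ∈ 𝓕, ∀ g ∈ 𝓕, f ≠ g → ¬ Associated f g)
    (c : ι → ℂ) (hc : ∀ i, c i ≠ 0)
    (α : ι → MvPolynomial ι ℂ → ℤ)
    -- the coordinates of `Ψ` factor as `ψᵢ = cᵢ · ∏_{f ∈ 𝓕} f^{α_{i,f}}`
    (hfact : Generically (fun u : Pt ι =>
      Ψ.isDefinedAt u ∧ (∀ f ∈ 𝓕, MvPolynomial.eval u f ≠ 0) ∧
        ∀ i, Ψ.eval u i = c i * ∏ f ∈ 𝓕, MvPolynomial.eval u f ^ α i f))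
    -- every `f ∈ 𝓕` genuinely appears in some coordinate
    (happears : ∀ f ∈ 𝓕, ∃ i, α i f ≠ 0) :
    ∀ f ∈ 𝓕,
      (∀ i, -1 ≤ α i f) ∧
      ((∃ i, α i f < 0) → ∀ j, (MvPolynomial.pderiv j f ≠ 0 ↔ α j f = -1)) := by
  classical
  obtain ⟨hP0, hstar⟩ := MLEAux.mle_star C F dF hcone hF Ψ hΨ
  obtain ⟨h₂, h₂0, H₂⟩ := hfact
  set a : ι → MvPolynomial ι ℂ := Ψ.num with ha_def
  set b : MvPolynomial ι ℂ := Ψ.den with hb_def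
  set P : MvPolynomial ι ℂ := aeval a F with hP_def
  have hb0 : b ≠ 0 := Ψ.den_ne
  -- the factorization as a polynomial identity
  have hI : ∀ i, a i * ∏ f ∈ 𝓕, f ^ ((-(α i f)).toNat)
      = MvPolynomial.C (c i) * b * ∏ f ∈ 𝓕, f ^ ((α i f).toNat) := by
    intro i
    apply MLEAux.generic_eq (mul_ne_zero h₂0 hb0)
    intro u hu
    rw [map_mul] at hu
    have hu2 : eval u h₂ ≠ 0 := fun h' => hu (by rw [h', zero_mul])
    have hub : eval u b ≠ 0 := fun h' => hu (by rw [h', mul_zero])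
    obtain ⟨hdef, hnz, hval⟩ := H₂ u hu2
    have hvi := hval i
    have hai : eval u (a i) = c i * (∏ f ∈ 𝓕, eval u f ^ α i f) * eval u b := by
      have : Ψ.eval u i = eval u (a i) / eval u b := rfl
      rw [this] at hvi
      field_simp at hvi
      linear_combination hvi
    rw [map_mul, map_mul, map_mul, map_prod, map_prod, eval_C, hai]
    have hper : ∀ f ∈ 𝓕, eval u f ^ α i f * eval u (f ^ ((-(α i f)).toNat))
        = eval u (f ^ ((α i f).toNat)) := by
      intro f hf
      rw [map_pow, map_pow]
      exact MLEAux.zpow_mul_toNat (hnz f hf) (α i f)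
    calc c i * (∏ f ∈ 𝓕, eval u f ^ α i f) * eval u b * ∏ f ∈ 𝓕, eval u (f ^ (-(α i f)).toNat)
        = c i * eval u b * ∏ f ∈ 𝓕, (eval u f ^ α i f * eval u (f ^ (-(α i f)).toNat)) := by
          rw [Finset.prod_mul_distrib]; ring
      _ = c i * eval u b * ∏ f ∈ 𝓕, eval u (f ^ ((α i f).toNat)) := by
          rw [Finset.prod_congr rfl hper]
      _ = _ := by ring
  -- nonvanishing of the coordinates
  have hfne : ∀ f ∈ 𝓕, f ≠ 0 := fun f hf => (hprime f hf).ne_zero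
  have ha0 : ∀ i, a i ≠ 0 := by
    intro i h'
    have h1 := hI i
    rw [h', zero_mul] at h1
    have h2 : MvPolynomial.C (c i) * b * ∏ f ∈ 𝓕, f ^ ((α i f).toNat) ≠ 0 :=
      mul_ne_zero (mul_ne_zero (fun hC => hc i (MvPolynomial.C_eq_zero.mp hC)) hb0)
        (Finset.prod_ne_zero_iff.mpr fun f hf => pow_ne_zero _ (hfne f hf))
    exact h2 h1.symm
  -- now fix a prime factor
  intro f₀ hf₀
  have hirr : Irreducible f₀ := hprime f₀ hf₀
  have hp₀ : Prime f₀ := UniqueFactorizationMonoid.irreducible_iff_prime.mp hirr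
  obtain ⟨m, P', hP'nd, hPdec⟩ := WfDvdMonoid.max_power_factor hP0 hirr
  obtain ⟨r, b', hb'nd, hbdec⟩ := WfDvdMonoid.max_power_factor hb0 hirr
  have hadec' : ∀ i, ∃ si : ℕ, ∃ ai' : MvPolynomial ι ℂ, ¬ f₀ ∣ ai' ∧ a i = f₀ ^ si * ai' :=
    fun i => WfDvdMonoid.max_power_factor (ha0 i) hirr
  choose s a' ha'nd hadec using hadec'
  -- f₀ does not divide products over the other factors
  have hprod_nd : ∀ e : MvPolynomial ι ℂ → ℕ, ¬ f₀ ∣ ∏ f ∈ 𝓕.erase f₀, f ^ (e f) := by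
    intro e hdvd
    obtain ⟨f, hfmem, hfd⟩ := hp₀.exists_mem_finset_dvd hdvd
    have hfd2 : f₀ ∣ f := hp₀.dvd_of_dvd_pow hfd
    have hfF : f ∈ 𝓕 := Finset.mem_of_mem_erase hfmem
    have hne : f ≠ f₀ := Finset.ne_of_mem_erase hfmem
    exact hnonassoc f hfF f₀ hf₀ hne ((hirr.associated_of_dvd (hprime f hfF) hfd2).symm)
  -- the exponents α are the f₀-adic valuations
  have hαval : ∀ i, (s i : ℤ) - (r : ℤ) = α i f₀ := by
    intro i
    have hIi := hI i
    rw [← Finset.prod_erase_mul 𝓕 _ hf₀, ← Finset.prod_erase_mul 𝓕 _ hf₀,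
      hadec i, hbdec] at hIi
    have hIi2 : f₀ ^ (s i + (-(α i f₀)).toNat)
          * (a' i * ∏ f ∈ 𝓕.erase f₀, f ^ ((-(α i f)).toNat))
        = f₀ ^ (r + (α i f₀).toNat)
          * (MvPolynomial.C (c i) * b' * ∏ f ∈ 𝓕.erase f₀, f ^ ((α i f).toNat)) := by
      rw [pow_add, pow_add]
      linear_combination hIi
    have hnd1 : ¬ f₀ ∣ a' i * ∏ f ∈ 𝓕.erase f₀, f ^ ((-(α i f)).toNat) := by
      intro hd
      rcases hp₀.dvd_mul.mp hd with h' | h'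
      · exact ha'nd i h'
      · exact hprod_nd _ h'
    have hnd2 : ¬ f₀ ∣ MvPolynomial.C (c i) * b' * ∏ f ∈ 𝓕.erase f₀, f ^ ((α i f).toNat) := by
      intro hd
      rcases hp₀.dvd_mul.mp hd with h' | h'
      · rcases hp₀.dvd_mul.mp h' with h'' | h''
        · exact hp₀.not_unit (isUnit_of_dvd_unit h''
            ((isUnit_iff_ne_zero.mpr (hc i)).map MvPolynomial.C))
        · exact hb'nd h''
      · exact hprod_nd _ h'
    have := MLEAux.prime_pow_eq_pow hp₀ hnd1 hnd2 hIi2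
    omega
  -- the master identity
  have hkey : ∀ j, f₀ ^ (s j + 1) * (a' j * P')
      = f₀ ^ r * ((MvPolynomial.C ((dF : ℂ)) * MvPolynomial.C ((r : ℂ))
            - MvPolynomial.C ((m : ℂ))) * (pderiv j f₀ * b' * P')
          + f₀ * (MvPolynomial.C ((dF : ℂ)) * (pderiv j b' * P') - b' * pderiv j P')) := by
    intro j
    have hs := hstar j
    rw [hPdec, hbdec, hadec j] at hs
    have e1 := MLEAux.mul_pderiv_pow f₀ b' r j
    have e2 := MLEAux.mul_pderiv_pow f₀ P' m j
    apply mul_left_cancel₀ (pow_ne_zero (m + 1) hp₀.ne_zero)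
    linear_combination (f₀ ^ 2) * hs
      + (MvPolynomial.C ((dF : ℂ)) * f₀ ^ m * P' * f₀) * e1
      - (f₀ ^ r * b' * f₀) * e2
  have hnd_aP : ∀ j, ¬ f₀ ∣ a' j * P' := by
    intro j hd
    rcases hp₀.dvd_mul.mp hd with h' | h'
    · exact ha'nd j h'
    · exact hP'nd h'
  -- part (a)
  have hA : ∀ i, r ≤ s i + 1 := by
    intro i
    exact MLEAux.le_of_pow_dvd_pow_mul hp₀ (hnd_aP i) ⟨_, hkey i⟩
  refine ⟨fun i => by have h1 := hαval i; have h2 := hA i; omega, ?_⟩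
  -- part (b)
  intro hex j
  obtain ⟨i0, hi0⟩ := hex
  have hsi0 : s i0 + 1 = r := by
    have h1 := hαval i0
    have h2 := hA i0
    omega
  have hBi0 : ¬ f₀ ∣ ((MvPolynomial.C ((dF : ℂ)) * MvPolynomial.C ((r : ℂ))
        - MvPolynomial.C ((m : ℂ))) * (pderiv i0 f₀ * b' * P')
      + f₀ * (MvPolynomial.C ((dF : ℂ)) * (pderiv i0 b' * P') - b' * pderiv i0 P')) := by
    have hk := hkey i0
    rw [hsi0] at hk
    have := mul_left_cancel₀ (pow_ne_zero r hp₀.ne_zero) hk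
    rw [← this]
    exact hnd_aP i0
  have hγnd : ¬ f₀ ∣ (MvPolynomial.C ((dF : ℂ)) * MvPolynomial.C ((r : ℂ))
      - MvPolynomial.C ((m : ℂ))) := by
    intro hd
    apply hBi0
    apply dvd_add
    · exact hd.mul_right _
    · exact Dvd.intro _ rfl
  constructor
  · -- ∂ⱼf₀ ≠ 0 → αⱼ = -1
    intro hpd0
    have hpdnd : ¬ f₀ ∣ pderiv j f₀ := by
      intro hdd
      exact absurd (MLEAux.totalDegree_le_of_dvd hpd0 hdd)
        (not_le.mpr (MLEAux.totalDegree_pderiv_lt hpd0))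
    have hndB : ¬ f₀ ∣ ((MvPolynomial.C ((dF : ℂ)) * MvPolynomial.C ((r : ℂ))
          - MvPolynomial.C ((m : ℂ))) * (pderiv j f₀ * b' * P')
        + f₀ * (MvPolynomial.C ((dF : ℂ)) * (pderiv j b' * P') - b' * pderiv j P')) := by
      intro hd
      have hT : f₀ ∣ (MvPolynomial.C ((dF : ℂ)) * MvPolynomial.C ((r : ℂ))
          - MvPolynomial.C ((m : ℂ))) * (pderiv j f₀ * b' * P') := by
        have h2 : f₀ ∣ f₀ * (MvPolynomial.C ((dF : ℂ)) * (pderiv j b' * P') - b' * pderiv j P') :=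
          Dvd.intro _ rfl
        have hd' : f₀ ∣ f₀ * (MvPolynomial.C ((dF : ℂ)) * (pderiv j b' * P') - b' * pderiv j P')
            + (MvPolynomial.C ((dF : ℂ)) * MvPolynomial.C ((r : ℂ))
              - MvPolynomial.C ((m : ℂ))) * (pderiv j f₀ * b' * P') := by
          rwa [add_comm] at hd
        exact (dvd_add_right h2).mp hd'
      rcases hp₀.dvd_mul.mp hT with h' | h'
      · exact hγnd h'
      · rcases hp₀.dvd_mul.mp h' with h'' | h''
        · rcases hp₀.dvd_mul.mp h'' with h3 | h3
          · exact hpdnd h3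
          · exact hb'nd h3
        · exact hP'nd h''
    have := MLEAux.prime_pow_eq_pow hp₀ (hnd_aP j) hndB (hkey j)
    have h1 := hαval j
    omega
  · -- αⱼ = -1 → ∂ⱼf₀ ≠ 0
    intro hαj hpd
    have hk : f₀ ^ (s j + 1) * (a' j * P')
        = f₀ ^ (r + 1) * (MvPolynomial.C ((dF : ℂ)) * (pderiv j b' * P') - b' * pderiv j P') := by
      rw [hkey j, hpd, pow_add]
      ring
    have := MLEAux.le_of_pow_dvd_pow_mul hp₀ (hnd_aP j) ⟨_, hk⟩
    have h1 := hαval j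
    omega
end
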